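/- arXiv:2008.11768 — 10 statements merged into one kernel-verified Lean document; each statement's English description precedes it below -/
import Mathlib

section
/- Let H be a complex inner product space and let u, v ∈ H satisfy ‖u‖ = ‖v‖. Then for every nonzero h ∈ H one has ‖u‖⁴ − |⟨u, v⟩|² ≥ (|⟨u, h⟩| − |⟨v, h⟩|)⁴/‖h‖⁴. -/
lemma real_key (N a b t S : ℝ) (ha : 0 ≤ a) (hb : 0 ≤ b) (ht : 0 ≤ t) (_hS : 0 ≤ S)
    (ha2 : a^2 ≤ N) (hb2 : b^2 ≤ N) (hS2 : S^2 = (N - a^2) * (N - b^2))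
    (htS : t ≤ a*b + S) : (a - b)^4 ≤ N^2 - t^2 := by
  have hAM : 2*S ≤ (N - a^2) + (N - b^2) := by
    nlinarith [sq_nonneg ((N - a^2) - (N - b^2)), sq_nonneg S]
  have h5 : a^2 + b^2 ≤ N + 3*(a*b) := by
    rcases le_total a b with hab | hab
    · nlinarith
    · nlinarith
  have T1 : t^2 ≤ (a*b + S)^2 := by nlinarith
  have T2 : 0 ≤ a*b*((N - a^2) + (N - b^2) - 2*S) :=
    mul_nonneg (mul_nonneg ha hb) (by linarith)
  have T3 : 0 ≤ (a - b)^2 * (N + 3*(a*b) - a^2 - b^2) :=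
    mul_nonneg (sq_nonneg _) (by linarith)
  nlinarith [T1, T2, T3, hS2]

lemma unit_case {H : Type*} [NormedAddCommGroup H] [InnerProductSpace ℂ H]
    (u v e : H) (huv : ‖u‖ = ‖v‖) (he : ‖e‖ = 1) :
    (‖(inner ℂ u e : ℂ)‖ - ‖(inner ℂ v e : ℂ)‖) ^ 4
      ≤ ‖u‖ ^ 4 - (‖(inner ℂ u v : ℂ)‖) ^ 2 := by
  set a := ‖(inner ℂ u e : ℂ)‖ with hadef
  set b := ‖(inner ℂ v e : ℂ)‖ with hbdef
  set t := ‖(inner ℂ u v : ℂ)‖ with htdef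
  set u' := u - (inner ℂ e u : ℂ) • e with hu'
  set v' := v - (inner ℂ e v : ℂ) • e with hv'
  have hee : (inner ℂ e e : ℂ) = 1 := by
    rw [inner_self_eq_norm_sq_to_K, he]; norm_num
  have hau : ‖(inner ℂ e u : ℂ)‖ = a := by
    rw [hadef, ← inner_conj_symm u e, Complex.norm_conj]
  have hbv : ‖(inner ℂ e v : ℂ)‖ = b := by
    rw [hbdef, ← inner_conj_symm v e, Complex.norm_conj]
  have hnormsq : ∀ w : H, ‖w - (inner ℂ e w : ℂ) • e‖^2
      = ‖w‖^2 - ‖(inner ℂ e w : ℂ)‖^2 := by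
    intro w
    have h1 := @norm_sub_sq ℂ H _ _ _ w ((inner ℂ e w : ℂ) • e)
    rw [inner_smul_right] at h1
    have h2 : ‖(inner ℂ e w : ℂ) • e‖ = ‖(inner ℂ e w : ℂ)‖ := by
      rw [norm_smul, he, mul_one]
    have h4 : (inner ℂ w e : ℂ) = (starRingEnd ℂ) (inner ℂ e w : ℂ) :=
      (inner_conj_symm w e).symm
    rw [h2, h4] at h1
    have h3 : ((inner ℂ e w : ℂ) * (starRingEnd ℂ) (inner ℂ e w : ℂ)).re
        = ‖(inner ℂ e w : ℂ)‖^2 := by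
      rw [Complex.mul_conj]; simp [Complex.sq_norm]
    rw [h1]
    rw [show (RCLike.re ((inner ℂ e w : ℂ) * (starRingEnd ℂ) (inner ℂ e w : ℂ))) =
      ((inner ℂ e w : ℂ) * (starRingEnd ℂ) (inner ℂ e w : ℂ)).re from rfl, h3]
    ring
  have hu'2 : ‖u'‖^2 = ‖u‖^2 - a^2 := by rw [hu', hnormsq u, hau]
  have hv'2 : ‖v'‖^2 = ‖u‖^2 - b^2 := by rw [hv', hnormsq v, hbv, huv]
  have hsplit : (inner ℂ u v : ℂ) = inner ℂ u e * inner ℂ e v + inner ℂ u' v' := by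
    rw [hu', hv']
    simp only [inner_sub_left, inner_sub_right, inner_smul_left, inner_smul_right, hee, mul_one]
    rw [show ((starRingEnd ℂ) (inner ℂ e u : ℂ)) = (inner ℂ u e : ℂ) from inner_conj_symm u e]
    ring
  have htle : t ≤ a * b + ‖u'‖ * ‖v'‖ := by
    rw [htdef, hsplit]
    calc ‖(inner ℂ u e * inner ℂ e v + (inner ℂ u' v' : ℂ))‖
        ≤ ‖((inner ℂ u e : ℂ) * inner ℂ e v)‖ + ‖(inner ℂ u' v' : ℂ)‖ :=
          norm_add_le _ _
      _ = a * b + ‖(inner ℂ u' v' : ℂ)‖ := by rw [norm_mul, hbv, ← hadef]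
      _ ≤ a * b + ‖u'‖ * ‖v'‖ := by
          have := norm_inner_le_norm (𝕜 := ℂ) u' v'
          linarith
  have ha2 : a^2 ≤ ‖u‖^2 := by nlinarith [sq_nonneg ‖u'‖, hu'2]
  have hb2 : b^2 ≤ ‖u‖^2 := by nlinarith [sq_nonneg ‖v'‖, hv'2]
  have hS2 : (‖u'‖ * ‖v'‖)^2 = (‖u‖^2 - a^2) * (‖u‖^2 - b^2) := by
    rw [mul_pow, hu'2, hv'2]
  have key := real_key (‖u‖^2) a b t (‖u'‖ * ‖v'‖)
    (norm_nonneg _) (norm_nonneg _) (norm_nonneg _)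
    (mul_nonneg (norm_nonneg _) (norm_nonneg _)) ha2 hb2 hS2 htle
  calc (a - b)^4 ≤ (‖u‖^2)^2 - t^2 := key
    _ = ‖u‖^4 - t^2 := by ring

/-- **Projection bound for the Malliavin determinant, second form.**
If `u v : H` in a complex inner product space satisfy `‖u‖ = ‖v‖`,
then for every nonzero `h`,
`‖u‖⁴ − |⟨u,v⟩|² ≥ (|⟨u,h⟩| − |⟨v,h⟩|)⁴/‖h‖⁴`. -/
theorem stmt_1 {H : Type*} [NormedAddCommGroup H] [InnerProductSpace ℂ H]
    (u v : H) (huv : ‖u‖ = ‖v‖) (h : H) (hh : h ≠ 0) :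
    (‖(inner ℂ u h : ℂ)‖ - ‖(inner ℂ v h : ℂ)‖) ^ 4 / ‖h‖ ^ 4
      ≤ ‖u‖ ^ 4 - (‖(inner ℂ u v : ℂ)‖) ^ 2 := by
  have hn : (0:ℝ) < ‖h‖ := norm_pos_iff.mpr hh
  set e : H := ((‖h‖ : ℂ))⁻¹ • h with he
  have hne : ‖e‖ = 1 := by
    rw [he, norm_smul]
    simp [norm_inv, Complex.norm_real, abs_of_pos hn,
      inv_mul_cancel₀ hn.ne']
  have heh : h = (‖h‖ : ℂ) • e := by
    rw [he, smul_smul, mul_inv_cancel₀ (by exact_mod_cast hn.ne'), one_smul]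
  have habs : ∀ w : H, ‖(inner ℂ w h : ℂ)‖ = ‖h‖ * ‖(inner ℂ w e : ℂ)‖ := by
    intro w
    have h1 : (inner ℂ w h : ℂ) = (‖h‖ : ℂ) * inner ℂ w e := by
      rw [he, inner_smul_right, ← mul_assoc,
        mul_inv_cancel₀ (by exact_mod_cast hn.ne' : ((‖h‖ : ℂ)) ≠ 0), one_mul]
    rw [h1, norm_mul, Complex.norm_real, Real.norm_eq_abs, abs_of_pos hn]
  rw [habs u, habs v]
  have key := unit_case u v e huv hne
  have hexp : (‖h‖ * ‖(inner ℂ u e : ℂ)‖ - ‖h‖ * ‖(inner ℂ v e : ℂ)‖)^4 / ‖h‖^4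
      = (‖(inner ℂ u e : ℂ)‖ - ‖(inner ℂ v e : ℂ)‖)^4 := by
    field_simp
  rw [hexp]
  exact key
end

section
/- Let 𝓗 be a real Hilbert space and let T : 𝓗 → 𝓗 be a compact, self-adjoint, continuous linear operator such that ⟨x + T x, x⟩ > 0 for every x ≠ 0. Then there exists ε > 0 such that for every self-adjoint continuous linear operator A : 𝓗 → 𝓗 with operator norm ‖A‖ ≤ ε and every x ≠ 0 one has ⟨x + A x + T x, x⟩ > 0. -/
open scoped RealInnerProductSpace

section Aux

variable {𝓗 : Type*} [NormedAddCommGroup 𝓗] [InnerProductSpace ℝ 𝓗] [CompleteSpace 𝓗]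

/-- Symmetry of the form of a self-adjoint operator, real case. -/
lemma aux_symm {S : 𝓗 →L[ℝ] 𝓗} (hS : IsSelfAdjoint S) (x y : 𝓗) :
    ⟪S x, y⟫ = ⟪S y, x⟫ := by
  have h := hS.isSymmetric x y
  exact h.trans (real_inner_comm (S y) x)

/-- Cauchy–Schwarz for a positive semidefinite symmetric form. -/
lemma aux_cs {S : 𝓗 →L[ℝ] 𝓗} (hS : IsSelfAdjoint S)
    (hpos : ∀ x : 𝓗, 0 ≤ ⟪S x, x⟫) (x y : 𝓗) :
    ⟪S x, y⟫ ^ 2 ≤ ⟪S x, x⟫ * ⟪S y, y⟫ := by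
  have key : ∀ t : ℝ, 0 ≤ ⟪S y, y⟫ * (t * t) + (2 * ⟪S x, y⟫) * t + ⟪S x, x⟫ := by
    intro t
    have h := hpos (x + t • y)
    have expand : ⟪S (x + t • y), x + t • y⟫
        = ⟪S y, y⟫ * (t * t) + (2 * ⟪S x, y⟫) * t + ⟪S x, x⟫ := by
      simp only [map_add, map_smul, inner_add_add_self, inner_add_left, inner_add_right,
        inner_smul_left, inner_smul_right, real_inner_smul_left, real_inner_smul_right,
        conj_trivial]
      rw [aux_symm hS y x]
      ring
    linarith [expand ▸ h]
  have hd := discrim_le_zero key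
  rw [discrim] at hd
  nlinarith [hd]

end Aux

/-- **Stability of strict positivity of `1 + T` under small self-adjoint
perturbations.** If `T` is a compact self-adjoint operator on a real Hilbert
space with `⟨x + Tx, x⟩ > 0` for all `x ≠ 0`, then there is `ε > 0` such that
`⟨x + Ax + Tx, x⟩ > 0` for all `x ≠ 0` and all self-adjoint `A` with `‖A‖ ≤ ε`. -/
theorem stmt_4 {𝓗 : Type*} [NormedAddCommGroup 𝓗] [InnerProductSpace ℝ 𝓗]
    [CompleteSpace 𝓗] (T : 𝓗 →L[ℝ] 𝓗)
    (hTcomp : IsCompactOperator T) (hTsa : IsSelfAdjoint T)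
    (hTpos : ∀ x : 𝓗, x ≠ 0 → 0 < ⟪x + T x, x⟫) :
    ∃ ε > (0 : ℝ), ∀ A : 𝓗 →L[ℝ] 𝓗, IsSelfAdjoint A → ‖A‖ ≤ ε →
      ∀ x : 𝓗, x ≠ 0 → 0 < ⟪x + A x + T x, x⟫ := by
  classical
  -- trivial case: subsingleton space
  by_cases hns : Subsingleton 𝓗
  · exact ⟨1, one_pos, fun A _ _ x hx => absurd (Subsingleton.elim x 0) hx⟩
  -- set S := 1 + T
  set S : 𝓗 →L[ℝ] 𝓗 := ContinuousLinearMap.id ℝ 𝓗 + T with hSdef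
  have hSapp : ∀ x : 𝓗, S x = x + T x := fun x => rfl
  have hSsa : IsSelfAdjoint S := by
    have h1 : IsSelfAdjoint (ContinuousLinearMap.id ℝ 𝓗) := by
      rw [← ContinuousLinearMap.one_def]
      exact IsSelfAdjoint.one _
    exact h1.add hTsa
  have hSpos : ∀ x : 𝓗, x ≠ 0 → 0 < ⟪S x, x⟫ := by
    intro x hx; rw [hSapp]; exact hTpos x hx
  have hSnonneg : ∀ x : 𝓗, 0 ≤ ⟪S x, x⟫ := by
    intro x
    by_cases hx : x = 0
    · simp [hx]
    · exact (hSpos x hx).le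
  -- S is injective (on nonzero vectors)
  have hSne : ∀ x : 𝓗, x ≠ 0 → S x ≠ 0 := by
    intro x hx h0
    have := hSpos x hx
    rw [h0] at this
    simp at this
  -- Step D: S is bounded below
  have hbdd : ∃ c > (0 : ℝ), ∀ x : 𝓗, c * ‖x‖ ≤ ‖S x‖ := by
    by_contra hcon
    push_neg at hcon
    -- choose unit vectors u n with ‖S (u n)‖ < 1/(n+1)
    have hchoose : ∀ n : ℕ, ∃ u : 𝓗, ‖u‖ = 1 ∧ ‖S u‖ < 1 / (n + 1) := by
      intro n
      obtain ⟨x, hxlt⟩ := hcon (1 / (n + 1)) (by positivity)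
      have hx0 : x ≠ 0 := by
        rintro rfl; simp at hxlt
      refine ⟨‖x‖⁻¹ • x, ?_, ?_⟩
      · rw [norm_smul, norm_inv, norm_norm, inv_mul_cancel₀ (norm_ne_zero_iff.mpr hx0)]
      · rw [map_smul, norm_smul, norm_inv, norm_norm]
        have hxn : (0:ℝ) < ‖x‖ := norm_pos_iff.mpr hx0
        calc ‖x‖⁻¹ * ‖S x‖ < ‖x‖⁻¹ * (1 / (n + 1) * ‖x‖) := by
              exact mul_lt_mul_of_pos_left hxlt (by positivity)
          _ = 1 / (n + 1) := by field_simp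
    choose u hu1 hu2 using hchoose
    -- T (u n) lies in a compact set
    obtain ⟨K, hK, hKsub⟩ :=
      hTcomp.image_closedBall_subset_compact (1 : ℝ)
    have hmem : ∀ n, T (u n) ∈ K := by
      intro n
      exact hKsub ⟨u n, by simp [Metric.mem_closedBall, (hu1 n).le], rfl⟩
    obtain ⟨y, _, φ, hφ, hty⟩ := hK.tendsto_subseq hmem
    -- S (u n) → 0
    have hSu0 : Filter.Tendsto (fun n => S (u (φ n))) Filter.atTop (nhds 0) := by
      rw [tendsto_iff_norm_sub_tendsto_zero]
      simp only [sub_zero]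
      apply squeeze_zero (fun n => norm_nonneg _) (fun n => (hu2 (φ n)).le)
      have : Filter.Tendsto (fun n : ℕ => 1 / ((n : ℝ) + 1)) Filter.atTop (nhds 0) :=
        tendsto_one_div_add_atTop_nhds_zero_nat
      exact this.comp (hφ.tendsto_atTop)
    -- u (φ n) = S (u (φ n)) - T (u (φ n)) → -y
    have huy : Filter.Tendsto (fun n => u (φ n)) Filter.atTop (nhds (-y)) := by
      have : (fun n => u (φ n)) = fun n => S (u (φ n)) - T (u (φ n)) := by
        funext n; rw [hSapp]; abel
      rw [this]
      simpa using hSu0.sub hty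
    have hny : ‖(-y : 𝓗)‖ = 1 := by
      have := (continuous_norm.tendsto (-y)).comp huy
      have h1 : Filter.Tendsto (fun n => ‖u (φ n)‖) Filter.atTop (nhds ‖(-y : 𝓗)‖) := this
      have h2 : (fun n => ‖u (φ n)‖) = fun _ => (1 : ℝ) := funext fun n => hu1 (φ n)
      rw [h2] at h1
      exact tendsto_nhds_unique h1 tendsto_const_nhds
    have hyne : (-y : 𝓗) ≠ 0 := by
      intro h; rw [h, norm_zero] at hny; norm_num at hny
    have hSy : S (-y) = 0 := by
      have := (S.continuous.tendsto (-y)).comp huy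
      exact tendsto_nhds_unique this hSu0
    exact absurd (hSy ▸ hSne (-y) hyne) (by simp)
  obtain ⟨c, hc, hcle⟩ := hbdd
  -- ‖S‖ > 0
  have hSnorm : 0 < ‖S‖ := by
    rcases not_subsingleton_iff_nontrivial.mp hns with ⟨x, z, hxz⟩
    have hx : x - z ≠ 0 := sub_ne_zero_of_ne hxz
    have : S (x - z) ≠ 0 := hSne _ hx
    have hS0 : S ≠ 0 := fun h => this (by simp [h])
    exact norm_pos_iff.mpr hS0
  -- Step C: coercivity
  have hcoer : ∀ x : 𝓗, c ^ 2 / ‖S‖ * ‖x‖ ^ 2 ≤ ⟪S x, x⟫ := by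
    intro x
    by_cases hx : x = 0
    · simp [hx]
    have hcs := aux_cs hSsa hSnonneg x (S x)
    have hSS : ⟪S (S x), S x⟫ ≤ ‖S‖ * ‖S x‖ ^ 2 := by
      calc ⟪S (S x), S x⟫ ≤ ‖S (S x)‖ * ‖S x‖ := real_inner_le_norm _ _
        _ ≤ ‖S‖ * ‖S x‖ * ‖S x‖ := by
            exact mul_le_mul_of_nonneg_right (S.le_opNorm _) (norm_nonneg _)
        _ = ‖S‖ * ‖S x‖ ^ 2 := by ring
    have hSxne : S x ≠ 0 := hSne x hx
    have hSxpos : (0:ℝ) < ‖S x‖ := norm_pos_iff.mpr hSxne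
    have h1 : ⟪S x, S x⟫ = ‖S x‖ ^ 2 := real_inner_self_eq_norm_sq _
    rw [h1] at hcs
    have h2 : (‖S x‖ ^ 2) ^ 2 ≤ ⟪S x, x⟫ * (‖S‖ * ‖S x‖ ^ 2) :=
      le_trans hcs (mul_le_mul_of_nonneg_left hSS (hSnonneg x))
    have h3 : ‖S x‖ ^ 2 ≤ ⟪S x, x⟫ * ‖S‖ := by
      have hpos2 : (0:ℝ) < ‖S x‖ ^ 2 := by positivity
      nlinarith
    have h4 : c ^ 2 * ‖x‖ ^ 2 ≤ ‖S x‖ ^ 2 := by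
      have h5 := pow_le_pow_left₀ (by positivity) (hcle x) 2
      rw [mul_pow] at h5
      exact h5
    rw [div_mul_eq_mul_div, div_le_iff₀ hSnorm]
    calc c ^ 2 * ‖x‖ ^ 2 ≤ ‖S x‖ ^ 2 := h4
      _ ≤ ⟪S x, x⟫ * ‖S‖ := h3
  -- conclude
  refine ⟨c ^ 2 / (2 * ‖S‖), by positivity, fun A _ hA x hx => ?_⟩
  have hAx : |⟪A x, x⟫| ≤ c ^ 2 / (2 * ‖S‖) * ‖x‖ ^ 2 := by
    calc |⟪A x, x⟫| ≤ ‖A x‖ * ‖x‖ := abs_real_inner_le_norm _ _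
      _ ≤ ‖A‖ * ‖x‖ * ‖x‖ := mul_le_mul_of_nonneg_right (A.le_opNorm x) (norm_nonneg _)
      _ ≤ c ^ 2 / (2 * ‖S‖) * ‖x‖ ^ 2 := by
          have h := mul_le_mul_of_nonneg_right
            (mul_le_mul_of_nonneg_right hA (norm_nonneg x)) (norm_nonneg x)
          calc ‖A‖ * ‖x‖ * ‖x‖ ≤ c ^ 2 / (2 * ‖S‖) * ‖x‖ * ‖x‖ := h
            _ = c ^ 2 / (2 * ‖S‖) * ‖x‖ ^ 2 := by ring
  have hsplit : ⟪x + A x + T x, x⟫ = ⟪S x, x⟫ + ⟪A x, x⟫ := by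
    rw [hSapp]
    rw [show x + A x + T x = (x + T x) + A x by abel]
    rw [inner_add_left]
  rw [hsplit]
  have hcx := hcoer x
  have hxpos : (0:ℝ) < ‖x‖ ^ 2 := by
    have := norm_pos_iff.mpr hx; positivity
  have habs := abs_le.mp hAx
  have hhalf : c ^ 2 / (2 * ‖S‖) * ‖x‖ ^ 2 < c ^ 2 / ‖S‖ * ‖x‖ ^ 2 := by
    apply mul_lt_mul_of_pos_right _ hxpos
    rw [div_lt_div_iff₀ (by positivity) hSnorm]
    nlinarith [mul_pos (mul_pos hc hc) hSnorm]
  linarith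
end

section
/- Let d ≥ 1. There exists a constant C > 0, depending only on d, such that for every integer N ≥ 2, every β > 0 and every δ ∈ (0, 1/2], ∫_{B(0,1)^N} ∏_{i=1}^N (min_{j ≠ i} max(δ, |z_i − z_j|))^{−β²/2} dz_1 … dz_N ≤ C^N N^N (log(1/δ))^{N/2} δ^{−max(0, β² − d) N/2}. -/
open MeasureTheory Finset Function Metric
open scoped ENNReal

theorem peel_lemma {X : Type*} [MeasurableSpace X] (μ : Measure X) [IsFiniteMeasure μ]
    (f : X → X → ℝ≥0∞) (hf : Measurable (Function.uncurry f))
    (M L : ℝ≥0∞) (hM1 : 1 ≤ M) (hMt : M ≠ ⊤) (hL1 : 1 ≤ L) (hLt : L ≠ ⊤)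
    (hV : μ Set.univ ≤ M)
    (hA : ∀ w, ∫⁻ z, f z w ∂μ ≤ M)
    (hB : ∀ w w', ∫⁻ z, f z w * f w' z ∂μ ≤ M * L)
    {N : ℕ} (σ : Fin N → Fin N) :
    ∀ (n : ℕ) (S T : Finset (Fin N)), S.card = n → T ⊆ S → (∀ i ∈ T, σ i ∈ S) →
      (∀ i ∈ T, σ i ≠ i) → ∀ x : Fin N → X,
      (∫⋯∫⁻_S, (fun z => ∏ i ∈ T, f (z i) (z (σ i))) ∂(fun _ => μ)) x
        ≤ M ^ S.card * L ^ (T.card / 2) := by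
  have hg : ∀ T : Finset (Fin N),
      Measurable (fun z : Fin N → X => ∏ i ∈ T, f (z i) (z (σ i))) := by
    intro T
    apply Finset.measurable_prod
    intro i _
    have h : (fun z : Fin N → X => f (z i) (z (σ i))) =
        (Function.uncurry f) ∘ (fun z => (z i, z (σ i))) := rfl
    rw [h]
    exact hf.comp ((measurable_pi_apply i).prodMk (measurable_pi_apply (σ i)))
  intro n
  induction n with
  | zero =>
    intro S T hcard hTS hTSσ hTne x
    rw [Finset.card_eq_zero] at hcard
    subst hcard
    rw [Finset.subset_empty] at hTS
    subst hTS
    simp [lmarginal_empty]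
  | succ n ih =>
    intro S T hcard hTS hTSσ hTne x
    have step : ∀ v ∈ S, ∀ (T' : Finset (Fin N)) (c : ℝ≥0∞), c ≠ ⊤ →
        (∀ y : Fin N → X,
          (∫⁻ w, (∏ i ∈ T, f ((update y v w) i) ((update y v w) (σ i))) ∂μ)
            ≤ c * ∏ i ∈ T', f (y i) (y (σ i))) →
        T' ⊆ S.erase v → (∀ i ∈ T', σ i ∈ S.erase v) → (∀ i ∈ T', σ i ≠ i) →
        (∫⋯∫⁻_S, (fun z => ∏ i ∈ T, f (z i) (z (σ i))) ∂(fun _ => μ)) x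
          ≤ c * (M ^ n * L ^ (T'.card / 2)) := by
      intro v hv T' c hct hbound hT'S hT'σ hT'ne
      have hcard' : (S.erase v).card = n := by
        rw [Finset.card_erase_of_mem hv, hcard]; rfl
      have key := lmarginal_erase' (μ := fun _ : Fin N => μ)
        (fun z => ∏ i ∈ T, f (z i) (z (σ i))) (hg T) hv
      rw [key]
      calc (∫⋯∫⁻_(S.erase v),
              (fun y => ∫⁻ w, (∏ i ∈ T, f ((update y v w) i) ((update y v w) (σ i))) ∂μ)
              ∂(fun _ => μ)) x
          ≤ (∫⋯∫⁻_(S.erase v),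
              (fun y => c * ∏ i ∈ T', f (y i) (y (σ i))) ∂(fun _ => μ)) x :=
            lmarginal_mono (fun y => hbound y) x
        _ = c * (∫⋯∫⁻_(S.erase v),
              (fun y => ∏ i ∈ T', f (y i) (y (σ i))) ∂(fun _ => μ)) x := by
            simp only [lmarginal]
            exact lintegral_const_mul' _ _ hct
        _ ≤ c * (M ^ n * L ^ (T'.card / 2)) := by
            apply mul_le_mul_right
            have := ih (S.erase v) T' hcard' hT'S hT'σ hT'ne x
            rwa [hcard'] at this
    by_cases h1 : ∃ v ∈ S, v ∉ T ∧ ∀ i ∈ T, σ i ≠ v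
    · -- free step
      obtain ⟨v, hvS, hvT, hvpre⟩ := h1
      have hb : ∀ y : Fin N → X,
          (∫⁻ w, (∏ i ∈ T, f ((update y v w) i) ((update y v w) (σ i))) ∂μ)
            ≤ M * ∏ i ∈ T, f (y i) (y (σ i)) := by
        intro y
        have heq : ∀ w : X, (∏ i ∈ T, f ((update y v w) i) ((update y v w) (σ i)))
            = ∏ i ∈ T, f (y i) (y (σ i)) := by
          intro w
          refine Finset.prod_congr rfl fun i hi => ?_
          rw [update_of_ne (by rintro rfl; exact hvT hi), update_of_ne (hvpre i hi)]
        simp_rw [heq]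
        rw [lintegral_const, mul_comm]
        exact mul_le_mul_left hV _
      have hsub : T ⊆ S.erase v := fun i hi =>
        Finset.mem_erase.mpr ⟨by rintro rfl; exact hvT hi, hTS hi⟩
      have hσ : ∀ i ∈ T, σ i ∈ S.erase v := fun i hi =>
        Finset.mem_erase.mpr ⟨hvpre i hi, hTSσ i hi⟩
      calc (∫⋯∫⁻_S, (fun z => ∏ i ∈ T, f (z i) (z (σ i))) ∂(fun _ => μ)) x
          ≤ M * (M ^ n * L ^ (T.card / 2)) := step v hvS T M hMt hb hsub hσ hTne
        _ = M ^ S.card * L ^ (T.card / 2) := by rw [hcard]; ring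
    · by_cases h2 : ∃ v ∈ S, v ∈ T ∧ ∀ i ∈ T.erase v, σ i ≠ v
      · -- A step
        obtain ⟨v, hvS, hvT, hvpre⟩ := h2
        have hsv : σ v ≠ v := hTne v hvT
        have hb : ∀ y : Fin N → X,
            (∫⁻ w, (∏ i ∈ T, f ((update y v w) i) ((update y v w) (σ i))) ∂μ)
              ≤ M * ∏ i ∈ T.erase v, f (y i) (y (σ i)) := by
          intro y
          have heq : ∀ w : X, (∏ i ∈ T, f ((update y v w) i) ((update y v w) (σ i)))
              = (∏ i ∈ T.erase v, f (y i) (y (σ i))) * f w (y (σ v)) := by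
            intro w
            rw [← Finset.mul_prod_erase T _ hvT]
            have e1 : update y v w v = w := update_self ..
            have e2 : update y v w (σ v) = y (σ v) := update_of_ne hsv ..
            have e5 : ∏ i ∈ T.erase v, f ((update y v w) i) ((update y v w) (σ i))
                = ∏ i ∈ T.erase v, f (y i) (y (σ i)) := by
              refine Finset.prod_congr rfl fun i hi => ?_
              rw [update_of_ne (Finset.ne_of_mem_erase hi), update_of_ne (hvpre i hi)]
            rw [e1, e2, e5, mul_comm]
          simp_rw [heq]
          have hmeas : AEMeasurable (fun w : X => f w (y (σ v))) μ := by
            have h : (fun w : X => f w (y (σ v))) =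
                (Function.uncurry f) ∘ (fun w => (w, y (σ v))) := rfl
            rw [h]
            exact (hf.comp (measurable_id.prodMk measurable_const)).aemeasurable
          rw [lintegral_const_mul'' _ hmeas, mul_comm]
          exact mul_le_mul_left (hA _) _
        have hsub : T.erase v ⊆ S.erase v := Finset.erase_subset_erase v hTS
        have hσ : ∀ i ∈ T.erase v, σ i ∈ S.erase v := fun i hi =>
          Finset.mem_erase.mpr ⟨hvpre i hi, hTSσ i (Finset.mem_of_mem_erase hi)⟩
        have hne' : ∀ i ∈ T.erase v, σ i ≠ i := fun i hi =>
          hTne i (Finset.mem_of_mem_erase hi)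
        calc (∫⋯∫⁻_S, (fun z => ∏ i ∈ T, f (z i) (z (σ i))) ∂(fun _ => μ)) x
            ≤ M * (M ^ n * L ^ ((T.erase v).card / 2)) := step v hvS _ M hMt hb hsub hσ hne'
          _ ≤ M * (M ^ n * L ^ (T.card / 2)) := by
              apply mul_le_mul_right
              apply mul_le_mul_right
              apply pow_le_pow_right₀ hL1
              apply Nat.div_le_div_right
              rw [Finset.card_erase_of_mem hvT]
              omega
          _ = M ^ S.card * L ^ (T.card / 2) := by rw [hcard]; ring
      · -- B step
        push_neg at h1 h2
        have hTT : ∀ v ∈ T, ∃ i ∈ T.erase v, σ i = v := fun v hv => h2 v (hTS hv) hv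
        have hTimg : T ⊆ T.image σ := by
          intro v hv
          obtain ⟨i, hi, hiv⟩ := hTT v hv
          exact Finset.mem_image.mpr ⟨i, Finset.mem_of_mem_erase hi, hiv⟩
        have himg : T = T.image σ :=
          Finset.eq_of_subset_of_card_le hTimg Finset.card_image_le
        have hinj : Set.InjOn σ T := Finset.injOn_of_card_image_eq (by rw [← himg])
        have hST : S = T := by
          refine Finset.Subset.antisymm (fun v hv => ?_) hTS
          by_contra hvT
          obtain ⟨i, hi, hiv⟩ := h1 v hv hvT
          exact hvT (himg ▸ Finset.mem_image.mpr ⟨i, hi, hiv⟩)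
        have hSne : S.Nonempty := Finset.card_pos.mp (by omega)
        obtain ⟨v, hvS⟩ := hSne
        have hvT : v ∈ T := hST ▸ hvS
        obtain ⟨u, hu, huv⟩ := hTT v hvT
        have huT : u ∈ T := Finset.mem_of_mem_erase hu
        have hune : u ≠ v := Finset.ne_of_mem_erase hu
        have hsv : σ v ≠ v := hTne v hvT
        set T'' := (T.erase v).erase u with hT''
        have hb : ∀ y : Fin N → X,
            (∫⁻ w, (∏ i ∈ T, f ((update y v w) i) ((update y v w) (σ i))) ∂μ)
              ≤ (M * L) * ∏ i ∈ T'', f (y i) (y (σ i)) := by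
          intro y
          have huev : u ∈ T.erase v := hu
          have heq : ∀ w : X, (∏ i ∈ T, f ((update y v w) i) ((update y v w) (σ i)))
              = (∏ i ∈ T'', f (y i) (y (σ i))) * (f w (y (σ v)) * f (y u) w) := by
            intro w
            rw [← Finset.mul_prod_erase T _ hvT, ← Finset.mul_prod_erase (T.erase v) _ huev]
            have e1 : update y v w v = w := update_self ..
            have e2 : update y v w (σ v) = y (σ v) := update_of_ne hsv ..
            have e3 : update y v w u = y u := update_of_ne hune ..
            have e4 : update y v w (σ u) = w := by rw [huv]; exact update_self ..
            have e5 : ∏ i ∈ T'', f ((update y v w) i) ((update y v w) (σ i))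
                = ∏ i ∈ T'', f (y i) (y (σ i)) := by
              refine Finset.prod_congr rfl fun i hi => ?_
              have hiu : i ≠ u := Finset.ne_of_mem_erase hi
              have hiv : i ≠ v := Finset.ne_of_mem_erase (Finset.mem_of_mem_erase hi)
              have hiT : i ∈ T := Finset.mem_of_mem_erase (Finset.mem_of_mem_erase hi)
              have hσiv : σ i ≠ v := by
                intro h
                exact hiu (hinj hiT huT (h.trans huv.symm))
              rw [update_of_ne hiv, update_of_ne hσiv]
            rw [e1, e2, e3, e4, e5]
            ring
          simp_rw [heq]
          have hmeas : AEMeasurable (fun w : X => f w (y (σ v)) * f (y u) w) μ := by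
            have ha : (fun w : X => f w (y (σ v))) =
                (Function.uncurry f) ∘ (fun w => (w, y (σ v))) := rfl
            have hb' : (fun w : X => f (y u) w) =
                (Function.uncurry f) ∘ (fun w => (y u, w)) := rfl
            exact            ((by rw [ha]; exact hf.comp (measurable_id.prodMk measurable_const) :
                Measurable fun w : X => f w (y (σ v))).mul
              (by rw [hb']; exact hf.comp (measurable_const.prodMk measurable_id) :
                Measurable fun w : X => f (y u) w)).aemeasurable
          rw [lintegral_const_mul'' _ hmeas, mul_comm]
          exact mul_le_mul_left (hB _ _) _
        have hsub : T'' ⊆ S.erase v := by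
          intro i hi
          exact Finset.mem_erase.mpr ⟨Finset.ne_of_mem_erase (Finset.mem_of_mem_erase hi),
            hTS (Finset.mem_of_mem_erase (Finset.mem_of_mem_erase hi))⟩
        have hσ : ∀ i ∈ T'', σ i ∈ S.erase v := by
          intro i hi
          have hiu : i ≠ u := Finset.ne_of_mem_erase hi
          have hiT : i ∈ T := Finset.mem_of_mem_erase (Finset.mem_of_mem_erase hi)
          refine Finset.mem_erase.mpr ⟨fun h => hiu (hinj hiT huT (h.trans huv.symm)),
            hTSσ i hiT⟩
        have hne' : ∀ i ∈ T'', σ i ≠ i := fun i hi =>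
          hTne i (Finset.mem_of_mem_erase (Finset.mem_of_mem_erase hi))
        have ht2 : 2 ≤ T.card := Finset.one_lt_card.mpr ⟨u, huT, v, hvT, hune⟩
        have hcardT'' : T''.card = T.card - 2 := by
          rw [hT'', Finset.card_erase_of_mem hu, Finset.card_erase_of_mem hvT]
          omega
        calc (∫⋯∫⁻_S, (fun z => ∏ i ∈ T, f (z i) (z (σ i))) ∂(fun _ => μ)) x
            ≤ (M * L) * (M ^ n * L ^ (T''.card / 2)) :=
              step v hvS T'' (M * L) (ENNReal.mul_ne_top hMt hLt) hb hsub hσ hne'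
          _ = M ^ S.card * L ^ (T''.card / 2 + 1) := by rw [hcard]; ring
          _ = M ^ S.card * L ^ (T.card / 2) := by
              have hdiv : T''.card / 2 + 1 = T.card / 2 := by rw [hcardT'']; omega
              rw [hdiv]

-- core single-edge integral bound
theorem core_bound (d : ℕ) (hd : 1 ≤ d) (δ : ℝ) (hδ0 : 0 < δ) (γ : ℝ) (hγ0 : 0 ≤ γ)
    (hγd : γ ≤ d) (K : ℕ) (hK : (2:ℝ) ^ (-(K:ℝ) - 1) ≤ δ)
    (w : EuclideanSpace ℝ (Fin d)) :
    ∫⁻ z in Metric.ball (0 : EuclideanSpace ℝ (Fin d)) 1,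
        ENNReal.ofReal ((δ ⊔ dist z w) ^ (-γ))
      ≤ volume (Metric.ball (0 : EuclideanSpace ℝ (Fin d)) 1) *
          (1 + ∑ k ∈ Finset.range (K + 1),
            ENNReal.ofReal ((2:ℝ) ^ (d:ℝ) * (2:ℝ) ^ (-(k:ℝ) * ((d:ℝ) - γ)))) := by
  have hpt : ∀ z : EuclideanSpace ℝ (Fin d), ENNReal.ofReal ((δ ⊔ dist z w) ^ (-γ))
      ≤ 1 + ∑ k ∈ Finset.range (K + 1),
          Set.indicator (Metric.closedBall w ((2:ℝ) ^ (-(k:ℝ))))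
            (fun _ => ENNReal.ofReal ((2:ℝ) ^ (((k:ℝ) + 1) * γ))) z := by
    intro z
    set r := δ ⊔ dist z w with hr
    have hr0 : 0 < r := lt_of_lt_of_le hδ0 le_sup_left
    have hrd : dist z w ≤ r := le_sup_right
    have hrδ : δ ≤ r := le_sup_left
    by_cases hr1 : 1 ≤ r
    · refine le_trans ?_ le_self_add
      rw [← ENNReal.ofReal_one]
      exact ENNReal.ofReal_le_ofReal
        (Real.rpow_le_one_of_one_le_of_nonpos hr1 (neg_nonpos.mpr hγ0))
    · push_neg at hr1
      set t := Real.logb 2 (1 / r) with ht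
      have h1r : 1 < 1 / r := by rw [lt_div_iff₀ hr0]; linarith
      have ht0 : 0 ≤ t := Real.logb_nonneg one_lt_two h1r.le
      set m := Nat.floor t with hm
      have hmt : (m : ℝ) ≤ t := Nat.floor_le ht0
      have htm : t < (m : ℝ) + 1 := Nat.lt_floor_add_one t
      have hlr : Real.logb 2 r = -t := by
        rw [ht, one_div, Real.logb_inv]; ring
      have hrlog : (2:ℝ) ^ (Real.logb 2 r) = r :=
        Real.rpow_logb zero_lt_two (by norm_num) hr0
      have hrm : r ≤ (2:ℝ) ^ (-(m:ℝ)) := by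
        calc r = (2:ℝ) ^ (Real.logb 2 r) := hrlog.symm
          _ ≤ (2:ℝ) ^ (-(m:ℝ)) := by
              apply Real.rpow_le_rpow_of_exponent_le one_le_two
              rw [hlr]; linarith
      have hrm1 : (2:ℝ) ^ (-(m:ℝ) - 1) < r := by
        calc (2:ℝ) ^ (-(m:ℝ) - 1) < (2:ℝ) ^ (Real.logb 2 r) := by
              apply Real.rpow_lt_rpow_of_exponent_lt one_lt_two
              rw [hlr]; linarith
          _ = r := hrlog
      set k := min m K with hk
      have hkK : k ∈ Finset.range (K + 1) :=
        Finset.mem_range.mpr (Nat.lt_succ_of_le (min_le_right m K))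
      have hzk : z ∈ Metric.closedBall w ((2:ℝ) ^ (-(k:ℝ))) := by
        rw [Metric.mem_closedBall]
        calc dist z w ≤ r := hrd
          _ ≤ (2:ℝ) ^ (-(m:ℝ)) := hrm
          _ ≤ (2:ℝ) ^ (-(k:ℝ)) := by
              apply Real.rpow_le_rpow_of_exponent_le one_le_two
              have : (k:ℝ) ≤ (m:ℝ) := Nat.cast_le.mpr (min_le_left m K)
              linarith
      have hk1r : (2:ℝ) ^ (-(k:ℝ) - 1) ≤ r := by
        rcases le_total m K with h | h
        · rw [hk, min_eq_left h]; exact hrm1.le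
        · rw [hk, min_eq_right h]; exact le_trans hK hrδ
      have hval : r ^ (-γ) ≤ (2:ℝ) ^ (((k:ℝ) + 1) * γ) := by
        calc r ^ (-γ) ≤ ((2:ℝ) ^ (-(k:ℝ) - 1)) ^ (-γ) :=
              Real.rpow_le_rpow_of_nonpos (by positivity) hk1r (neg_nonpos.mpr hγ0)
          _ = (2:ℝ) ^ ((-(k:ℝ) - 1) * (-γ)) :=
              (Real.rpow_mul (by norm_num) _ _).symm
          _ = (2:ℝ) ^ (((k:ℝ) + 1) * γ) := by congr 1; ring
      calc ENNReal.ofReal (r ^ (-γ))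
          ≤ ENNReal.ofReal ((2:ℝ) ^ (((k:ℝ) + 1) * γ)) := ENNReal.ofReal_le_ofReal hval
        _ = Set.indicator (Metric.closedBall w ((2:ℝ) ^ (-(k:ℝ))))
              (fun _ => ENNReal.ofReal ((2:ℝ) ^ (((k:ℝ) + 1) * γ))) z :=
            (Set.indicator_of_mem hzk (fun _ => ENNReal.ofReal ((2:ℝ) ^ (((k:ℝ) + 1) * γ)))).symm
        _ ≤ ∑ k' ∈ Finset.range (K + 1),
              Set.indicator (Metric.closedBall w ((2:ℝ) ^ (-(k':ℝ))))
                (fun _ => ENNReal.ofReal ((2:ℝ) ^ (((k':ℝ) + 1) * γ))) z :=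
            Finset.single_le_sum (f := fun k' : ℕ =>
              Set.indicator (Metric.closedBall w ((2:ℝ) ^ (-(k':ℝ))))
                (fun _ => ENNReal.ofReal ((2:ℝ) ^ (((k':ℝ) + 1) * γ))) z)
              (fun _ _ => zero_le) hkK
        _ ≤ _ := le_add_self
  have hfin : Module.finrank ℝ (EuclideanSpace ℝ (Fin d)) = d := finrank_euclideanSpace_fin
  calc ∫⁻ z in Metric.ball (0 : EuclideanSpace ℝ (Fin d)) 1, ENNReal.ofReal ((δ ⊔ dist z w) ^ (-γ))
      ≤ ∫⁻ z in Metric.ball (0 : EuclideanSpace ℝ (Fin d)) 1,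
          (1 + ∑ k ∈ Finset.range (K + 1),
            Set.indicator (Metric.closedBall w ((2:ℝ) ^ (-(k:ℝ))))
              (fun _ => ENNReal.ofReal ((2:ℝ) ^ (((k:ℝ) + 1) * γ))) z) :=
        lintegral_mono hpt
    _ = (∫⁻ _ in Metric.ball (0 : EuclideanSpace ℝ (Fin d)) 1, (1:ℝ≥0∞)) +
        ∫⁻ z in Metric.ball (0 : EuclideanSpace ℝ (Fin d)) 1,
          ∑ k ∈ Finset.range (K + 1),
            Set.indicator (Metric.closedBall w ((2:ℝ) ^ (-(k:ℝ))))
              (fun _ => ENNReal.ofReal ((2:ℝ) ^ (((k:ℝ) + 1) * γ))) z :=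
        lintegral_add_left measurable_const _
    _ ≤ volume (Metric.ball (0 : EuclideanSpace ℝ (Fin d)) 1) + ∑ k ∈ Finset.range (K + 1),
          ENNReal.ofReal ((2:ℝ) ^ (d:ℝ) * (2:ℝ) ^ (-(k:ℝ) * ((d:ℝ) - γ))) * volume (Metric.ball (0 : EuclideanSpace ℝ (Fin d)) 1) := by
        apply add_le_add
        · rw [setLIntegral_one]
        · rw [lintegral_finset_sum _ (fun k _ =>
            measurable_const.indicator Metric.isClosed_closedBall.measurableSet)]
          apply Finset.sum_le_sum
          intro k _
          rw [lintegral_indicator Metric.isClosed_closedBall.measurableSet]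
          rw [setLIntegral_const]
          rw [Measure.restrict_apply Metric.isClosed_closedBall.measurableSet]
          calc ENNReal.ofReal ((2:ℝ) ^ (((k:ℝ) + 1) * γ)) *
                volume (Metric.closedBall w ((2:ℝ) ^ (-(k:ℝ))) ∩ Metric.ball 0 1)
              ≤ ENNReal.ofReal ((2:ℝ) ^ (((k:ℝ) + 1) * γ)) *
                volume (Metric.closedBall w ((2:ℝ) ^ (-(k:ℝ)))) :=
                mul_le_mul_right (measure_mono Set.inter_subset_left) _
            _ = ENNReal.ofReal ((2:ℝ) ^ (((k:ℝ) + 1) * γ)) *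
                (ENNReal.ofReal (((2:ℝ) ^ (-(k:ℝ))) ^ Module.finrank ℝ (EuclideanSpace ℝ (Fin d))) * volume (Metric.ball (0 : EuclideanSpace ℝ (Fin d)) 1)) := by
                rw [Measure.addHaar_closedBall volume w (by positivity)]
            _ = ENNReal.ofReal ((2:ℝ) ^ (((k:ℝ) + 1) * γ) * (2:ℝ) ^ (-(k:ℝ) * (d:ℝ))) * volume (Metric.ball (0 : EuclideanSpace ℝ (Fin d)) 1) := by
                rw [← mul_assoc, ← ENNReal.ofReal_mul (by positivity)]
                congr 3
                rw [hfin, ← Real.rpow_natCast ((2:ℝ) ^ (-(k:ℝ))) d,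
                  ← Real.rpow_mul (by norm_num)]
            _ ≤ ENNReal.ofReal ((2:ℝ) ^ (d:ℝ) * (2:ℝ) ^ (-(k:ℝ) * ((d:ℝ) - γ))) * volume (Metric.ball (0 : EuclideanSpace ℝ (Fin d)) 1) := by
                apply mul_le_mul_left
                apply ENNReal.ofReal_le_ofReal
                rw [← Real.rpow_add zero_lt_two, ← Real.rpow_add zero_lt_two]
                apply Real.rpow_le_rpow_of_exponent_le one_le_two
                have hkk : (0:ℝ) ≤ (k:ℝ) := Nat.cast_nonneg k
                nlinarith
    _ = volume (Metric.ball (0 : EuclideanSpace ℝ (Fin d)) 1) * (1 + ∑ k ∈ Finset.range (K + 1),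
          ENNReal.ofReal ((2:ℝ) ^ (d:ℝ) * (2:ℝ) ^ (-(k:ℝ) * ((d:ℝ) - γ)))) := by
        rw [mul_add, mul_one, Finset.mul_sum]
        congr 1
        exact Finset.sum_congr rfl fun k _ => mul_comm _ _

theorem core_bound_A (d : ℕ) (hd : 1 ≤ d) (δ : ℝ) (hδ0 : 0 < δ) (γ : ℝ) (hγ0 : 0 ≤ γ)
    (hγd : 2 * γ ≤ d) (K : ℕ) (hK : (2:ℝ) ^ (-(K:ℝ) - 1) ≤ δ)
    (w : EuclideanSpace ℝ (Fin d)) :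
    ∫⁻ z in Metric.ball (0 : EuclideanSpace ℝ (Fin d)) 1,
        ENNReal.ofReal ((δ ⊔ dist z w) ^ (-γ))
      ≤ volume (Metric.ball (0 : EuclideanSpace ℝ (Fin d)) 1) *
          ENNReal.ofReal (1 + 4 * 2 ^ (d:ℝ)) := by
  refine le_trans (core_bound d hd δ hδ0 γ hγ0 (by
      have : (1:ℝ) ≤ d := by exact_mod_cast hd
      linarith) K hK w) ?_
  apply mul_le_mul_right
  have hsum : ∑ k ∈ Finset.range (K + 1),
      ENNReal.ofReal ((2:ℝ) ^ (d:ℝ) * (2:ℝ) ^ (-(k:ℝ) * ((d:ℝ) - γ)))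
      ≤ ENNReal.ofReal (4 * 2 ^ (d:ℝ)) := by
    rw [← ENNReal.ofReal_sum_of_nonneg (fun k _ => by positivity)]
    apply ENNReal.ofReal_le_ofReal
    have hx34 : (2:ℝ) ^ (-((d:ℝ) - γ)) ≤ 3 / 4 := by
      have h12 : (2:ℝ) ^ (-((d:ℝ) - γ)) ≤ (2:ℝ) ^ (-(1/2 : ℝ)) := by
        apply Real.rpow_le_rpow_of_exponent_le one_le_two
        have : (1:ℝ) ≤ d := by exact_mod_cast hd
        linarith
      have hsq : ((2:ℝ) ^ (-(1/2 : ℝ))) ^ (2:ℕ) ≤ (3/4 : ℝ) ^ (2:ℕ) := by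
        rw [← Real.rpow_natCast ((2:ℝ) ^ (-(1/2:ℝ))) 2, ← Real.rpow_mul (by norm_num)]
        norm_num
      have := (pow_le_pow_iff_left₀ (by positivity) (by norm_num) (by norm_num)).mp hsq
      linarith
    calc ∑ k ∈ Finset.range (K + 1),
          (2:ℝ) ^ (d:ℝ) * (2:ℝ) ^ (-(k:ℝ) * ((d:ℝ) - γ))
        ≤ ∑ k ∈ Finset.range (K + 1), (2:ℝ) ^ (d:ℝ) * (3/4 : ℝ) ^ k := by
          apply Finset.sum_le_sum
          intro k _
          apply mul_le_mul_of_nonneg_left _ (by positivity)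
          have : (2:ℝ) ^ (-(k:ℝ) * ((d:ℝ) - γ)) = ((2:ℝ) ^ (-((d:ℝ) - γ))) ^ k := by
            rw [← Real.rpow_natCast ((2:ℝ) ^ (-((d:ℝ) - γ))) k,
              ← Real.rpow_mul (by norm_num)]
            congr 1; ring
          rw [this]
          exact pow_le_pow_left₀ (by positivity) hx34 k
      _ = (2:ℝ) ^ (d:ℝ) * ∑ k ∈ Finset.range (K + 1), (3/4 : ℝ) ^ k := by
          rw [Finset.mul_sum]
      _ ≤ (2:ℝ) ^ (d:ℝ) * 4 := by
          apply mul_le_mul_of_nonneg_left _ (by positivity)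
          rw [geom_sum_eq (by norm_num : (3/4 : ℝ) ≠ 1)]
          have h1 : (0:ℝ) ≤ (3/4 : ℝ) ^ (K+1) := by positivity
          have h2 : ((3/4:ℝ) ^ (K+1) - 1) / ((3/4 : ℝ) - 1) = (1 - (3/4:ℝ)^(K+1)) * 4 := by
            field_simp; ring
          rw [h2]; nlinarith
      _ = 4 * 2 ^ (d:ℝ) := by ring
  calc 1 + ∑ k ∈ Finset.range (K + 1),
        ENNReal.ofReal ((2:ℝ) ^ (d:ℝ) * (2:ℝ) ^ (-(k:ℝ) * ((d:ℝ) - γ)))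
      ≤ 1 + ENNReal.ofReal (4 * 2 ^ (d:ℝ)) := add_le_add_right hsum _
    _ = ENNReal.ofReal (1 + 4 * 2 ^ (d:ℝ)) := by
        rw [ENNReal.ofReal_add (by norm_num) (by positivity), ENNReal.ofReal_one]

theorem core_bound_B (d : ℕ) (hd : 1 ≤ d) (δ : ℝ) (hδ0 : 0 < δ) (γ : ℝ) (hγ0 : 0 ≤ γ)
    (hγd : γ ≤ d) (K : ℕ) (hK : (2:ℝ) ^ (-(K:ℝ) - 1) ≤ δ)
    (w : EuclideanSpace ℝ (Fin d)) :
    ∫⁻ z in Metric.ball (0 : EuclideanSpace ℝ (Fin d)) 1,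
        ENNReal.ofReal ((δ ⊔ dist z w) ^ (-γ))
      ≤ volume (Metric.ball (0 : EuclideanSpace ℝ (Fin d)) 1) *
          ENNReal.ofReal (1 + ((K:ℝ) + 1) * 2 ^ (d:ℝ)) := by
  refine le_trans (core_bound d hd δ hδ0 γ hγ0 hγd K hK w) ?_
  apply mul_le_mul_right
  have hsum : ∑ k ∈ Finset.range (K + 1),
      ENNReal.ofReal ((2:ℝ) ^ (d:ℝ) * (2:ℝ) ^ (-(k:ℝ) * ((d:ℝ) - γ)))
      ≤ ENNReal.ofReal (((K:ℝ) + 1) * 2 ^ (d:ℝ)) := by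
    rw [← ENNReal.ofReal_sum_of_nonneg (fun k _ => by positivity)]
    apply ENNReal.ofReal_le_ofReal
    calc ∑ k ∈ Finset.range (K + 1),
          (2:ℝ) ^ (d:ℝ) * (2:ℝ) ^ (-(k:ℝ) * ((d:ℝ) - γ))
        ≤ ∑ _k ∈ Finset.range (K + 1), (2:ℝ) ^ (d:ℝ) := by
          apply Finset.sum_le_sum
          intro k _
          have h1 : (2:ℝ) ^ (-(k:ℝ) * ((d:ℝ) - γ)) ≤ 1 := by
            apply Real.rpow_le_one_of_one_le_of_nonpos one_le_two
            have hk0 : (0:ℝ) ≤ (k:ℝ) := Nat.cast_nonneg k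
            nlinarith
          nlinarith [Real.rpow_pos_of_pos (zero_lt_two) ((d:ℝ)), h1]
      _ = ((K:ℝ) + 1) * 2 ^ (d:ℝ) := by
          rw [Finset.sum_const, Finset.card_range, nsmul_eq_mul]
          push_cast; ring
  calc 1 + ∑ k ∈ Finset.range (K + 1),
        ENNReal.ofReal ((2:ℝ) ^ (d:ℝ) * (2:ℝ) ^ (-(k:ℝ) * ((d:ℝ) - γ)))
      ≤ 1 + ENNReal.ofReal (((K:ℝ) + 1) * 2 ^ (d:ℝ)) := add_le_add_right hsum _
    _ = ENNReal.ofReal (1 + ((K:ℝ) + 1) * 2 ^ (d:ℝ)) := by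
        rw [ENNReal.ofReal_add (by norm_num) (by positivity), ENNReal.ofReal_one]

theorem mul_le_sq_add_sq' (a b : ℝ) : a * b ≤ a ^ (2:ℕ) + b ^ (2:ℕ) := by
  nlinarith [sq_nonneg (a - b), sq_nonneg (a + b)]

set_option maxHeartbeats 1000000 in
/-- **Truncated nearest-neighbour integral bound, valid also in the
supercritical regime.** There is `C > 0` (depending only on `d`) such that for
all `N ≥ 2`, `β > 0` and `δ ∈ (0, 1/2]`,
`∫_{B(0,1)^N} ∏_i (min_{j≠i} max(δ, |z_i−z_j|))^{−β²/2} dz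
  ≤ C^N N^N (log(1/δ))^{N/2} δ^{−max(0,β²−d)N/2}`. -/
theorem stmt_8 (d : ℕ) (hd : 1 ≤ d) :
    ∃ C : ℝ, 0 < C ∧ ∀ N : ℕ, 2 ≤ N → ∀ β : ℝ, 0 < β →
      ∀ δ : ℝ, 0 < δ → δ ≤ 1 / 2 →
      (∫⁻ z : Fin N → EuclideanSpace ℝ (Fin d) in
          Set.univ.pi (fun _ : Fin N => Metric.ball (0 : EuclideanSpace ℝ (Fin d)) 1),
        ENNReal.ofReal (∏ i : Fin N,
          (⨅ j : {j : Fin N // j ≠ i}, max δ (dist (z i) (z j.1))) ^ (-(β ^ 2) / 2)))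
      ≤ ENNReal.ofReal
          (C ^ N * (N : ℝ) ^ N * Real.log (1 / δ) ^ ((N : ℝ) / 2)
            * δ ^ (-(max 0 (β ^ 2 - (d : ℝ))) * (N : ℝ) / 2)) := by
  -- the dimensional constants
  set E := EuclideanSpace ℝ (Fin d) with hE
  have hd1 : (1:ℝ) ≤ (d:ℝ) := by exact_mod_cast hd
  set ωR : ℝ := (volume (Metric.ball (0 : EuclideanSpace ℝ (Fin d)) 1)).toReal with hωR
  have hωR0 : 0 ≤ ωR := ENNReal.toReal_nonneg
  set cA : ℝ := 1 + 4 * 2 ^ (d:ℝ) with hcA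
  have hcA1 : 1 ≤ cA := by
    have : (0:ℝ) < 2 ^ (d:ℝ) := by positivity
    simp only [hcA]; nlinarith
  set cM : ℝ := max (ωR * cA) 1 with hcM
  have hcM1 : (1:ℝ) ≤ cM := le_max_right _ _
  have hlog2 : (0:ℝ) < Real.log 2 := Real.log_pos (by norm_num)
  set cB : ℝ := 6 * (ωR + 1) * (2 ^ (d:ℝ) + 1) / Real.log 2 with hcB
  set cL : ℝ := max cB (1 / Real.log 2) with hcL
  set cL' : ℝ := max cL 1 with hcL'
  have hcL'1 : (1:ℝ) ≤ cL' := le_max_right _ _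
  clear_value cL'
  clear_value ωR cA cM cB cL
  refine ⟨cM * cL', by nlinarith, ?_⟩
  intro N hN β hβ δ hδ0 hδhalf
  -- basic δ facts
  have hδ1 : δ < 1 := lt_of_le_of_lt hδhalf (by norm_num)
  have h2δ : (2:ℝ) ≤ 1 / δ := by
    rw [le_div_iff₀ hδ0]; linarith
  set Λ : ℝ := Real.log (1 / δ) with hΛ
  have hΛlog2 : Real.log 2 ≤ Λ := Real.log_le_log (by norm_num) h2δ
  have hΛ0 : 0 < Λ := lt_of_lt_of_le hlog2 hΛlog2
  -- the dyadic scale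
  set K : ℕ := Nat.floor (Real.logb 2 (1 / δ)) with hKdef
  have hlogb0 : 0 ≤ Real.logb 2 (1 / δ) := Real.logb_nonneg one_lt_two (le_trans (by norm_num) h2δ)
  have hKle : (K:ℝ) ≤ Λ / Real.log 2 := by
    rw [hKdef]
    refine le_trans (Nat.floor_le hlogb0) ?_
    rw [Real.logb, hΛ]
  have hK : (2:ℝ) ^ (-(K:ℝ) - 1) ≤ δ := by
    have h1 : Real.logb 2 (1 / δ) < (K:ℝ) + 1 := Nat.lt_floor_add_one _
    have h2 : (1:ℝ) / δ = (2:ℝ) ^ (Real.logb 2 (1 / δ)) :=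
      (Real.rpow_logb zero_lt_two (by norm_num) (by positivity)).symm
    have h3 : (1:ℝ) / δ ≤ (2:ℝ) ^ ((K:ℝ) + 1) := by
      rw [h2]
      exact Real.rpow_le_rpow_of_exponent_le one_le_two h1.le
    have h4 : (2:ℝ) ^ (-(K:ℝ) - 1) = ((2:ℝ) ^ ((K:ℝ) + 1))⁻¹ := by
      rw [← Real.rpow_neg (by norm_num : (0:ℝ) ≤ 2)]
      congr 1; ring
    rw [h4]
    rw [inv_le_comm₀ (by positivity) hδ0]
    rwa [← one_div]
  clear_value K
  -- exponents
  set mβ : ℝ := max 0 (β ^ 2 - (d:ℝ)) with hmβ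
  set γ : ℝ := min (β ^ 2) (d:ℝ) with hγ
  have hmβ0 : 0 ≤ mβ := le_max_left _ _
  have hγ0 : 0 ≤ γ := le_min (by positivity) (by positivity)
  have hγd : γ ≤ (d:ℝ) := min_le_right _ _
  have hmγ : mβ + γ = β ^ 2 := by
    rcases le_total (β ^ 2) (d:ℝ) with h | h
    · rw [hmβ, hγ, max_eq_left (by linarith), min_eq_left h]; ring
    · rw [hmβ, hγ, max_eq_right (by linarith), min_eq_right h]; ring
  clear_value mβ γ
  -- the single-particle measure
  set μ : Measure E := volume.restrict (Metric.ball (0 : E) 1) with hμ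
  haveI hfinμ : IsFiniteMeasure μ := by
    constructor
    rw [hμ, Measure.restrict_apply_univ]
    exact measure_ball_lt_top
  have hμuniv : μ Set.univ = volume (Metric.ball (0 : E) 1) := by
    rw [hμ, Measure.restrict_apply_univ]
  have hωfin : volume (Metric.ball (0 : E) 1) ≠ ⊤ := measure_ball_lt_top.ne
  have hωeq : volume (Metric.ball (0 : E) 1) = ENNReal.ofReal ωR := by
    rw [hωR, ENNReal.ofReal_toReal hωfin]
  -- the edge weight function
  set f : E → E → ℝ≥0∞ := fun a b => ENNReal.ofReal ((δ ⊔ dist a b) ^ (-(γ / 2))) with hf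
  have hbase_pos : ∀ a b : E, 0 < δ ⊔ dist a b := fun a b => lt_of_lt_of_le hδ0 le_sup_left
  have hfmeas : Measurable (Function.uncurry f) := by
    have hcont : Continuous fun p : E × E => ENNReal.ofReal ((δ ⊔ dist p.1 p.2) ^ (-(γ / 2))) := by
      apply ENNReal.continuous_ofReal.comp
      apply Continuous.rpow_const
      · exact continuous_const.max (continuous_fst.dist continuous_snd)
      · intro p
        exact Or.inl (ne_of_gt (hbase_pos _ _))
    exact hcont.measurable
  -- constants as ℝ≥0∞
  set M : ℝ≥0∞ := ENNReal.ofReal cM with hM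
  set L : ℝ≥0∞ := ENNReal.ofReal (cL * Λ) with hL
  have hM1 : (1:ℝ≥0∞) ≤ M := by
    rw [hM, ← ENNReal.ofReal_one]
    exact ENNReal.ofReal_le_ofReal hcM1
  have hMt : M ≠ ⊤ := ENNReal.ofReal_ne_top
  have hcLΛ1 : (1:ℝ) ≤ cL * Λ := by
    have h1 : 1 / Real.log 2 ≤ cL := by rw [hcL]; exact le_max_right _ _
    calc (1:ℝ) = (1 / Real.log 2) * Real.log 2 := by field_simp
      _ ≤ cL * Λ := by
          apply mul_le_mul h1 hΛlog2 hlog2.le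
          exact le_trans (by positivity) h1
  have hL1 : (1:ℝ≥0∞) ≤ L := by
    rw [hL, ← ENNReal.ofReal_one]
    exact ENNReal.ofReal_le_ofReal hcLΛ1
  have hLt : L ≠ ⊤ := ENNReal.ofReal_ne_top
  have hV : μ Set.univ ≤ M := by
    rw [hμuniv, hωeq, hM]
    apply ENNReal.ofReal_le_ofReal
    calc ωR = ωR * 1 := by ring
      _ ≤ ωR * cA := by nlinarith
      _ ≤ cM := by rw [hcM]; exact le_max_left _ _
  -- the single integral bound
  have hA : ∀ w : E, ∫⁻ z, f z w ∂μ ≤ M := by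
    intro w
    have := core_bound_A d hd δ hδ0 (γ / 2) (by linarith) (by linarith) K hK w
    rw [hμ]
    refine le_trans this ?_
    rw [hωeq, hM, ← ENNReal.ofReal_mul hωR0]
    apply ENNReal.ofReal_le_ofReal
    rw [hcM, hcA]
    exact le_max_left _ _
  -- the double (cycle) bound
  have hBB : ∀ w w' : E, ∫⁻ z, f z w * f w' z ∂μ ≤ M * L := by
    intro w w'
    have hpt : ∀ z : E, f z w * f w' z
        ≤ ENNReal.ofReal ((δ ⊔ dist z w) ^ (-γ)) + ENNReal.ofReal ((δ ⊔ dist z w') ^ (-γ)) := by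
      intro z
      rw [hf]
      dsimp only
      rw [← ENNReal.ofReal_mul (by positivity), ← ENNReal.ofReal_add (by positivity) (by positivity)]
      apply ENNReal.ofReal_le_ofReal
      have hsq : ∀ a b : E, ((δ ⊔ dist a b) ^ (-(γ / 2))) ^ (2:ℕ) = (δ ⊔ dist a b) ^ (-γ) := by
        intro a b
        rw [← Real.rpow_natCast ((δ ⊔ dist a b) ^ (-(γ / 2))) 2,
          ← Real.rpow_mul (hbase_pos a b).le]
        congr 1; push_cast; ring
      have h1 : (0:ℝ) ≤ (δ ⊔ dist z w) ^ (-(γ / 2)) := by positivity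
      have h2 : (0:ℝ) ≤ (δ ⊔ dist w' z) ^ (-(γ / 2)) := by positivity
      have key : ((δ ⊔ dist z w) ^ (-(γ / 2))) * ((δ ⊔ dist w' z) ^ (-(γ / 2)))
          ≤ ((δ ⊔ dist z w) ^ (-(γ / 2))) ^ (2:ℕ) + ((δ ⊔ dist w' z) ^ (-(γ / 2))) ^ (2:ℕ) :=
        mul_le_sq_add_sq' _ _
      calc (δ ⊔ dist z w) ^ (-(γ / 2)) * (δ ⊔ dist w' z) ^ (-(γ / 2))
          ≤ ((δ ⊔ dist z w) ^ (-(γ / 2))) ^ (2:ℕ) + ((δ ⊔ dist w' z) ^ (-(γ / 2))) ^ (2:ℕ) := key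
        _ = (δ ⊔ dist z w) ^ (-γ) + (δ ⊔ dist z w') ^ (-γ) := by
            rw [hsq z w, hsq w' z, dist_comm w' z]
    have hmeas1 : Measurable fun z : E => ENNReal.ofReal ((δ ⊔ dist z w) ^ (-γ)) := by
      have hcont : Continuous fun z : E => ENNReal.ofReal ((δ ⊔ dist z w) ^ (-γ)) := by
        apply ENNReal.continuous_ofReal.comp
        apply Continuous.rpow_const
        · exact continuous_const.max (continuous_id.dist continuous_const)
        · intro z; exact Or.inl (ne_of_gt (hbase_pos _ _))
      exact hcont.measurable
    calc ∫⁻ z, f z w * f w' z ∂μ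
        ≤ ∫⁻ z, (ENNReal.ofReal ((δ ⊔ dist z w) ^ (-γ))
            + ENNReal.ofReal ((δ ⊔ dist z w') ^ (-γ))) ∂μ := lintegral_mono hpt
      _ = (∫⁻ z, ENNReal.ofReal ((δ ⊔ dist z w) ^ (-γ)) ∂μ)
            + ∫⁻ z, ENNReal.ofReal ((δ ⊔ dist z w') ^ (-γ)) ∂μ := lintegral_add_left hmeas1 _
      _ ≤ (volume (Metric.ball (0 : E) 1) * ENNReal.ofReal (1 + ((K:ℝ) + 1) * 2 ^ (d:ℝ)))
            + volume (Metric.ball (0 : E) 1) * ENNReal.ofReal (1 + ((K:ℝ) + 1) * 2 ^ (d:ℝ)) := by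
          apply add_le_add
          · exact core_bound_B d hd δ hδ0 γ hγ0 hγd K hK w
          · exact core_bound_B d hd δ hδ0 γ hγ0 hγd K hK w'
      _ ≤ M * L := by
          rw [hωeq, ← ENNReal.ofReal_mul hωR0, ← two_mul, ← ENNReal.ofReal_ofNat,
            ← ENNReal.ofReal_mul (by norm_num), hM, hL, ← ENNReal.ofReal_mul (by positivity)]
          apply ENNReal.ofReal_le_ofReal
          have h2d : (0:ℝ) < 2 ^ (d:ℝ) := by positivity
          have hK2 : (K:ℝ) + 2 ≤ 3 * (Λ / Real.log 2) := by
            have h1 : (1:ℝ) ≤ Λ / Real.log 2 := (one_le_div hlog2).mpr hΛlog2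
            linarith
          have hK0 : (0:ℝ) ≤ (K:ℝ) := Nat.cast_nonneg K
          have hcBbound : 2 * (ωR * (1 + ((K:ℝ) + 1) * 2 ^ (d:ℝ))) ≤ cB * Λ := by
            have e1 : 1 + ((K:ℝ) + 1) * 2 ^ (d:ℝ) ≤ ((K:ℝ) + 2) * (2 ^ (d:ℝ) + 1) := by
              nlinarith
            have e2 : 2 * (ωR * (1 + ((K:ℝ) + 1) * 2 ^ (d:ℝ)))
                ≤ 2 * ((ωR + 1) * (((K:ℝ) + 2) * (2 ^ (d:ℝ) + 1))) := by
              nlinarith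
            have e3 : 2 * ((ωR + 1) * (((K:ℝ) + 2) * (2 ^ (d:ℝ) + 1)))
                ≤ 2 * ((ωR + 1) * ((3 * (Λ / Real.log 2)) * (2 ^ (d:ℝ) + 1))) := by
              have hp : (0:ℝ) ≤ (ωR + 1) := by linarith
              have hq : (0:ℝ) ≤ 2 ^ (d:ℝ) + 1 := by positivity
              have t1 : ((K:ℝ) + 2) * (2 ^ (d:ℝ) + 1)
                  ≤ (3 * (Λ / Real.log 2)) * (2 ^ (d:ℝ) + 1) :=
                mul_le_mul_of_nonneg_right hK2 hq
              have t2 : (ωR + 1) * (((K:ℝ) + 2) * (2 ^ (d:ℝ) + 1))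
                  ≤ (ωR + 1) * ((3 * (Λ / Real.log 2)) * (2 ^ (d:ℝ) + 1)) :=
                mul_le_mul_of_nonneg_left t1 hp
              linarith
            have e4 : 2 * ((ωR + 1) * ((3 * (Λ / Real.log 2)) * (2 ^ (d:ℝ) + 1))) = cB * Λ := by
              rw [hcB]; field_simp; ring
            linarith
          have hcB_cL : cB ≤ cL := by rw [hcL]; exact le_max_left _ _
          calc 2 * (ωR * (1 + ((K:ℝ) + 1) * 2 ^ (d:ℝ))) ≤ cB * Λ := hcBbound
            _ ≤ cL * Λ := mul_le_mul_of_nonneg_right hcB_cL hΛ0.le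
            _ ≤ cM * (cL * Λ) := le_mul_of_one_le_left (by positivity) hcM1
  -- the product measure identity
  have hpi : (volume : Measure (Fin N → E)).restrict
      (Set.univ.pi fun _ : Fin N => Metric.ball (0 : E) 1)
      = Measure.pi (fun _ : Fin N => μ) := by
    rw [volume_pi]
    refine (Measure.pi_eq (μ := fun _ : Fin N => μ) fun s hs => ?_).symm
    rw [Measure.restrict_apply (MeasurableSet.univ_pi fun i => hs i),
      ← Set.pi_inter_distrib, Measure.pi_pi]
    exact Finset.prod_congr rfl fun i _ => (Measure.restrict_apply (hs i)).symm
  -- nonemptiness of index subtypes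
  haveI hnonempty : ∀ i : Fin N, Nonempty {j : Fin N // j ≠ i} := by
    intro i
    by_cases h : i = ⟨0, by omega⟩
    · refine ⟨⟨⟨1, by omega⟩, ?_⟩⟩
      rw [h]
      intro hc
      rw [Fin.ext_iff] at hc
      simp at hc
    · exact ⟨⟨⟨0, by omega⟩, fun hc => h hc.symm⟩⟩
  set t : Fin N → Finset (Fin N) := fun i => Finset.univ.erase i with htdef
  set Dm : ℝ≥0∞ := ENNReal.ofReal (δ ^ (-(mβ / 2))) with hDm
  -- pointwise expansion bound
  have hpoint : ∀ z : Fin N → E,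
      ENNReal.ofReal (∏ i : Fin N,
          (⨅ j : {j : Fin N // j ≠ i}, max δ (dist (z i) (z j.1))) ^ (-(β ^ 2) / 2))
      ≤ Dm ^ N * ∑ σ ∈ Fintype.piFinset t, ∏ i : Fin N, f (z i) (z (σ i)) := by
    intro z
    have hinfδ : ∀ i : Fin N, δ ≤ ⨅ j : {j : Fin N // j ≠ i}, max δ (dist (z i) (z j.1)) :=
      fun i => le_ciInf fun j => le_max_left _ _
    have hinf0 : ∀ i : Fin N,
        0 < ⨅ j : {j : Fin N // j ≠ i}, max δ (dist (z i) (z j.1)) :=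
      fun i => lt_of_lt_of_le hδ0 (hinfδ i)
    rw [ENNReal.ofReal_prod_of_nonneg (fun i _ => Real.rpow_nonneg (hinf0 i).le _)]
    calc ∏ i : Fin N, ENNReal.ofReal
            ((⨅ j : {j : Fin N // j ≠ i}, max δ (dist (z i) (z j.1))) ^ (-(β ^ 2) / 2))
        ≤ ∏ i : Fin N, (Dm * ∑ j ∈ t i, f (z i) (z j)) := by
          refine Finset.prod_le_prod' fun i _ => ?_
          obtain ⟨j₀, hj₀⟩ := exists_eq_ciInf_of_finite
            (f := fun j : {j : Fin N // j ≠ i} => max δ (dist (z i) (z j.1)))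
          have hsplit : (⨅ j : {j : Fin N // j ≠ i}, max δ (dist (z i) (z j.1))) ^ (-(β ^ 2) / 2)
              = (⨅ j : {j : Fin N // j ≠ i}, max δ (dist (z i) (z j.1))) ^ (-(mβ / 2))
                * (⨅ j : {j : Fin N // j ≠ i}, max δ (dist (z i) (z j.1))) ^ (-(γ / 2)) := by
            rw [← Real.rpow_add (hinf0 i)]
            congr 1
            rw [← hmγ]; ring
          have h1 : (⨅ j : {j : Fin N // j ≠ i}, max δ (dist (z i) (z j.1))) ^ (-(mβ / 2))
              ≤ δ ^ (-(mβ / 2)) :=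
            Real.rpow_le_rpow_of_nonpos hδ0 (hinfδ i) (by
              apply neg_nonpos.mpr; positivity)
          have h2 : (⨅ j : {j : Fin N // j ≠ i}, max δ (dist (z i) (z j.1))) ^ (-(γ / 2))
              = (δ ⊔ dist (z i) (z j₀.1)) ^ (-(γ / 2)) := by
            rw [← hj₀]
          calc ENNReal.ofReal
                ((⨅ j : {j : Fin N // j ≠ i}, max δ (dist (z i) (z j.1))) ^ (-(β ^ 2) / 2))
              ≤ ENNReal.ofReal (δ ^ (-(mβ / 2)) * (δ ⊔ dist (z i) (z j₀.1)) ^ (-(γ / 2))) := by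
                apply ENNReal.ofReal_le_ofReal
                rw [hsplit, h2]
                apply mul_le_mul_of_nonneg_right h1 (by positivity)
            _ = Dm * f (z i) (z j₀.1) := by
                rw [hDm, hf, ← ENNReal.ofReal_mul (by positivity)]
            _ ≤ Dm * ∑ j ∈ t i, f (z i) (z j) := by
                apply mul_le_mul_right
                exact Finset.single_le_sum (f := fun j => f (z i) (z j))
                  (fun j _ => zero_le)
                  (Finset.mem_erase.mpr ⟨j₀.2, Finset.mem_univ _⟩)
      _ = (∏ _i : Fin N, Dm) * ∏ i : Fin N, ∑ j ∈ t i, f (z i) (z j) :=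
          Finset.prod_mul_distrib
      _ = Dm ^ N * ∑ σ ∈ Fintype.piFinset t, ∏ i : Fin N, f (z i) (z (σ i)) := by
          rw [Finset.prod_const, Finset.card_univ, Fintype.card_fin, Finset.prod_univ_sum]
  -- measurability of the summands
  have hgmeas : ∀ σ : Fin N → Fin N,
      Measurable (fun z : Fin N → E => ∏ i : Fin N, f (z i) (z (σ i))) := by
    intro σ
    apply Finset.measurable_prod
    intro i _
    have h : (fun z : Fin N → E => f (z i) (z (σ i))) =
        (Function.uncurry f) ∘ (fun z => (z i, z (σ i))) := rfl
    rw [h]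
    exact hfmeas.comp ((measurable_pi_apply i).prodMk (measurable_pi_apply (σ i)))
  -- auxiliary constants nonneg
  have hcM0 : (0:ℝ) ≤ cM := by linarith
  have hcL0 : (0:ℝ) ≤ cL := by
    rw [hcL]
    refine le_trans ?_ (le_max_right _ _)
    positivity
  have hcLcL' : cL ≤ cL' := by rw [hcL']; exact le_max_left _ _
  have hcL'0 : (0:ℝ) ≤ cL' := le_trans hcL0 hcLcL'
  -- main computation
  calc (∫⁻ z : Fin N → E in
          Set.univ.pi (fun _ : Fin N => Metric.ball (0 : E) 1),
        ENNReal.ofReal (∏ i : Fin N,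
          (⨅ j : {j : Fin N // j ≠ i}, max δ (dist (z i) (z j.1))) ^ (-(β ^ 2) / 2)))
      = ∫⁻ z : Fin N → E,
          ENNReal.ofReal (∏ i : Fin N,
            (⨅ j : {j : Fin N // j ≠ i}, max δ (dist (z i) (z j.1))) ^ (-(β ^ 2) / 2))
          ∂(Measure.pi fun _ : Fin N => μ) := by rw [hpi]
    _ ≤ ∫⁻ z : Fin N → E,
          (Dm ^ N * ∑ σ ∈ Fintype.piFinset t, ∏ i : Fin N, f (z i) (z (σ i)))
          ∂(Measure.pi fun _ : Fin N => μ) := lintegral_mono hpoint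
    _ = Dm ^ N * ∫⁻ z : Fin N → E,
          (∑ σ ∈ Fintype.piFinset t, ∏ i : Fin N, f (z i) (z (σ i)))
          ∂(Measure.pi fun _ : Fin N => μ) :=
        lintegral_const_mul' _ _ (ENNReal.pow_ne_top ENNReal.ofReal_ne_top)
    _ = Dm ^ N * ∑ σ ∈ Fintype.piFinset t,
          ∫⁻ z : Fin N → E, (∏ i : Fin N, f (z i) (z (σ i)))
          ∂(Measure.pi fun _ : Fin N => μ) := by
        rw [lintegral_finset_sum _ (fun σ _ => hgmeas σ)]
    _ ≤ Dm ^ N * ∑ _σ ∈ Fintype.piFinset t, (M ^ N * L ^ (N / 2)) := by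
        apply mul_le_mul_right
        apply Finset.sum_le_sum
        intro σ hσ
        have hσne : ∀ i, σ i ≠ i := fun i =>
          Finset.ne_of_mem_erase (Fintype.mem_piFinset.mp hσ i)
        have hpeel := peel_lemma μ f hfmeas M L hM1 hMt hL1 hLt hV hA hBB σ
          (Finset.univ.card) Finset.univ Finset.univ rfl subset_rfl
          (fun i _ => Finset.mem_univ _) (fun i _ => hσne i) (fun _ => (0 : E))
        rw [lintegral_eq_lmarginal_univ (fun _ => (0 : E))]
        simpa [Finset.card_univ] using hpeel
    _ = Dm ^ N * (((Fintype.piFinset t).card : ℝ≥0∞) * (M ^ N * L ^ (N / 2))) := by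
        rw [Finset.sum_const, nsmul_eq_mul]
    _ ≤ ENNReal.ofReal (δ ^ (-mβ * (N:ℝ) / 2)) *
          (ENNReal.ofReal ((N:ℝ) ^ N) *
            (ENNReal.ofReal (cM ^ N) *
              ENNReal.ofReal (cL' ^ N * Λ ^ ((N:ℝ) / 2)))) := by
        have p1 : Dm ^ N = ENNReal.ofReal (δ ^ (-mβ * (N:ℝ) / 2)) := by
          rw [hDm, ← ENNReal.ofReal_pow (by positivity)]
          congr 1
          rw [← Real.rpow_natCast (δ ^ (-(mβ / 2))) N, ← Real.rpow_mul hδ0.le]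
          congr 1; ring
        have p2 : ((Fintype.piFinset t).card : ℝ≥0∞) ≤ ENNReal.ofReal ((N:ℝ) ^ N) := by
          have hcard : (Fintype.piFinset t).card = (N - 1) ^ N := by
            rw [Fintype.card_piFinset]
            have : ∀ i : Fin N, (t i).card = N - 1 := by
              intro i
              rw [htdef]
              simp [Finset.card_erase_of_mem, Finset.card_univ]
            rw [Finset.prod_congr rfl fun i _ => this i]
            simp
          rw [hcard]
          have h1 : ((N - 1) ^ N : ℕ) ≤ (N ^ N : ℕ) :=
            Nat.pow_le_pow_left (Nat.sub_le N 1) N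
          calc (((N - 1) ^ N : ℕ) : ℝ≥0∞) ≤ ((N ^ N : ℕ) : ℝ≥0∞) := Nat.cast_le.mpr h1
            _ = ENNReal.ofReal ((N:ℝ) ^ N) := by
              rw [← ENNReal.ofReal_natCast]
              congr 1
              push_cast
              ring
        have p3 : M ^ N = ENNReal.ofReal (cM ^ N) := by
          rw [hM, ← ENNReal.ofReal_pow hcM0]
        have p4 : L ^ (N / 2) ≤ ENNReal.ofReal (cL' ^ N * Λ ^ ((N:ℝ) / 2)) := by
          rw [hL, ← ENNReal.ofReal_pow (by positivity)]
          apply ENNReal.ofReal_le_ofReal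
          calc (cL * Λ) ^ (N / 2 : ℕ)
              = (cL * Λ) ^ (((N / 2 : ℕ) : ℝ)) := by
                rw [Real.rpow_natCast]
            _ ≤ (cL * Λ) ^ ((N:ℝ) / 2) := by
                apply Real.rpow_le_rpow_of_exponent_le hcLΛ1
                refine le_trans Nat.cast_div_le ?_
                norm_num
            _ = cL ^ ((N:ℝ) / 2) * Λ ^ ((N:ℝ) / 2) := Real.mul_rpow hcL0 hΛ0.le
            _ ≤ cL' ^ ((N:ℝ) / 2) * Λ ^ ((N:ℝ) / 2) := by
                apply mul_le_mul_of_nonneg_right _ (by positivity)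
                exact Real.rpow_le_rpow hcL0 hcLcL' (by positivity)
            _ ≤ cL' ^ ((N:ℝ)) * Λ ^ ((N:ℝ) / 2) := by
                apply mul_le_mul_of_nonneg_right _ (by positivity)
                apply Real.rpow_le_rpow_of_exponent_le hcL'1
                have : (0:ℝ) ≤ (N:ℝ) := Nat.cast_nonneg N
                linarith
            _ = cL' ^ N * Λ ^ ((N:ℝ) / 2) := by
                rw [Real.rpow_natCast]
        rw [p1, p3]
        exact mul_le_mul_right (mul_le_mul' p2 (mul_le_mul_right p4 _)) _
    _ ≤ ENNReal.ofReal
          ((cM * cL') ^ N * (N : ℝ) ^ N * Λ ^ ((N : ℝ) / 2)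
            * δ ^ (-mβ * (N:ℝ) / 2)) := by
        rw [← ENNReal.ofReal_mul (by positivity), ← ENNReal.ofReal_mul (by positivity),
          ← ENNReal.ofReal_mul (by positivity)]
        apply ENNReal.ofReal_le_ofReal
        apply le_of_eq
        rw [mul_pow]
        ring
end

section
/- Let d ≥ 1 and let k : ℝ^d → ℝ be continuous with k(x) = 0 for |x| > 1. Define K : ℝ^d → ℝ by K(u) = ∫_0^∞ k(e^s u) ds for u ≠ 0 and K(0) = 0. Then K is Lebesgue integrable on ℝ^d and its Fourier transform satisfies, for every ξ ∈ ℝ^d, (𝓕K)(ξ) = ∫_0^1 v^{d−1} (𝓕k)(vξ) dv, where 𝓕f(ξ) = ∫_{ℝ^d} f(u) e^{−2πi⟨u,ξ⟩} du. -/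
open MeasureTheory Real Set
open scoped RealInnerProductSpace

private lemma scale_int {F : Type*} [NormedAddCommGroup F] [NormedSpace ℝ F] {d : ℕ}
    (f : EuclideanSpace ℝ (Fin d) → F) (s : ℝ) :
    ∫ x, f (Real.exp s • x) = Real.exp (-(d * s)) • ∫ x, f x := by
  rw [MeasureTheory.Measure.integral_comp_smul volume f (Real.exp s)]
  congr 1
  rw [finrank_euclideanSpace_fin, ← Real.exp_nat_mul, ← Real.exp_neg]
  exact abs_of_pos (Real.exp_pos _)

private lemma exp_neg_image : (fun s : ℝ => Real.exp (-s)) '' Set.Ioi 0 = Set.Ioo 0 1 := by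
  ext v
  constructor
  · rintro ⟨s, hs, rfl⟩
    refine ⟨Real.exp_pos _, ?_⟩
    calc Real.exp (-s) < Real.exp 0 := Real.exp_lt_exp.2 (by simpa using hs)
    _ = 1 := Real.exp_zero
  · rintro ⟨h1, h2⟩
    exact ⟨-Real.log v, by simpa using Real.log_neg h1 h2, by simp [Real.exp_log h1]⟩

/-- **Fourier transform of the ⋆-scale invariant covariance kernel.**
If `k : ℝ^d → ℝ` is continuous and vanishes for `|x| > 1`, and
`K(u) = ∫_0^∞ k(e^s u) ds` for `u ≠ 0`, `K(0) = 0`, then `K` is integrable and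
`𝓕K(ξ) = ∫_0^1 v^{d−1} 𝓕k(vξ) dv` (with the convention
`𝓕f(ξ) = ∫ f(u) e^{−2πi⟨u,ξ⟩} du`). -/
theorem stmt_9 (d : ℕ) (hd : 1 ≤ d) (k : EuclideanSpace ℝ (Fin d) → ℝ)
    (hk : Continuous k) (hksupp : ∀ x : EuclideanSpace ℝ (Fin d), 1 < ‖x‖ → k x = 0)
    (K : EuclideanSpace ℝ (Fin d) → ℝ) (hK0 : K 0 = 0)
    (hK : ∀ u : EuclideanSpace ℝ (Fin d), u ≠ 0 →
      K u = ∫ s in Set.Ioi (0 : ℝ), k (Real.exp s • u)) :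
    Integrable K ∧
    ∀ ξ : EuclideanSpace ℝ (Fin d),
      FourierTransform.fourier (fun u => (K u : ℂ)) ξ
        = ∫ v in (0 : ℝ)..1,
            ((v : ℂ) ^ (d - 1)) * FourierTransform.fourier (fun x => (k x : ℂ)) (v • ξ) := by
  have hdpos : (0:ℝ) < d := by exact_mod_cast hd
  have hcs : HasCompactSupport k :=
    HasCompactSupport.intro (isCompact_closedBall (0 : EuclideanSpace ℝ (Fin d)) 1)
      (fun x hx => hksupp x (by simpa [Metric.mem_closedBall, dist_zero_right, not_le] using hx))
  have hki : Integrable k := hk.integrable_of_hasCompactSupport hcs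
  haveI : Nontrivial (EuclideanSpace ℝ (Fin d)) := by
    refine nontrivial_of_ne (EuclideanSpace.single ⟨0, hd⟩ (1:ℝ)) 0 ?_
    intro h
    have := congrArg (fun v => v ⟨0, hd⟩) h
    simpa using this
  have hae : ∀ᵐ u : EuclideanSpace ℝ (Fin d), u ≠ 0 := by
    rw [ae_iff]
    simp only [ne_eq, not_not, Set.setOf_eq_eq_singleton]
    exact measure_singleton 0
  -- product integrability of (u,s) ↦ k (e^s • u)
  have hcont2 : Continuous (fun p : EuclideanSpace ℝ (Fin d) × ℝ => k (Real.exp p.2 • p.1)) :=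
    hk.comp ((Real.continuous_exp.comp continuous_snd).smul continuous_fst)
  have hfm : AEStronglyMeasurable (fun p : EuclideanSpace ℝ (Fin d) × ℝ => k (Real.exp p.2 • p.1))
      ((volume : Measure (EuclideanSpace ℝ (Fin d))).prod (volume.restrict (Set.Ioi 0))) :=
    hcont2.aestronglyMeasurable
  have hprod : Integrable (fun p : EuclideanSpace ℝ (Fin d) × ℝ => k (Real.exp p.2 • p.1))
      ((volume : Measure (EuclideanSpace ℝ (Fin d))).prod (volume.restrict (Set.Ioi 0))) := by
    rw [integrable_prod_iff' hfm]
    constructor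
    · exact Filter.Eventually.of_forall fun s =>
        (MeasureTheory.integrable_comp_smul_iff volume k (Real.exp_ne_zero s)).2 hki
    · have heq : (fun s : ℝ => ∫ u, ‖k (Real.exp s • u)‖)
          = fun s => Real.exp (-(d * s)) * ∫ u, ‖k u‖ := by
        funext s
        simpa [smul_eq_mul] using scale_int (fun x => ‖k x‖) s
      rw [heq]
      have := (exp_neg_integrableOn_Ioi 0 hdpos).mul_const (∫ u, ‖k u‖)
      simpa [neg_mul] using this
  have hKae : K =ᵐ[volume] fun u => ∫ s in Set.Ioi (0:ℝ), k (Real.exp s • u) := by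
    filter_upwards [hae] with u hu using hK u hu
  have hKint : Integrable K := (hprod.integral_prod_left).congr hKae.symm
  refine ⟨hKint, fun ξ => ?_⟩
  set c : EuclideanSpace ℝ (Fin d) → ℂ :=
    fun u => Complex.exp ((↑(-2 * π * ⟪u, ξ⟫) * Complex.I)) with hc
  have hcnorm : ∀ u, ‖c u‖ = 1 := fun u => by
    rw [hc]; exact Complex.norm_exp_ofReal_mul_I _
  have hccont : Continuous c := by
    exact Complex.continuous_exp.comp ((Complex.continuous_ofReal.comp
      (continuous_const.mul (continuous_id.inner continuous_const))).mul continuous_const)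
  have hgc : Continuous (fun p : EuclideanSpace ℝ (Fin d) × ℝ =>
      c p.1 * (k (Real.exp p.2 • p.1) : ℂ)) :=
    (hccont.comp continuous_fst).mul (Complex.continuous_ofReal.comp hcont2)
  have hgint : Integrable (fun p : EuclideanSpace ℝ (Fin d) × ℝ =>
      c p.1 * (k (Real.exp p.2 • p.1) : ℂ))
      ((volume : Measure (EuclideanSpace ℝ (Fin d))).prod (volume.restrict (Set.Ioi 0))) := by
    refine hprod.norm.mono' hgc.aestronglyMeasurable ?_
    refine Filter.Eventually.of_forall fun p => ?_
    rw [norm_mul, hcnorm, one_mul, Complex.norm_real]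
  have step1 : FourierTransform.fourier (fun u => (K u : ℂ)) ξ
      = ∫ u, ∫ s in Set.Ioi (0:ℝ), c u * (k (Real.exp s • u) : ℂ) := by
    rw [Real.fourier_eq']
    refine integral_congr_ae ?_
    filter_upwards [hae] with u hu
    rw [hK u hu, MeasureTheory.integral_const_mul, smul_eq_mul]
    congr 1
    exact (integral_ofReal (𝕜 := ℂ)).symm
  have step3 : ∀ s : ℝ, (∫ u, c u * (k (Real.exp s • u) : ℂ))
      = Real.exp (-(d * s)) • FourierTransform.fourier (fun x => (k x : ℂ)) (Real.exp (-s) • ξ) := by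
    intro s
    have h1 : (fun u : EuclideanSpace ℝ (Fin d) => c u * (k (Real.exp s • u) : ℂ))
        = fun u => (fun x => c (Real.exp (-s) • x) * (k x : ℂ)) (Real.exp s • u) := by
      funext u
      simp only []
      congr 2
      rw [smul_smul, ← Real.exp_add]
      norm_num
    have hpoint : ∀ x : EuclideanSpace ℝ (Fin d), c (Real.exp (-s) • x)
        = Complex.exp ((↑(-2 * π * ⟪x, Real.exp (-s) • ξ⟫) * Complex.I)) := by
      intro x
      simp only [hc]
      rw [real_inner_smul_left, real_inner_smul_right]
    rw [h1, scale_int (fun x => c (Real.exp (-s) • x) * (k x : ℂ)) s,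
      Real.fourier_eq']
    congr 1
    refine integral_congr_ae (Filter.Eventually.of_forall fun x => ?_)
    simp only [smul_eq_mul, hpoint x]
  have hderiv : ∀ s ∈ Set.Ioi (0:ℝ), HasDerivWithinAt (fun s : ℝ => Real.exp (-s))
      (-Real.exp (-s)) (Set.Ioi 0) s := by
    intro s _
    have := ((Real.hasDerivAt_exp (-s)).comp s (hasDerivAt_neg s)).hasDerivWithinAt
      (s := Set.Ioi (0:ℝ))
    simpa [Function.comp_def, mul_comm] using this
  have hinj : Set.InjOn (fun s : ℝ => Real.exp (-s)) (Set.Ioi 0) := fun a _ b _ h =>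
    neg_injective (Real.exp_injective h)
  have hsub := integral_image_eq_integral_abs_deriv_smul measurableSet_Ioi hderiv hinj
      (fun v : ℝ => ((v:ℂ) ^ (d-1)) * FourierTransform.fourier (fun x => (k x : ℂ)) (v • ξ))
  rw [exp_neg_image] at hsub
  have hpt : ∀ s : ℝ, |(-Real.exp (-s))| •
        (((Real.exp (-s) : ℝ) : ℂ) ^ (d-1) *
          FourierTransform.fourier (fun x => (k x : ℂ)) (Real.exp (-s) • ξ))
      = Real.exp (-(d * s)) • FourierTransform.fourier (fun x => (k x : ℂ)) (Real.exp (-s) • ξ) := by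
    intro s
    rw [abs_neg, abs_of_pos (Real.exp_pos _), Complex.real_smul, Complex.real_smul, ← mul_assoc,
      ← Complex.ofReal_pow, ← Complex.ofReal_mul, ← pow_succ']
    congr 2
    rw [Nat.sub_add_cancel hd, ← Real.exp_nat_mul]
    congr 1
    ring
  calc FourierTransform.fourier (fun u => (K u : ℂ)) ξ
      = ∫ u, ∫ s in Set.Ioi (0:ℝ), c u * (k (Real.exp s • u) : ℂ) := step1
    _ = ∫ s in Set.Ioi (0:ℝ), ∫ u, c u * (k (Real.exp s • u) : ℂ) :=
        integral_integral_swap hgint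
    _ = ∫ s in Set.Ioi (0:ℝ), Real.exp (-(d * s)) •
          FourierTransform.fourier (fun x => (k x : ℂ)) (Real.exp (-s) • ξ) :=
        integral_congr_ae (Filter.Eventually.of_forall fun s => step3 s)
    _ = ∫ v in Set.Ioo (0:ℝ) 1,
          ((v:ℂ) ^ (d-1)) * FourierTransform.fourier (fun x => (k x : ℂ)) (v • ξ) := by
        rw [hsub]
        exact integral_congr_ae (Filter.Eventually.of_forall fun s => (hpt s).symm)
    _ = ∫ v in (0:ℝ)..1,
          ((v:ℂ) ^ (d-1)) * FourierTransform.fourier (fun x => (k x : ℂ)) (v • ξ) := by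
        rw [intervalIntegral.integral_of_le zero_le_one, integral_Ioc_eq_integral_Ioo]
end

section
/- Let d ≥ 1 and let h : ℝ^d → ℝ be continuous with h ≥ 0, h(0) > 0, and h(ξ) ≤ C₀ (1 + |ξ|²)^{−s} for all ξ ∈ ℝ^d, for some constants C₀ > 0 and s > (d+1)/2. Then there exist constants c, C > 0 such that for every ξ ∈ ℝ^d, c (1 + |ξ|²)^{−d/2} ≤ ∫_0^1 v^{d−1} h(vξ) dv ≤ C (1 + |ξ|²)^{−d/2}. -/
open intervalIntegral Real

lemma aux_contOn (t p : ℝ) (ht : 0 < t) :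
    ContinuousOn (fun v : ℝ => (1 + t * v) ^ (-p)) (Set.Icc 0 1) := by
  apply ContinuousOn.rpow_const
  · exact (continuousOn_const.add (continuousOn_const.mul continuousOn_id))
  · intro x hx
    left
    have : 0 < 1 + t * x := by nlinarith [hx.1]
    exact this.ne'

lemma aux_int (t p : ℝ) (ht : 0 < t) (hp : 1 < p) :
    ∫ v in (0:ℝ)..1, (1 + t * v) ^ (-p) ≤ 1 / ((p - 1) * t) := by
  have hpos : ∀ v : ℝ, v ∈ Set.Icc (0:ℝ) 1 → 0 < 1 + t * v := by
    intro v hv; nlinarith [hv.1]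
  set F : ℝ → ℝ := fun v => -(1 / ((p - 1) * t)) * (1 + t * v) ^ (1 - p) with hF
  have hderiv : ∀ x ∈ Set.uIcc (0:ℝ) 1, HasDerivAt F ((1 + t * x) ^ (-p)) x := by
    intro x hx
    rw [Set.uIcc_of_le (by norm_num : (0:ℝ) ≤ 1)] at hx
    have hx0 : 0 < 1 + t * x := hpos x hx
    have h1 : HasDerivAt (fun v : ℝ => 1 + t * v) t x := by
      simpa using ((hasDerivAt_id x).const_mul t).const_add 1
    have h2 : HasDerivAt (fun v : ℝ => (1 + t * v) ^ (1 - p))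
        ((1 - p) * (1 + t * x) ^ (1 - p - 1) * t) x :=
      by have := (Real.hasDerivAt_rpow_const (x := 1 + t * x) (p := 1 - p) (Or.inl hx0.ne')).comp x h1; exact this
    have := h2.const_mul (-(1 / ((p - 1) * t)))
    refine this.congr_deriv ?_
    have he : 1 - p - 1 = -p := by ring
    rw [he]
    have h1 : p - 1 ≠ 0 := sub_ne_zero.mpr (ne_of_gt hp)
    have h2 : t ≠ 0 := ht.ne'
    field_simp
    ring
  have hint : IntervalIntegrable (fun v : ℝ => (1 + t * v) ^ (-p))
      MeasureTheory.volume 0 1 := by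
    apply ContinuousOn.intervalIntegrable
    rw [Set.uIcc_of_le (by norm_num : (0:ℝ) ≤ 1)]
    exact aux_contOn t p ht
  rw [intervalIntegral.integral_eq_sub_of_hasDerivAt hderiv hint]
  have h1p : (0:ℝ) < (p - 1) * t := mul_pos (by linarith) ht
  have ha : (0:ℝ) < 1 / ((p - 1) * t) := by positivity
  have hnn : 0 ≤ (1 + t * 1) ^ (1 - p) := Real.rpow_nonneg (by nlinarith) _
  simp only [hF, mul_zero, add_zero, Real.one_rpow]
  nlinarith [mul_nonneg ha.le hnn]

set_option maxHeartbeats 1000000 in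
/-- **Two-sided bound on the ⋆-scale invariant Fourier symbol.**
If `h : ℝ^d → ℝ` is continuous, nonnegative, `h(0) > 0` and
`h(ξ) ≤ C₀ (1+|ξ|²)^{−s}` with `s > (d+1)/2`, then there are `c, C > 0` with
`c (1+|ξ|²)^{−d/2} ≤ ∫_0^1 v^{d−1} h(vξ) dv ≤ C (1+|ξ|²)^{−d/2}` for all `ξ`. -/
theorem stmt_10 (d : ℕ) (hd : 1 ≤ d) (h : EuclideanSpace ℝ (Fin d) → ℝ)
    (hcont : Continuous h) (hnn : ∀ ξ, 0 ≤ h ξ) (h0 : 0 < h 0)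
    (C₀ s : ℝ) (hC₀ : 0 < C₀) (hs : ((d : ℝ) + 1) / 2 < s)
    (hdecay : ∀ ξ : EuclideanSpace ℝ (Fin d), h ξ ≤ C₀ * (1 + ‖ξ‖ ^ 2) ^ (-s)) :
    ∃ c C : ℝ, 0 < c ∧ 0 < C ∧ ∀ ξ : EuclideanSpace ℝ (Fin d),
      c * (1 + ‖ξ‖ ^ 2) ^ (-(d : ℝ) / 2)
          ≤ (∫ v in (0 : ℝ)..1, v ^ (d - 1) * h (v • ξ)) ∧
      (∫ v in (0 : ℝ)..1, v ^ (d - 1) * h (v • ξ))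
          ≤ C * (1 + ‖ξ‖ ^ 2) ^ (-(d : ℝ) / 2) := by
  have hε : 0 < h 0 / 2 := by linarith
  obtain ⟨δ, hδpos, hball⟩ : ∃ δ > 0, ∀ η : EuclideanSpace ℝ (Fin d),
      ‖η‖ ≤ δ → h 0 / 2 ≤ h η := by
    have hca : ContinuousAt h 0 := hcont.continuousAt
    rw [Metric.continuousAt_iff] at hca
    obtain ⟨δ, hδ, hd2⟩ := hca (h 0 / 2) hε
    refine ⟨δ / 2, by linarith, fun η hη => ?_⟩
    have hdist : dist η 0 < δ := by rw [dist_zero_right]; linarith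
    have := hd2 hdist
    rw [Real.dist_eq] at this
    have := abs_lt.mp this
    linarith [this.1]
  have hdR : (1:ℝ) ≤ (d:ℝ) := by exact_mod_cast hd
  set p : ℝ := 2 * s - ((d:ℝ) - 1) with hpdef
  have hp2 : 2 < p := by simp only [hpdef]; linarith
  have hs0 : 0 < s := by linarith
  have hminpos : (0:ℝ) < min 1 δ := lt_min one_pos hδpos
  have h2half : (0:ℝ) < (2:ℝ) ^ (-(1:ℝ)/2) := Real.rpow_pos_of_pos two_pos _
  set c : ℝ := (h 0 / 2) / d * (min 1 δ * (2:ℝ) ^ (-(1:ℝ)/2)) ^ d with hcdef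
  set C : ℝ := C₀ * 2 ^ ((d:ℝ)/2) * (1 + 2 ^ s / (p - 1)) with hCdef
  have hdpos : (0:ℝ) < (d:ℝ) := by linarith
  have hcpos : 0 < c := by
    have h1 := hminpos
    positivity
  have hXpos : (0:ℝ) < 2 ^ s / (p - 1) := by
    apply div_pos (Real.rpow_pos_of_pos two_pos _); linarith
  have hCpos : 0 < C := by positivity
  refine ⟨c, C, hcpos, hCpos, fun ξ => ?_⟩
  set t := ‖ξ‖ with htdef
  have ht0 : 0 ≤ t := norm_nonneg ξ
  have hBpos : (0:ℝ) < 1 + t ^ 2 := by positivity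
  have hfc : Continuous (fun v : ℝ => v ^ (d - 1) * h (v • ξ)) :=
    (continuous_pow _).mul (hcont.comp (continuous_id.smul continuous_const))
  have hfi : ∀ a b : ℝ, IntervalIntegrable (fun v : ℝ => v ^ (d - 1) * h (v • ξ))
      MeasureTheory.volume a b := fun a b => hfc.intervalIntegrable a b
  have hnrm : ∀ v : ℝ, 0 ≤ v → ‖v • ξ‖ = v * t := by
    intro v hv
    rw [norm_smul, Real.norm_eq_abs, abs_of_nonneg hv]
  constructor
  · -- lower bound
    set r : ℝ := min 1 (δ / (1 + t)) with hrdef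
    have h1t : (0:ℝ) < 1 + t := by linarith
    have hrpos : 0 < r := lt_min one_pos (by positivity)
    have hr1 : r ≤ 1 := min_le_left _ _
    have hsplit : (∫ v in (0:ℝ)..1, v ^ (d - 1) * h (v • ξ))
        = (∫ v in (0:ℝ)..r, v ^ (d - 1) * h (v • ξ))
          + ∫ v in r..1, v ^ (d - 1) * h (v • ξ) :=
      (intervalIntegral.integral_add_adjacent_intervals (hfi 0 r) (hfi r 1)).symm
    have htail : 0 ≤ ∫ v in r..1, v ^ (d - 1) * h (v • ξ) :=
      intervalIntegral.integral_nonneg hr1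
        (fun v hv => mul_nonneg (pow_nonneg (hrpos.le.trans hv.1) _) (hnn _))
    have hmain : (h 0 / 2) * (r ^ d / d) ≤ ∫ v in (0:ℝ)..r, v ^ (d - 1) * h (v • ξ) := by
      have hmono : (∫ v in (0:ℝ)..r, (h 0 / 2) * v ^ (d - 1))
          ≤ ∫ v in (0:ℝ)..r, v ^ (d - 1) * h (v • ξ) := by
        apply intervalIntegral.integral_mono_on hrpos.le
        · exact (continuous_const.mul (continuous_pow _)).intervalIntegrable _ _
        · exact hfi 0 r
        · intro v hv
          rw [mul_comm]
          refine mul_le_mul_of_nonneg_left ?_ (pow_nonneg hv.1 _)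
          apply hball
          rw [hnrm v hv.1]
          have h1 : v ≤ δ / (1 + t) := le_trans hv.2 (min_le_right _ _)
          have h2 : v * (1 + t) ≤ δ := (le_div_iff₀ h1t).mp h1
          nlinarith [hv.1]
      have hcalc : (∫ v in (0:ℝ)..r, (h 0 / 2) * v ^ (d - 1))
          = (h 0 / 2) * (r ^ d / d) := by
        rw [intervalIntegral.integral_const_mul, integral_pow]
        have e1 : d - 1 + 1 = d := Nat.sub_add_cancel hd
        rw [e1, zero_pow (by omega : d ≠ 0)]
        rw [Nat.cast_sub hd]
        push_cast
        ring_nf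
      linarith [hmono, hcalc.symm.le]
    have hq : ((1 + t ^ 2) ^ (-(1:ℝ)/2)) ^ d = (1 + t ^ 2) ^ (-(d:ℝ)/2) := by
      rw [← Real.rpow_natCast ((1 + t ^ 2) ^ (-(1:ℝ)/2)) d, ← Real.rpow_mul hBpos.le]
      congr 1; ring
    have hkey : min 1 δ * (2:ℝ) ^ (-(1:ℝ)/2) * (1 + t ^ 2) ^ (-(1:ℝ)/2) ≤ r := by
      have hA : (2:ℝ) ^ (-(1:ℝ)/2) * (1 + t ^ 2) ^ (-(1:ℝ)/2) ≤ 1 / (1 + t) := by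
        have e1 : (2:ℝ) ^ (-(1:ℝ)/2) * (1 + t ^ 2) ^ (-(1:ℝ)/2)
            = (2 * (1 + t ^ 2)) ^ (-(1:ℝ)/2) :=
          (Real.mul_rpow (by norm_num) hBpos.le).symm
        have e2 : (((1 + t) ^ 2 : ℝ)) ^ (-(1:ℝ)/2) = 1 / (1 + t) := by
          rw [← Real.rpow_natCast (1 + t) 2, ← Real.rpow_mul h1t.le]
          norm_num
          rw [Real.rpow_neg_one]
        rw [e1, ← e2]
        exact Real.rpow_le_rpow_of_nonpos (by positivity) (by nlinarith [sq_nonneg (1 - t)]) (by norm_num)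
      have step : min 1 δ * ((2:ℝ) ^ (-(1:ℝ)/2) * (1 + t ^ 2) ^ (-(1:ℝ)/2))
          ≤ min 1 δ * (1 / (1 + t)) :=
        mul_le_mul_of_nonneg_left hA hminpos.le
      have step2 : min 1 δ * (1 / (1 + t)) ≤ r := by
        apply le_min
        · apply mul_le_one₀ (min_le_left _ _) (by positivity)
          rw [div_le_one h1t]; linarith
        · rw [mul_one_div]
          gcongr
          exact min_le_right _ _
      calc min 1 δ * (2:ℝ) ^ (-(1:ℝ)/2) * (1 + t ^ 2) ^ (-(1:ℝ)/2)
          = min 1 δ * ((2:ℝ) ^ (-(1:ℝ)/2) * (1 + t ^ 2) ^ (-(1:ℝ)/2)) := by ring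
        _ ≤ min 1 δ * (1 / (1 + t)) := step
        _ ≤ r := step2
    have hpow : (min 1 δ * (2:ℝ) ^ (-(1:ℝ)/2)) ^ d * (1 + t ^ 2) ^ (-(d:ℝ)/2)
        ≤ r ^ d := by
      rw [← hq, ← mul_pow]
      apply pow_le_pow_left₀ _ hkey
      have := Real.rpow_nonneg hBpos.le (-(1:ℝ)/2)
      positivity
    calc c * (1 + t ^ 2) ^ (-(d:ℝ)/2)
        = (h 0 / 2) / d * ((min 1 δ * (2:ℝ) ^ (-(1:ℝ)/2)) ^ d
            * (1 + t ^ 2) ^ (-(d:ℝ)/2)) := by rw [hcdef]; ring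
      _ ≤ (h 0 / 2) / d * r ^ d := by
          exact mul_le_mul_of_nonneg_left hpow (by positivity)
      _ = (h 0 / 2) * (r ^ d / d) := by ring
      _ ≤ ∫ v in (0:ℝ)..r, v ^ (d - 1) * h (v • ξ) := hmain
      _ ≤ ∫ v in (0:ℝ)..1, v ^ (d - 1) * h (v • ξ) := by rw [hsplit]; linarith
  · -- upper bound
    rcases le_or_gt t 1 with hle | hgt
    · -- small frequency
      have hbound : (∫ v in (0:ℝ)..1, v ^ (d - 1) * h (v • ξ)) ≤ C₀ := by
        have hpt : ∀ v ∈ Set.Icc (0:ℝ) 1, v ^ (d - 1) * h (v • ξ) ≤ C₀ := by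
          intro v hv
          have h1 : v ^ (d - 1) ≤ 1 := pow_le_one₀ hv.1 hv.2
          have h2 : h (v • ξ) ≤ C₀ := by
            refine le_trans (hdecay _) ?_
            have : (1 + ‖v • ξ‖ ^ 2) ^ (-s) ≤ 1 :=
              Real.rpow_le_one_of_one_le_of_nonpos
                (by nlinarith [sq_nonneg ‖v • ξ‖]) (by linarith)
            nlinarith
          calc v ^ (d - 1) * h (v • ξ) ≤ 1 * C₀ :=
                mul_le_mul h1 h2 (hnn _) one_pos.le
            _ = C₀ := one_mul _
        have := intervalIntegral.integral_mono_on (by norm_num : (0:ℝ) ≤ 1)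
          (hfi 0 1) (intervalIntegrable_const) hpt
        simpa using this
      have h2d : (2:ℝ) ^ (-(d:ℝ)/2) ≤ (1 + t ^ 2) ^ (-(d:ℝ)/2) :=
        Real.rpow_le_rpow_of_nonpos hBpos (by nlinarith) (by linarith)
      have hCe : C₀ * 2 ^ ((d:ℝ)/2) * 2 ^ (-(d:ℝ)/2) = C₀ := by
        have e0 : (d:ℝ)/2 + -(d:ℝ)/2 = 0 := by ring
        rw [mul_assoc, ← Real.rpow_add two_pos, e0, Real.rpow_zero, mul_one]
      calc (∫ v in (0:ℝ)..1, v ^ (d - 1) * h (v • ξ)) ≤ C₀ := hbound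
        _ = C₀ * 2 ^ ((d:ℝ)/2) * 2 ^ (-(d:ℝ)/2) := hCe.symm
        _ ≤ C₀ * 2 ^ ((d:ℝ)/2) * (1 + t ^ 2) ^ (-(d:ℝ)/2) := by
            exact mul_le_mul_of_nonneg_left h2d (by positivity)
        _ ≤ C * (1 + t ^ 2) ^ (-(d:ℝ)/2) := by
            apply mul_le_mul_of_nonneg_right _ (Real.rpow_nonneg hBpos.le _)
            rw [hCdef]
            nlinarith [mul_pos hC₀ (Real.rpow_pos_of_pos two_pos ((d:ℝ)/2))]
    · -- large frequency
      have ht1 : (1:ℝ) ≤ t := hgt.le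
      have htpos : (0:ℝ) < t := by linarith
      set K : ℝ := C₀ * 2 ^ s / t ^ (d - 1) with hKdef
      have hKpos : 0 < K := by positivity
      have hpt : ∀ v ∈ Set.Icc (0:ℝ) 1,
          v ^ (d - 1) * h (v • ξ) ≤ K * (1 + t * v) ^ (-p) := by
        intro v hv
        have hv0 : 0 ≤ v := hv.1
        have hapos : (0:ℝ) < 1 + t * v := by nlinarith
        have step1 : h (v • ξ) ≤ C₀ * (1 + (v * t) ^ 2) ^ (-s) := by
          have := hdecay (v • ξ)
          rwa [hnrm v hv0] at this
        have step2 : (1 + (v * t) ^ 2) ^ (-s) ≤ 2 ^ s * (1 + t * v) ^ (-(2 * s)) := by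
          have hsq : ((1 + t * v):ℝ) ^ 2 ≤ 2 * (1 + (v * t) ^ 2) := by nlinarith [sq_nonneg (1 - t * v)]
          have hmr := Real.rpow_le_rpow_of_nonpos (by positivity : (0:ℝ) < (1 + t * v) ^ 2)
            hsq (by linarith : -s ≤ 0)
          have e1 : ((2:ℝ) * (1 + (v * t) ^ 2)) ^ (-s)
              = 2 ^ (-s) * (1 + (v * t) ^ 2) ^ (-s) :=
            Real.mul_rpow (by norm_num) (by positivity)
          have e2 : (((1 + t * v):ℝ) ^ 2) ^ (-s) = (1 + t * v) ^ (-(2 * s)) := by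
            rw [← Real.rpow_natCast (1 + t * v) 2, ← Real.rpow_mul hapos.le]
            norm_num
          rw [e1, e2] at hmr
          have h2s : (0:ℝ) < 2 ^ (-s) := Real.rpow_pos_of_pos two_pos _
          have h2inv : (2:ℝ) ^ s * 2 ^ (-s) = 1 := by
            rw [← Real.rpow_add two_pos]; norm_num
          calc (1 + (v * t) ^ 2) ^ (-s)
              = 2 ^ s * (2 ^ (-s) * (1 + (v * t) ^ 2) ^ (-s)) := by
                rw [← mul_assoc, h2inv, one_mul]
            _ ≤ 2 ^ s * (1 + t * v) ^ (-(2 * s)) := by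
                exact mul_le_mul_of_nonneg_left hmr (Real.rpow_pos_of_pos two_pos s).le
        have step3 : v ^ (d - 1) ≤ (1 + t * v) ^ (d - 1) / t ^ (d - 1) := by
          have hvle : v ≤ (1 + t * v) / t := by
            rw [le_div_iff₀ htpos]; nlinarith
          calc v ^ (d - 1) ≤ ((1 + t * v) / t) ^ (d - 1) := pow_le_pow_left₀ hv0 hvle _
            _ = (1 + t * v) ^ (d - 1) / t ^ (d - 1) := div_pow _ _ _
        have hcomb : ((1 + t * v) ^ (d - 1) : ℝ) * (1 + t * v) ^ (-(2 * s))
            = (1 + t * v) ^ (-p) := by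
          rw [← Real.rpow_natCast (1 + t * v) (d - 1), ← Real.rpow_add hapos]
          congr 1
          rw [Nat.cast_sub hd]
          simp only [hpdef]
          push_cast
          ring
        have hnn2 : (0:ℝ) ≤ h (v • ξ) := hnn _
        calc v ^ (d - 1) * h (v • ξ)
            ≤ ((1 + t * v) ^ (d - 1) / t ^ (d - 1)) * (C₀ * (1 + (v * t) ^ 2) ^ (-s)) := by
              apply mul_le_mul step3 step1 hnn2 (by positivity)
          _ ≤ ((1 + t * v) ^ (d - 1) / t ^ (d - 1)) * (C₀ * (2 ^ s * (1 + t * v) ^ (-(2 * s)))) := by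
              apply mul_le_mul_of_nonneg_left _ (by positivity)
              exact mul_le_mul_of_nonneg_left step2 hC₀.le
          _ = K * ((1 + t * v) ^ (d - 1) * (1 + t * v) ^ (-(2 * s))) := by
              rw [hKdef]; ring
          _ = K * (1 + t * v) ^ (-p) := by rw [hcomb]
      have hintK : IntervalIntegrable (fun v : ℝ => K * (1 + t * v) ^ (-p))
          MeasureTheory.volume 0 1 := by
        apply ContinuousOn.intervalIntegrable
        rw [Set.uIcc_of_le (by norm_num : (0:ℝ) ≤ 1)]
        exact continuousOn_const.mul (aux_contOn t p htpos)
      have hmono := intervalIntegral.integral_mono_on (by norm_num : (0:ℝ) ≤ 1)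
        (hfi 0 1) hintK hpt
      have hIbound : (∫ v in (0:ℝ)..1, K * (1 + t * v) ^ (-p))
          ≤ K * (1 / ((p - 1) * t)) := by
        rw [intervalIntegral.integral_const_mul]
        exact mul_le_mul_of_nonneg_left (aux_int t p htpos (by linarith)) hKpos.le
      have hKfin : K * (1 / ((p - 1) * t)) = C₀ * 2 ^ s / ((p - 1) * t ^ d) := by
        rw [hKdef]
        have : t ^ (d - 1) * t = t ^ d := by
          rw [← pow_succ, Nat.sub_add_cancel hd]
        field_simp
        rw [← this]
      have hfinal : C₀ * 2 ^ s / ((p - 1) * t ^ d) ≤ C * (1 + t ^ 2) ^ (-(d:ℝ)/2) := by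
        have htd : (0:ℝ) < t ^ d := by positivity
        have hp1 : (0:ℝ) < p - 1 := by linarith
        have e : ((2 * t ^ 2):ℝ) ^ (-(d:ℝ)/2) = 2 ^ (-(d:ℝ)/2) * (t ^ d)⁻¹ := by
          rw [Real.mul_rpow two_pos.le (sq_nonneg t)]
          congr 1
          rw [← Real.rpow_natCast t 2, ← Real.rpow_mul htpos.le]
          have he : ((2:ℕ):ℝ) * (-(d:ℝ)/2) = -(d:ℝ) := by push_cast; ring
          rw [he, Real.rpow_neg htpos.le, Real.rpow_natCast]
        have hmono2 : (2 * t ^ 2:ℝ) ^ (-(d:ℝ)/2) ≤ (1 + t ^ 2) ^ (-(d:ℝ)/2) :=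
          Real.rpow_le_rpow_of_nonpos hBpos (by nlinarith) (by linarith)
        rw [e] at hmono2
        have h2inv : (2:ℝ) ^ ((d:ℝ)/2) * 2 ^ (-(d:ℝ)/2) = 1 := by
          have e0 : (d:ℝ)/2 + -(d:ℝ)/2 = 0 := by ring
          rw [← Real.rpow_add two_pos, e0, Real.rpow_zero]
        calc C₀ * 2 ^ s / ((p - 1) * t ^ d)
            = (C₀ * (2 ^ s / (p - 1))) * (t ^ d)⁻¹ := by
              rw [div_eq_mul_inv, mul_inv]; ring
          _ ≤ (C₀ * (1 + 2 ^ s / (p - 1))) * (t ^ d)⁻¹ := by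
              apply mul_le_mul_of_nonneg_right _ (by positivity)
              nlinarith
          _ = C * (2 ^ (-(d:ℝ)/2) * (t ^ d)⁻¹) := by
              rw [hCdef]
              linear_combination (-(C₀ * (1 + 2 ^ s / (p - 1)) * (t ^ d)⁻¹)) * h2inv
          _ ≤ C * (1 + t ^ 2) ^ (-(d:ℝ)/2) :=
              mul_le_mul_of_nonneg_left hmono2 hCpos.le
      calc (∫ v in (0:ℝ)..1, v ^ (d - 1) * h (v • ξ))
          ≤ ∫ v in (0:ℝ)..1, K * (1 + t * v) ^ (-p) := hmono
        _ ≤ K * (1 / ((p - 1) * t)) := hIbound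
        _ = C₀ * 2 ^ s / ((p - 1) * t ^ d) := hKfin
        _ ≤ C * (1 + t ^ 2) ^ (-(d:ℝ)/2) := hfinal
end

section
/- Let d ≥ 1 and let h : ℝ^d → ℝ be continuously differentiable with ‖∇h(ξ)‖ ≤ C₀ (1 + |ξ|²)^{−s} for all ξ ∈ ℝ^d, for some constants C₀ > 0 and s > (d+1)/2. Then there exists a constant C > 0 such that for every ξ ∈ ℝ^d, ‖∫_0^1 v^d ∇h(vξ) dv‖ ≤ C (1 + |ξ|²)^{−(d+1)/2}. -/
/-- **Gradient bound for the ⋆-scale invariant Fourier symbol.**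
If `h : ℝ^d → ℝ` is `C¹` with `‖∇h(ξ)‖ ≤ C₀ (1+|ξ|²)^{−s}`, `s > (d+1)/2`,
then there is `C > 0` with
`‖∫_0^1 v^d ∇h(vξ) dv‖ ≤ C (1+|ξ|²)^{−(d+1)/2}` for all `ξ`. -/
theorem stmt_11 (d : ℕ) (hd : 1 ≤ d) (h : EuclideanSpace ℝ (Fin d) → ℝ)
    (hsmooth : ContDiff ℝ 1 h)
    (C₀ s : ℝ) (hC₀ : 0 < C₀) (hs : ((d : ℝ) + 1) / 2 < s)
    (hdecay : ∀ ξ : EuclideanSpace ℝ (Fin d),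
      ‖gradient h ξ‖ ≤ C₀ * (1 + ‖ξ‖ ^ 2) ^ (-s)) :
    ∃ C : ℝ, 0 < C ∧ ∀ ξ : EuclideanSpace ℝ (Fin d),
      ‖∫ v in (0 : ℝ)..1, v ^ d • gradient h (v • ξ)‖
        ≤ C * (1 + ‖ξ‖ ^ 2) ^ (-((d : ℝ) + 1) / 2) := by
  have h2s : 0 < 2 * s - (d : ℝ) - 1 := by linarith
  have hd1 : (0 : ℝ) < (d : ℝ) + 1 := by positivity
  have hg : Continuous (gradient h) := by
    have := hsmooth.continuous_fderiv one_ne_zero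
    exact (InnerProductSpace.toDual ℝ (EuclideanSpace ℝ (Fin d))).symm.continuous.comp this
  refine ⟨C₀ * (1 / ((d : ℝ) + 1) + 1 / (2 * s - (d : ℝ) - 1)), by positivity, fun ξ => ?_⟩
  set A : ℝ := 1 + ‖ξ‖ ^ 2 with hAdef
  have hA1 : 1 ≤ A := by nlinarith [sq_nonneg ‖ξ‖]
  have hA0 : 0 < A := by linarith
  set a : ℝ := A ^ (-(1 / 2) : ℝ) with hadef
  have ha0 : 0 < a := Real.rpow_pos_of_pos hA0 _
  have ha1 : a ≤ 1 := Real.rpow_le_one_of_one_le_of_nonpos hA1 (by norm_num)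
  have hf : Continuous (fun v : ℝ => v ^ d • gradient h (v • ξ)) := by
    exact (continuous_pow d).smul (hg.comp (continuous_id.smul continuous_const))
  -- pointwise norm formula
  have hnorm : ∀ v : ℝ, 0 ≤ v → ‖v ^ d • gradient h (v • ξ)‖
      ≤ C₀ * v ^ d * (1 + v ^ 2 * ‖ξ‖ ^ 2) ^ (-s) := by
    intro v hv
    rw [norm_smul, Real.norm_eq_abs, abs_pow, abs_of_nonneg hv]
    have h1 : ‖v • ξ‖ ^ 2 = v ^ 2 * ‖ξ‖ ^ 2 := by
      rw [norm_smul, mul_pow, Real.norm_eq_abs, sq_abs]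
    have := hdecay (v • ξ)
    rw [h1] at this
    calc v ^ d * ‖gradient h (v • ξ)‖ ≤ v ^ d * (C₀ * (1 + v ^ 2 * ‖ξ‖ ^ 2) ^ (-s)) :=
          mul_le_mul_of_nonneg_left this (by positivity)
      _ = C₀ * v ^ d * (1 + v ^ 2 * ‖ξ‖ ^ 2) ^ (-s) := by ring
  -- step 1 : bound by integral of norm, split
  have step1 : ‖∫ v in (0 : ℝ)..1, v ^ d • gradient h (v • ξ)‖
      ≤ (∫ v in (0 : ℝ)..a, ‖v ^ d • gradient h (v • ξ)‖)
        + ∫ v in a..1, ‖v ^ d • gradient h (v • ξ)‖ := by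
    rw [intervalIntegral.integral_add_adjacent_intervals
      (hf.norm.intervalIntegrable 0 a) (hf.norm.intervalIntegrable a 1)]
    exact intervalIntegral.norm_integral_le_integral_norm (by norm_num)
  -- step 2 : first piece
  have step2 : (∫ v in (0 : ℝ)..a, ‖v ^ d • gradient h (v • ξ)‖)
      ≤ C₀ / ((d : ℝ) + 1) * A ^ (-((d : ℝ) + 1) / 2) := by
    have mono : (∫ v in (0 : ℝ)..a, ‖v ^ d • gradient h (v • ξ)‖)
        ≤ ∫ v in (0 : ℝ)..a, C₀ * v ^ d := by
      apply intervalIntegral.integral_mono_on ha0.le (hf.norm.intervalIntegrable 0 a)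
        ((continuous_const.mul (continuous_pow d)).intervalIntegrable 0 a)
      intro v hv
      calc ‖v ^ d • gradient h (v • ξ)‖ ≤ C₀ * v ^ d * (1 + v ^ 2 * ‖ξ‖ ^ 2) ^ (-s) :=
            hnorm v hv.1
        _ ≤ C₀ * v ^ d * 1 := by
            apply mul_le_mul_of_nonneg_left _ (mul_nonneg hC₀.le (pow_nonneg hv.1 d))
            exact Real.rpow_le_one_of_one_le_of_nonpos (by nlinarith [sq_nonneg v, sq_nonneg ‖ξ‖]) (by linarith)
        _ = C₀ * v ^ d := mul_one _
    have hcomp : (∫ v in (0 : ℝ)..a, C₀ * v ^ d) = C₀ * (a ^ (d + 1) / (d + 1)) := by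
      rw [intervalIntegral.integral_const_mul, integral_pow]
      norm_num
    have hpow : a ^ (d + 1) = A ^ (-((d : ℝ) + 1) / 2) := by
      rw [hadef, ← Real.rpow_natCast (A ^ (-(1 / 2) : ℝ)) (d + 1), ← Real.rpow_mul hA0.le]
      congr 1
      push_cast
      ring
    rw [hcomp, hpow] at mono
    calc (∫ v in (0 : ℝ)..a, ‖v ^ d • gradient h (v • ξ)‖)
        ≤ C₀ * (A ^ (-((d : ℝ) + 1) / 2) / ((d : ℝ) + 1)) := by push_cast at mono ⊢; linarith
      _ = C₀ / ((d : ℝ) + 1) * A ^ (-((d : ℝ) + 1) / 2) := by ring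
  -- step 3 : second piece
  have step3 : (∫ v in a..1, ‖v ^ d • gradient h (v • ξ)‖)
      ≤ C₀ / (2 * s - (d : ℝ) - 1) * A ^ (-((d : ℝ) + 1) / 2) := by
    have mono : (∫ v in a..1, ‖v ^ d • gradient h (v • ξ)‖)
        ≤ ∫ v in a..1, C₀ * A ^ (-s) * v ^ ((d : ℝ) - 2 * s) := by
      apply intervalIntegral.integral_mono_on ha1 (hf.norm.intervalIntegrable a 1)
      · apply ContinuousOn.intervalIntegrable
        apply ContinuousOn.mul continuousOn_const
        apply ContinuousOn.rpow_const continuousOn_id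
        intro x hx
        rw [Set.uIcc_of_le ha1] at hx
        exact Or.inl (ne_of_gt (lt_of_lt_of_le ha0 hx.1))
      intro v hv
      have hv0 : 0 < v := lt_of_lt_of_le ha0 hv.1
      calc ‖v ^ d • gradient h (v • ξ)‖ ≤ C₀ * v ^ d * (1 + v ^ 2 * ‖ξ‖ ^ 2) ^ (-s) :=
            hnorm v hv0.le
        _ ≤ C₀ * v ^ d * (v ^ 2 * A) ^ (-s) := by
            apply mul_le_mul_of_nonneg_left _ (by positivity)
            apply Real.rpow_le_rpow_of_nonpos (by positivity) _ (by linarith)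
            have : v ^ 2 ≤ 1 := by nlinarith [hv.2]
            rw [hAdef]; nlinarith [sq_nonneg ‖ξ‖, sq_nonneg v]
        _ = C₀ * A ^ (-s) * v ^ ((d : ℝ) - 2 * s) := by
            rw [Real.mul_rpow (by positivity) hA0.le,
              ← Real.rpow_natCast v 2, ← Real.rpow_mul hv0.le,
              ← Real.rpow_natCast v d]
            rw [show C₀ * v ^ ((d : ℕ) : ℝ) * (v ^ (((2 : ℕ) : ℝ) * -s) * A ^ (-s))
                = C₀ * A ^ (-s) * (v ^ ((d : ℕ) : ℝ) * v ^ (((2 : ℕ) : ℝ) * -s)) from by ring,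
              ← Real.rpow_add hv0]
            congr 1
            push_cast
            ring
    have hr : ((d : ℝ) - 2 * s) ≠ -1 := by intro hc; rw [sub_eq_iff_eq_add] at hc; linarith
    have hcomp : (∫ v in a..1, v ^ ((d : ℝ) - 2 * s)) =
        ((1 : ℝ) ^ ((d : ℝ) - 2 * s + 1) - a ^ ((d : ℝ) - 2 * s + 1)) / ((d : ℝ) - 2 * s + 1) := by
      apply integral_rpow
      right
      refine ⟨hr, ?_⟩
      rw [Set.uIcc_of_le ha1]
      intro hc
      exact absurd hc.1 (not_le.mpr ha0)
    have hval : a ^ ((d : ℝ) - 2 * s + 1) = A ^ (-(1 / 2) * ((d : ℝ) - 2 * s + 1)) := by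
      rw [hadef, ← Real.rpow_mul hA0.le]
    have key : (∫ v in a..1, C₀ * A ^ (-s) * v ^ ((d : ℝ) - 2 * s))
        ≤ C₀ / (2 * s - (d : ℝ) - 1) * A ^ (-((d : ℝ) + 1) / 2) := by
      rw [intervalIntegral.integral_const_mul, hcomp, Real.one_rpow, hval]
      have hAexp : A ^ (-s) * A ^ (-(1 / 2) * ((d : ℝ) - 2 * s + 1)) = A ^ (-((d : ℝ) + 1) / 2) := by
        rw [← Real.rpow_add hA0]
        congr 1
        ring
      have h1 : (1 - A ^ (-(1 / 2) * ((d : ℝ) - 2 * s + 1))) / ((d : ℝ) - 2 * s + 1)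
          ≤ A ^ (-(1 / 2) * ((d : ℝ) - 2 * s + 1)) / (2 * s - (d : ℝ) - 1) := by
        rw [show ((d : ℝ) - 2 * s + 1) = -(2 * s - (d : ℝ) - 1) by ring, div_neg, ← neg_div,
          neg_sub]
        exact (div_le_div_iff_of_pos_right h2s).mpr (by linarith)
      calc C₀ * A ^ (-s) * ((1 - A ^ (-(1 / 2) * ((d : ℝ) - 2 * s + 1))) / ((d : ℝ) - 2 * s + 1))
          ≤ C₀ * A ^ (-s) * (A ^ (-(1 / 2) * ((d : ℝ) - 2 * s + 1)) / (2 * s - (d : ℝ) - 1)) := by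
            apply mul_le_mul_of_nonneg_left h1 (by positivity)
        _ = C₀ / (2 * s - (d : ℝ) - 1) * (A ^ (-s) * A ^ (-(1 / 2) * ((d : ℝ) - 2 * s + 1))) := by ring
        _ = C₀ / (2 * s - (d : ℝ) - 1) * A ^ (-((d : ℝ) + 1) / 2) := by rw [hAexp]
    exact le_trans mono key
  calc ‖∫ v in (0 : ℝ)..1, v ^ d • gradient h (v • ξ)‖
      ≤ (∫ v in (0 : ℝ)..a, ‖v ^ d • gradient h (v • ξ)‖)
        + ∫ v in a..1, ‖v ^ d • gradient h (v • ξ)‖ := step1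
    _ ≤ C₀ / ((d : ℝ) + 1) * A ^ (-((d : ℝ) + 1) / 2)
        + C₀ / (2 * s - (d : ℝ) - 1) * A ^ (-((d : ℝ) + 1) / 2) := add_le_add step2 step3
    _ = C₀ * (1 / ((d : ℝ) + 1) + 1 / (2 * s - (d : ℝ) - 1)) * A ^ (-((d : ℝ) + 1) / 2) := by ring
end

section
/- Let d ≥ 1 and let h : ℝ^d → ℝ be continuous with h ≥ 0, h(0) > 0, and h(ξ) ≤ C₀ (1 + |ξ|²)^{−s} for all ξ ∈ ℝ^d, for some constants C₀ > 0 and s > (d+1)/2. Then there exist constants c, C > 0 such that for every α ∈ (0, 1] and every ξ ∈ ℝ^d, c (1 + |ξ|²)^{−(d+α)/2} ≤ ∫_0^1 v^{d−1+α} h(vξ) dv ≤ C (1 + |ξ|²)^{−(d+α)/2}. -/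
set_option maxHeartbeats 1000000 in
/-- **Uniform two-sided bound on the symbol of `U_α = C_X − C_{Y^{(α)}}`.**
If `h : ℝ^d → ℝ` is continuous, nonnegative, `h(0) > 0` and
`h(ξ) ≤ C₀ (1+|ξ|²)^{−s}` with `s > (d+1)/2`, then there are `c, C > 0`
(independent of `α`) with
`c (1+|ξ|²)^{−(d+α)/2} ≤ ∫_0^1 v^{d−1+α} h(vξ) dv ≤ C (1+|ξ|²)^{−(d+α)/2}`
for all `α ∈ (0,1]` and all `ξ`. -/
theorem stmt_12 (d : ℕ) (hd : 1 ≤ d) (h : EuclideanSpace ℝ (Fin d) → ℝ)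
    (hcont : Continuous h) (hnn : ∀ ξ, 0 ≤ h ξ) (h0 : 0 < h 0)
    (C₀ s : ℝ) (hC₀ : 0 < C₀) (hs : ((d : ℝ) + 1) / 2 < s)
    (hdecay : ∀ ξ : EuclideanSpace ℝ (Fin d), h ξ ≤ C₀ * (1 + ‖ξ‖ ^ 2) ^ (-s)) :
    ∃ c C : ℝ, 0 < c ∧ 0 < C ∧ ∀ α ∈ Set.Ioc (0 : ℝ) 1,
      ∀ ξ : EuclideanSpace ℝ (Fin d),
      c * (1 + ‖ξ‖ ^ 2) ^ (-((d : ℝ) + α) / 2)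
          ≤ (∫ v in (0 : ℝ)..1, v ^ ((d : ℝ) - 1 + α) * h (v • ξ)) ∧
      (∫ v in (0 : ℝ)..1, v ^ ((d : ℝ) - 1 + α) * h (v • ξ))
          ≤ C * (1 + ‖ξ‖ ^ 2) ^ (-((d : ℝ) + α) / 2) := by
  -- a small ball around 0 where h ≥ h 0 / 2
  have hc0 : ContinuousAt h 0 := hcont.continuousAt
  rw [Metric.continuousAt_iff] at hc0
  obtain ⟨δ, hδpos, hball⟩ := hc0 (h 0 / 2) (by linarith)
  set η : ℝ := min (δ / 2) 1 with hηdef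
  have hη0 : 0 < η := lt_min (by linarith) one_pos
  have hη1 : η ≤ 1 := min_le_right _ _
  have hηh : ∀ x : EuclideanSpace ℝ (Fin d), ‖x‖ ≤ η → h 0 / 2 ≤ h x := by
    intro x hx
    have hx' : dist x 0 < δ := by
      rw [dist_zero_right]
      exact lt_of_le_of_lt (hx.trans (min_le_left _ _)) (by linarith)
    have hb := hball hx'
    rw [Real.dist_eq, abs_lt] at hb
    linarith [hb.1]
  have hd1 : (1:ℝ) ≤ (d:ℝ) := by exact_mod_cast hd
  have hds : 0 < 2 * s - (d:ℝ) - 1 := by linarith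
  refine ⟨h 0 * η ^ (d + 1) / (2 * ((d:ℝ) + 1)), C₀ * (1 + 1 / (2 * s - (d:ℝ) - 1)),
    by positivity, ?_, ?_⟩
  · have h1 : 0 < 1 / (2 * s - (d:ℝ) - 1) := by positivity
    nlinarith
  rintro α ⟨hα0, hα1⟩ ξ
  set p : ℝ := (d:ℝ) - 1 + α with hp
  have hp0 : 0 < p := by rw [hp]; linarith
  have hp1 : (1:ℝ) ≤ p + 1 := by rw [hp]; linarith
  have hpd : p + 1 ≤ (d:ℝ) + 1 := by rw [hp]; linarith
  set A : ℝ := 1 + ‖ξ‖ ^ 2 with hA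
  have hA1 : (1:ℝ) ≤ A := by rw [hA]; nlinarith [sq_nonneg ‖ξ‖]
  have hA0 : (0:ℝ) < A := by linarith
  set E : ℝ := A ^ (-((d:ℝ) + α) / 2) with hE
  have hE0 : 0 < E := Real.rpow_pos_of_pos hA0 _
  set T : ℝ := A ^ (-(1:ℝ) / 2) with hT
  have hT0 : 0 < T := Real.rpow_pos_of_pos hA0 _
  have hT1 : T ≤ 1 := Real.rpow_le_one_of_one_le_of_nonpos hA1 (by norm_num)
  have hTpow : ∀ q : ℝ, T ^ q = A ^ (-q / 2) := by
    intro q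
    rw [hT, ← Real.rpow_mul hA0.le]
    congr 1
    ring
  have hTE : T ^ (p + 1) = E := by
    rw [hTpow, hE]
    congr 1
    rw [hp]; ring
  have hfc : Continuous fun v : ℝ => v ^ p * h (v • ξ) :=
    (Real.continuous_rpow_const hp0.le).mul (hcont.comp (continuous_id.smul continuous_const))
  have hint : ∀ b : ℝ, 0 ≤ b → (∫ v in (0:ℝ)..b, v ^ p) = b ^ (p + 1) / (p + 1) := by
    intro b hb
    rw [integral_rpow (Or.inl (by linarith))]
    rw [Real.zero_rpow (by linarith)]
    ring
  constructor
  · -- lower bound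
    have hηT0 : 0 ≤ η * T := by positivity
    have hηT1 : η * T ≤ 1 := by nlinarith
    have hsplit : (∫ v in (0:ℝ)..1, v ^ p * h (v • ξ))
        = (∫ v in (0:ℝ)..(η * T), v ^ p * h (v • ξ))
          + ∫ v in (η * T)..1, v ^ p * h (v • ξ) :=
      (intervalIntegral.integral_add_adjacent_intervals (hfc.intervalIntegrable _ _)
        (hfc.intervalIntegrable _ _)).symm
    have h2nn : 0 ≤ ∫ v in (η * T)..1, v ^ p * h (v • ξ) := by
      apply intervalIntegral.integral_nonneg hηT1
      intro v hv
      have hv0 : 0 ≤ v := le_trans hηT0 hv.1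
      exact mul_nonneg (Real.rpow_nonneg hv0 _) (hnn _)
    have hTξ : T * ‖ξ‖ ≤ 1 := by
      have hTT : T * T * A = 1 := by
        rw [hT, ← Real.rpow_add hA0,
          show (-(1:ℝ) / 2 + -(1:ℝ) / 2) = -1 by ring, Real.rpow_neg_one]
        field_simp
      nlinarith [sq_nonneg (T * ‖ξ‖ - 1), hT0, sq_nonneg T, norm_nonneg ξ]
    have hlow1 : ∀ v ∈ Set.Icc (0:ℝ) (η * T), v ^ p * (h 0 / 2) ≤ v ^ p * h (v • ξ) := by
      intro v hv
      apply mul_le_mul_of_nonneg_left _ (Real.rpow_nonneg hv.1 _)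
      apply hηh
      rw [norm_smul, Real.norm_eq_abs, abs_of_nonneg hv.1]
      calc v * ‖ξ‖ ≤ η * T * ‖ξ‖ := mul_le_mul_of_nonneg_right hv.2 (norm_nonneg ξ)
        _ = η * (T * ‖ξ‖) := by ring
        _ ≤ η * 1 := mul_le_mul_of_nonneg_left hTξ hη0.le
        _ = η := mul_one η
    have hmono : (∫ v in (0:ℝ)..(η * T), v ^ p * (h 0 / 2))
        ≤ ∫ v in (0:ℝ)..(η * T), v ^ p * h (v • ξ) :=
      intervalIntegral.integral_mono_on hηT0
        (((Real.continuous_rpow_const hp0.le).mul continuous_const).intervalIntegrable _ _)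
        (hfc.intervalIntegrable _ _) hlow1
    have hval : (∫ v in (0:ℝ)..(η * T), v ^ p * (h 0 / 2))
        = (η * T) ^ (p + 1) / (p + 1) * (h 0 / 2) := by
      rw [intervalIntegral.integral_mul_const, hint _ hηT0]
    have hmulE : (η * T) ^ (p + 1) = η ^ (p + 1) * E := by
      rw [Real.mul_rpow hη0.le hT0.le, hTE]
    have hηp : (η:ℝ) ^ (d + 1) ≤ η ^ (p + 1) := by
      rw [← Real.rpow_natCast η (d + 1)]
      apply Real.rpow_le_rpow_of_exponent_ge hη0 hη1
      push_cast; linarith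
    have hfin : h 0 * η ^ (d + 1) / (2 * ((d:ℝ) + 1)) * E
        ≤ (η * T) ^ (p + 1) / (p + 1) * (h 0 / 2) := by
      have step : h 0 * η ^ (d + 1) / (2 * ((d:ℝ) + 1)) ≤ h 0 * η ^ (p + 1) / (2 * (p + 1)) := by
        apply div_le_div₀ (by positivity)
          (mul_le_mul_of_nonneg_left hηp h0.le) (by positivity) (by linarith)
      calc h 0 * η ^ (d + 1) / (2 * ((d:ℝ) + 1)) * E
          ≤ h 0 * η ^ (p + 1) / (2 * (p + 1)) * E :=
            mul_le_mul_of_nonneg_right step hE0.le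
        _ = η ^ (p + 1) * E / (p + 1) * (h 0 / 2) := by
            have hp1' : p + 1 ≠ 0 := by positivity
            field_simp
        _ = (η * T) ^ (p + 1) / (p + 1) * (h 0 / 2) := by rw [hmulE]
    calc h 0 * η ^ (d + 1) / (2 * ((d:ℝ) + 1)) * E
        ≤ (η * T) ^ (p + 1) / (p + 1) * (h 0 / 2) := hfin
      _ = ∫ v in (0:ℝ)..(η * T), v ^ p * (h 0 / 2) := hval.symm
      _ ≤ ∫ v in (0:ℝ)..(η * T), v ^ p * h (v • ξ) := hmono
      _ ≤ ∫ v in (0:ℝ)..1, v ^ p * h (v • ξ) := by rw [hsplit]; linarith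
  · -- upper bound
    have hsplit : (∫ v in (0:ℝ)..1, v ^ p * h (v • ξ))
        = (∫ v in (0:ℝ)..T, v ^ p * h (v • ξ)) + ∫ v in T..1, v ^ p * h (v • ξ) :=
      (intervalIntegral.integral_add_adjacent_intervals (hfc.intervalIntegrable _ _)
        (hfc.intervalIntegrable _ _)).symm
    -- piece 1
    have hup1 : ∀ v ∈ Set.Icc (0:ℝ) T, v ^ p * h (v • ξ) ≤ v ^ p * C₀ := by
      intro v hv
      apply mul_le_mul_of_nonneg_left _ (Real.rpow_nonneg hv.1 _)
      calc h (v • ξ) ≤ C₀ * (1 + ‖v • ξ‖ ^ 2) ^ (-s) := hdecay _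
        _ ≤ C₀ * 1 := by
            apply mul_le_mul_of_nonneg_left _ hC₀.le
            exact Real.rpow_le_one_of_one_le_of_nonpos
              (by nlinarith [sq_nonneg ‖v • ξ‖]) (by linarith)
        _ = C₀ := mul_one _
    have hI1 : (∫ v in (0:ℝ)..T, v ^ p * h (v • ξ)) ≤ C₀ * E := by
      calc (∫ v in (0:ℝ)..T, v ^ p * h (v • ξ))
          ≤ ∫ v in (0:ℝ)..T, v ^ p * C₀ :=
            intervalIntegral.integral_mono_on hT0.le (hfc.intervalIntegrable _ _)
              (((Real.continuous_rpow_const hp0.le).mul continuous_const).intervalIntegrable _ _)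
              hup1
        _ = T ^ (p + 1) / (p + 1) * C₀ := by
            rw [intervalIntegral.integral_mul_const, hint _ hT0.le]
        _ = E / (p + 1) * C₀ := by rw [hTE]
        _ ≤ E * C₀ := mul_le_mul_of_nonneg_right (div_le_self hE0.le hp1) hC₀.le
        _ = C₀ * E := mul_comm _ _
    -- piece 2
    set q : ℝ := p - 2 * s with hq
    have hq1 : q + 1 < 0 := by rw [hq, hp]; linarith
    have hup2 : ∀ v ∈ Set.Icc T 1, v ^ p * h (v • ξ) ≤ v ^ q * (C₀ * A ^ (-s)) := by
      intro v hv
      have hv0 : 0 < v := lt_of_lt_of_le hT0 hv.1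
      have e1 : ‖v • ξ‖ ^ 2 = v ^ 2 * ‖ξ‖ ^ 2 := by
        rw [norm_smul, Real.norm_eq_abs, mul_pow, sq_abs]
      have e2 : (0:ℝ) < v ^ 2 * A := by positivity
      have e3 : v ^ 2 * A ≤ 1 + ‖v • ξ‖ ^ 2 := by
        rw [e1, hA]
        nlinarith [hv.2, hv0.le, sq_nonneg ‖ξ‖]
      have e4 : (1 + ‖v • ξ‖ ^ 2) ^ (-s) ≤ (v ^ 2 * A) ^ (-s) :=
        Real.rpow_le_rpow_of_nonpos e2 e3 (by linarith)
      have e5 : (v ^ 2 * A) ^ (-s) = v ^ (-(2 * s)) * A ^ (-s) := by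
        rw [Real.mul_rpow (by positivity) hA0.le, ← Real.rpow_natCast v 2,
          ← Real.rpow_mul hv0.le]
        norm_num
      have e6 : v ^ p * v ^ (-(2 * s)) = v ^ q := by
        rw [← Real.rpow_add hv0, hq]
        congr 1
      calc v ^ p * h (v • ξ)
          ≤ v ^ p * (C₀ * (v ^ (-(2 * s)) * A ^ (-s))) := by
            apply mul_le_mul_of_nonneg_left _ (Real.rpow_nonneg hv0.le _)
            calc h (v • ξ) ≤ C₀ * (1 + ‖v • ξ‖ ^ 2) ^ (-s) := hdecay _
              _ ≤ C₀ * (v ^ (-(2 * s)) * A ^ (-s)) := by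
                  rw [← e5]
                  exact mul_le_mul_of_nonneg_left e4 hC₀.le
        _ = v ^ p * v ^ (-(2 * s)) * (C₀ * A ^ (-s)) := by ring
        _ = v ^ q * (C₀ * A ^ (-s)) := by rw [e6]
    have hgint : IntervalIntegrable (fun v : ℝ => v ^ q * (C₀ * A ^ (-s)))
        MeasureTheory.volume T 1 := by
      apply ContinuousOn.intervalIntegrable
      apply ContinuousOn.mul _ continuousOn_const
      intro v hv
      have hv0 : v ≠ 0 := by
        rw [Set.uIcc_of_le hT1] at hv
        exact (lt_of_lt_of_le hT0 hv.1).ne'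
      exact (Real.continuousAt_rpow_const v q (Or.inl hv0)).continuousWithinAt
    have hval2 : (∫ v in T..1, v ^ q) = (1 - T ^ (q + 1)) / (q + 1) := by
      rw [integral_rpow (Or.inr ⟨by intro hc; rw [hc] at hq1; norm_num at hq1,
        by simp only [Set.uIcc_of_le hT1, Set.mem_Icc, not_and, not_le]; intro hc; linarith⟩)]
      rw [Real.one_rpow]
    have hm : 0 < 2 * s - (d:ℝ) - α := by linarith
    have hqm : q + 1 = -(2 * s - (d:ℝ) - α) := by rw [hq, hp]; ring
    have hu0 : 0 < T ^ (q + 1) := Real.rpow_pos_of_pos hT0 _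
    have huE : T ^ (q + 1) * A ^ (-s) = E := by
      rw [hTpow, ← Real.rpow_add hA0, hE]
      congr 1
      rw [hq, hp]; ring
    have hI2 : (∫ v in T..1, v ^ p * h (v • ξ)) ≤ C₀ * (1 / (2 * s - (d:ℝ) - 1)) * E := by
      calc (∫ v in T..1, v ^ p * h (v • ξ))
          ≤ ∫ v in T..1, v ^ q * (C₀ * A ^ (-s)) :=
            intervalIntegral.integral_mono_on hT1 (hfc.intervalIntegrable _ _) hgint hup2
        _ = (1 - T ^ (q + 1)) / (q + 1) * (C₀ * A ^ (-s)) := by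
            rw [intervalIntegral.integral_mul_const, hval2]
        _ = (T ^ (q + 1) - 1) / (2 * s - (d:ℝ) - α) * (C₀ * A ^ (-s)) := by
            rw [hqm, div_neg, ← neg_div, neg_sub]
        _ ≤ T ^ (q + 1) / (2 * s - (d:ℝ) - α) * (C₀ * A ^ (-s)) := by
            apply mul_le_mul_of_nonneg_right _ (by positivity)
            gcongr
            linarith
        _ = C₀ * (T ^ (q + 1) * A ^ (-s)) / (2 * s - (d:ℝ) - α) := by ring
        _ = C₀ * E / (2 * s - (d:ℝ) - α) := by rw [huE]
        _ ≤ C₀ * E / (2 * s - (d:ℝ) - 1) := by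
            apply div_le_div_of_nonneg_left (by positivity) hds
            linarith
        _ = C₀ * (1 / (2 * s - (d:ℝ) - 1)) * E := by ring
    have hCE : C₀ * (1 + 1 / (2 * s - (d:ℝ) - 1)) * E
        = C₀ * E + C₀ * (1 / (2 * s - (d:ℝ) - 1)) * E := by ring
    rw [hsplit, hCE]
    linarith
end

section
/- Let d ≥ 1 and let h : ℝ^d → ℝ be continuous with h ≥ 0, h(0) > 0, and h(ξ) ≤ C₀ (1 + |ξ|²)^{−s} for all ξ ∈ ℝ^d, for some constants C₀ > 0 and s > (d+1)/2. For α ≥ 0 define u_α(ξ) = ∫_0^1 v^{d−1+α} h(vξ) dv, which is strictly positive for every ξ. Then for every α₀ ∈ (0, 1] and every measurable g : ℝ^d → ℂ with ∫_{ℝ^d} |g(ξ)|² dξ < ∞, lim_{α → 0⁺} ∫_{ℝ^d} (1 + |ξ|²)^{−(d+α₀)/2} · (u_α(ξ)^{−1/2} − u_0(ξ)^{−1/2})² · |g(ξ)|² dξ = 0. -/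
open MeasureTheory Filter

/-- **Symbol-level convergence `U_α^{−1/2} → C_X^{−1/2}` as `α → 0⁺`.**
With `u_α(ξ) = ∫_0^1 v^{d−1+α} h(vξ) dv` (strictly positive for every `ξ`),
for every `α₀ ∈ (0,1]` and every measurable square-integrable `g : ℝ^d → ℂ`,
`∫ (1+|ξ|²)^{−(d+α₀)/2} (u_α(ξ)^{−1/2} − u_0(ξ)^{−1/2})² |g(ξ)|² dξ → 0`
as `α → 0⁺`. -/
theorem stmt_13 (d : ℕ) (hd : 1 ≤ d) (h : EuclideanSpace ℝ (Fin d) → ℝ)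
    (hcont : Continuous h) (hnn : ∀ ξ, 0 ≤ h ξ) (h0 : 0 < h 0)
    (C₀ s : ℝ) (hC₀ : 0 < C₀) (hs : ((d : ℝ) + 1) / 2 < s)
    (hdecay : ∀ ξ : EuclideanSpace ℝ (Fin d), h ξ ≤ C₀ * (1 + ‖ξ‖ ^ 2) ^ (-s))
    (u : ℝ → EuclideanSpace ℝ (Fin d) → ℝ)
    (hu : ∀ α : ℝ, 0 ≤ α → ∀ ξ : EuclideanSpace ℝ (Fin d),
      u α ξ = ∫ v in (0 : ℝ)..1, v ^ ((d : ℝ) - 1 + α) * h (v • ξ)) :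
    (∀ α : ℝ, 0 ≤ α → ∀ ξ : EuclideanSpace ℝ (Fin d), 0 < u α ξ) ∧
    ∀ α₀ ∈ Set.Ioc (0 : ℝ) 1, ∀ g : EuclideanSpace ℝ (Fin d) → ℂ,
      Measurable g → Integrable (fun ξ => ‖g ξ‖ ^ 2) →
      Tendsto
        (fun α : ℝ => ∫ ξ : EuclideanSpace ℝ (Fin d),
          (1 + ‖ξ‖ ^ 2) ^ (-((d : ℝ) + α₀) / 2)
            * ((u α ξ) ^ (-(1 : ℝ) / 2) - (u 0 ξ) ^ (-(1 : ℝ) / 2)) ^ 2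
            * ‖g ξ‖ ^ 2)
        (nhdsWithin 0 (Set.Ioi 0)) (nhds 0) := by
  have hd1 : (1:ℝ) ≤ (d:ℝ) := by exact_mod_cast hd
  have hspos : 0 < s := lt_of_lt_of_le (by linarith : (0:ℝ) < ((d:ℝ)+1)/2) hs.le
  -- h is bounded by C₀
  have hbd : ∀ x, h x ≤ C₀ := by
    intro x
    refine (hdecay x).trans ?_
    have h1 : (1:ℝ) ≤ 1 + ‖x‖^2 := le_add_of_nonneg_right (sq_nonneg _)
    calc C₀ * (1+‖x‖^2) ^ (-s)
        ≤ C₀ * 1 := mul_le_mul_of_nonneg_left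
          (Real.rpow_le_one_of_one_le_of_nonpos h1 (neg_nonpos.2 hspos.le)) hC₀.le
      _ = C₀ := mul_one _
  -- δ from continuity at 0
  obtain ⟨δ₀, hδ₀pos, hδ₀⟩ := Metric.continuousAt_iff.mp hcont.continuousAt (h 0 / 2) (half_pos h0)
  set δ : ℝ := min (δ₀/2) 1 with hδdef
  have hδpos : 0 < δ := lt_min (half_pos hδ₀pos) one_pos
  have hδ1 : δ ≤ 1 := min_le_right _ _
  have hδ : ∀ x : EuclideanSpace ℝ (Fin d), ‖x‖ ≤ δ → h 0 / 2 ≤ h x := by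
    intro x hx
    have hdist : dist x 0 < δ₀ := by
      rw [dist_zero_right]
      exact lt_of_le_of_lt (hx.trans (min_le_left _ _)) (by linarith)
    have h2 := hδ₀ hdist
    rw [Real.dist_eq] at h2
    have := (abs_lt.mp h2).1
    linarith
  -- continuity and integrability of the integrand in v
  have hcint : ∀ r : ℝ, 0 ≤ r → ∀ ξ,
      ContinuousOn (fun v : ℝ => v ^ r * h (v • ξ)) (Set.Icc 0 1) := by
    intro r hr ξ
    exact (continuousOn_id.rpow_const fun x _ => Or.inr hr).mul
      ((hcont.comp (continuous_id.smul continuous_const)).continuousOn)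
  have hi : ∀ r : ℝ, 0 ≤ r → ∀ ξ,
      IntervalIntegrable (fun v : ℝ => v ^ r * h (v • ξ)) volume 0 1 := by
    intro r hr ξ
    apply ContinuousOn.intervalIntegrable
    rw [Set.uIcc_of_le zero_le_one]
    exact hcint r hr ξ
  have hfnn : ∀ (r : ℝ) ξ (v : ℝ), 0 ≤ v → 0 ≤ v ^ r * h (v • ξ) :=
    fun r ξ v hv => mul_nonneg (Real.rpow_nonneg hv _) (hnn _)
  -- the key lower bound
  have key_lb : ∀ α : ℝ, 0 ≤ α → ∀ ξ,
      h 0 / 2 * (δ * (1 + ‖ξ‖ ^ 2) ^ (-(1:ℝ)/2)) ^ ((d:ℝ) + α) / ((d:ℝ) + α) ≤ u α ξ := by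
    intro α hα ξ
    set r : ℝ := (d:ℝ) - 1 + α with hr
    have hrnn : 0 ≤ r := by rw [hr]; linarith
    have hX1 : (1:ℝ) ≤ 1 + ‖ξ‖^2 := le_add_of_nonneg_right (sq_nonneg _)
    have hX0 : (0:ℝ) < 1 + ‖ξ‖^2 := lt_of_lt_of_le one_pos hX1
    set δ' : ℝ := δ * (1 + ‖ξ‖^2) ^ (-(1:ℝ)/2) with hδ'def
    have hδ'pos : 0 < δ' := mul_pos hδpos (Real.rpow_pos_of_pos hX0 _)
    have hδ'le : δ' ≤ δ := by
      have h1 : (1 + ‖ξ‖^2 : ℝ) ^ (-(1:ℝ)/2) ≤ 1 :=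
        Real.rpow_le_one_of_one_le_of_nonpos hX1 (by norm_num)
      calc δ' ≤ δ * 1 := mul_le_mul_of_nonneg_left h1 hδpos.le
        _ = δ := mul_one δ
    have hδ'1 : δ' ≤ 1 := hδ'le.trans hδ1
    have hnorm : ‖ξ‖ * (1 + ‖ξ‖^2 : ℝ) ^ (-(1:ℝ)/2) ≤ 1 := by
      have hsq : ‖ξ‖ ≤ Real.sqrt (1 + ‖ξ‖^2) := by
        have := Real.sqrt_le_sqrt (show ‖ξ‖^2 ≤ 1 + ‖ξ‖^2 by linarith)
        rwa [Real.sqrt_sq (norm_nonneg ξ)] at this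
      have hsqpos : 0 < Real.sqrt (1 + ‖ξ‖^2) := Real.sqrt_pos.2 hX0
      rw [neg_div, Real.rpow_neg hX0.le, ← Real.sqrt_eq_rpow, ← div_eq_mul_inv,
        div_le_one hsqpos]
      exact hsq
    have hsmall : ∀ v ∈ Set.Icc (0:ℝ) δ', ‖v • ξ‖ ≤ δ := by
      intro v hv
      rw [norm_smul, Real.norm_eq_abs, abs_of_nonneg hv.1]
      calc v * ‖ξ‖ ≤ δ' * ‖ξ‖ := mul_le_mul_of_nonneg_right hv.2 (norm_nonneg _)
        _ = δ * (‖ξ‖ * (1 + ‖ξ‖^2) ^ (-(1:ℝ)/2)) := by rw [hδ'def]; ring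
        _ ≤ δ * 1 := mul_le_mul_of_nonneg_left hnorm hδpos.le
        _ = δ := mul_one δ
    have i1 : IntervalIntegrable (fun v : ℝ => v ^ r * h (v • ξ)) volume 0 δ' :=
      (hi r hrnn ξ).mono_set (Set.uIcc_subset_uIcc Set.left_mem_uIcc
        (by rw [Set.uIcc_of_le zero_le_one]; exact ⟨hδ'pos.le, hδ'1⟩))
    have i2 : IntervalIntegrable (fun v : ℝ => v ^ r * h (v • ξ)) volume δ' 1 :=
      (hi r hrnn ξ).mono_set (Set.uIcc_subset_uIcc
        (by rw [Set.uIcc_of_le zero_le_one]; exact ⟨hδ'pos.le, hδ'1⟩) Set.right_mem_uIcc)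
    have hsplit : u α ξ
        = (∫ v in (0:ℝ)..δ', v ^ r * h (v • ξ)) + ∫ v in δ'..1, v ^ r * h (v • ξ) := by
      rw [hu α hα ξ, intervalIntegral.integral_add_adjacent_intervals i1 i2]
    have hnn2 : 0 ≤ ∫ v in δ'..1, v ^ r * h (v • ξ) :=
      intervalIntegral.integral_nonneg hδ'1 fun v hv => hfnn r ξ v (hδ'pos.le.trans hv.1)
    have hmono : (∫ v in (0:ℝ)..δ', v ^ r * (h 0 / 2))
        ≤ ∫ v in (0:ℝ)..δ', v ^ r * h (v • ξ) := by
      apply intervalIntegral.integral_mono_on hδ'pos.le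
        ((intervalIntegral.intervalIntegrable_rpow (Or.inl hrnn)).mul_const _) i1
      intro v hv
      exact mul_le_mul_of_nonneg_left (hδ _ (hsmall v hv)) (Real.rpow_nonneg hv.1 r)
    have hcomp : (∫ v in (0:ℝ)..δ', v ^ r * (h 0 / 2))
        = h 0 / 2 * δ' ^ ((d:ℝ) + α) / ((d:ℝ) + α) := by
      rw [intervalIntegral.integral_mul_const,
        integral_rpow (Or.inl (by linarith : (-1:ℝ) < r)),
        Real.zero_rpow (by linarith : r + 1 ≠ 0)]
      have he : r + 1 = (d:ℝ) + α := by rw [hr]; ring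
      rw [he]; ring
    calc h 0 / 2 * δ' ^ ((d:ℝ) + α) / ((d:ℝ) + α)
        = ∫ v in (0:ℝ)..δ', v ^ r * (h 0 / 2) := hcomp.symm
      _ ≤ ∫ v in (0:ℝ)..δ', v ^ r * h (v • ξ) := hmono
      _ ≤ (∫ v in (0:ℝ)..δ', v ^ r * h (v • ξ)) + ∫ v in δ'..1, v ^ r * h (v • ξ) :=
          le_add_of_nonneg_right hnn2
      _ = u α ξ := hsplit.symm
  -- positivity
  have hpos : ∀ α : ℝ, 0 ≤ α → ∀ ξ, 0 < u α ξ := by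
    intro α hα ξ
    refine lt_of_lt_of_le ?_ (key_lb α hα ξ)
    have hX0 : (0:ℝ) < 1 + ‖ξ‖^2 := by positivity
    have h1 : 0 < δ * (1 + ‖ξ‖^2) ^ (-(1:ℝ)/2) := mul_pos hδpos (Real.rpow_pos_of_pos hX0 _)
    have h2 : 0 < (δ * (1 + ‖ξ‖^2) ^ (-(1:ℝ)/2)) ^ ((d:ℝ)+α) := Real.rpow_pos_of_pos h1 _
    have hda : (0:ℝ) < (d:ℝ) + α := by linarith
    exact div_pos (mul_pos (half_pos h0) h2) hda
  -- uniform lower bound for α ∈ [0,1]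
  set c₁ : ℝ := h 0 / 2 * δ ^ ((d:ℝ)+1) / ((d:ℝ)+1) with hc₁def
  have hc₁pos : 0 < c₁ := by
    have h1 := Real.rpow_pos_of_pos hδpos ((d:ℝ)+1)
    exact div_pos (mul_pos (half_pos h0) h1) (by linarith)
  have L2 : ∀ α : ℝ, 0 ≤ α → α ≤ 1 → ∀ ξ,
      c₁ * (1 + ‖ξ‖^2) ^ (-((d:ℝ)+α)/2) ≤ u α ξ := by
    intro α hα hα1 ξ
    refine le_trans ?_ (key_lb α hα ξ)
    have hX1 : (1:ℝ) ≤ 1 + ‖ξ‖^2 := le_add_of_nonneg_right (sq_nonneg _)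
    have hX0 : (0:ℝ) < 1 + ‖ξ‖^2 := by linarith
    have e1 : (δ * (1 + ‖ξ‖^2) ^ (-(1:ℝ)/2)) ^ ((d:ℝ)+α)
        = δ ^ ((d:ℝ)+α) * (1 + ‖ξ‖^2) ^ (-((d:ℝ)+α)/2) := by
      rw [Real.mul_rpow hδpos.le (Real.rpow_nonneg hX0.le _), ← Real.rpow_mul hX0.le]
      congr 2
      ring
    rw [e1, show h 0 / 2 * (δ ^ ((d:ℝ)+α) * (1 + ‖ξ‖^2) ^ (-((d:ℝ)+α)/2)) / ((d:ℝ)+α)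
        = (h 0 / 2 * δ ^ ((d:ℝ)+α) / ((d:ℝ)+α)) * (1 + ‖ξ‖^2) ^ (-((d:ℝ)+α)/2) from by ring]
    apply mul_le_mul_of_nonneg_right _ (Real.rpow_nonneg hX0.le _)
    rw [hc₁def]
    apply div_le_div₀ (by positivity)
      (mul_le_mul_of_nonneg_left
        (Real.rpow_le_rpow_of_exponent_ge hδpos hδ1 (by linarith)) (by positivity))
      (by linarith) (by linarith)
  -- monotonicity in α
  have hle0 : ∀ α : ℝ, 0 ≤ α → ∀ ξ, u α ξ ≤ u 0 ξ := by
    intro α hα ξ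
    rw [hu α hα ξ, hu 0 le_rfl ξ]
    apply intervalIntegral.integral_mono_on zero_le_one (hi _ (by linarith) ξ)
      (hi _ (by linarith) ξ)
    intro v hv
    exact mul_le_mul_of_nonneg_right
      (Real.rpow_le_rpow_of_exponent_ge' hv.1 hv.2 (by linarith) (by linarith)) (hnn _)
  -- the difference bound
  have hint1 : ∀ r : ℝ, 0 ≤ r → (∫ v in (0:ℝ)..1, v ^ r) = 1/(r+1) := by
    intro r hr
    rw [integral_rpow (Or.inl (by linarith : (-1:ℝ) < r)), Real.one_rpow,
      Real.zero_rpow (by linarith : r + 1 ≠ 0)]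
    norm_num
  have hdiffb : ∀ α : ℝ, 0 ≤ α → ∀ ξ, u 0 ξ - u α ξ ≤ C₀ * α := by
    intro α hα ξ
    have i0 := hi ((d:ℝ)-1+0) (by linarith) ξ
    have ia := hi ((d:ℝ)-1+α) (by linarith) ξ
    have ir0 : IntervalIntegrable (fun v : ℝ => v ^ ((d:ℝ)-1+0)) volume 0 1 :=
      intervalIntegral.intervalIntegrable_rpow (Or.inl (by linarith))
    have irα : IntervalIntegrable (fun v : ℝ => v ^ ((d:ℝ)-1+α)) volume 0 1 :=
      intervalIntegral.intervalIntegrable_rpow (Or.inl (by linarith))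
    have e : u 0 ξ - u α ξ
        = ∫ v in (0:ℝ)..1, (v ^ ((d:ℝ)-1+0) - v ^ ((d:ℝ)-1+α)) * h (v • ξ) := by
      rw [hu 0 le_rfl ξ, hu α hα ξ, ← intervalIntegral.integral_sub i0 ia]
      congr 1
      funext v
      ring
    have isub : IntervalIntegrable
        (fun v : ℝ => (v ^ ((d:ℝ)-1+0) - v ^ ((d:ℝ)-1+α)) * h (v • ξ)) volume 0 1 := by
      have : (fun v : ℝ => (v ^ ((d:ℝ)-1+0) - v ^ ((d:ℝ)-1+α)) * h (v • ξ))
          = fun v : ℝ => v ^ ((d:ℝ)-1+0) * h (v • ξ) - v ^ ((d:ℝ)-1+α) * h (v • ξ) := by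
        funext v; ring
      rw [this]; exact i0.sub ia
    have hmono2 : (∫ v in (0:ℝ)..1, (v ^ ((d:ℝ)-1+0) - v ^ ((d:ℝ)-1+α)) * h (v • ξ))
        ≤ ∫ v in (0:ℝ)..1, (v ^ ((d:ℝ)-1+0) - v ^ ((d:ℝ)-1+α)) * C₀ := by
      apply intervalIntegral.integral_mono_on zero_le_one isub ((ir0.sub irα).mul_const _)
      intro v hv
      exact mul_le_mul_of_nonneg_left (hbd _)
        (sub_nonneg.2 (Real.rpow_le_rpow_of_exponent_ge' hv.1 hv.2 (by linarith) (by linarith)))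
    have hcomp2 : (∫ v in (0:ℝ)..1, (v ^ ((d:ℝ)-1+0) - v ^ ((d:ℝ)-1+α)) * C₀)
        = (1/(d:ℝ) - 1/((d:ℝ)+α)) * C₀ := by
      rw [intervalIntegral.integral_mul_const, intervalIntegral.integral_sub ir0 irα,
        hint1 _ (by linarith), hint1 _ (by linarith),
        show (d:ℝ)-1+0+1 = (d:ℝ) by ring, show (d:ℝ)-1+α+1 = (d:ℝ)+α by ring]
    have hfin : (1/(d:ℝ) - 1/((d:ℝ)+α)) * C₀ ≤ C₀ * α := by
      have hdpos : (0:ℝ) < d := by linarith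
      have hdapos : (0:ℝ) < (d:ℝ) + α := by linarith
      have h1 : (1:ℝ)/(d:ℝ) - 1/((d:ℝ)+α) = α/((d:ℝ)*((d:ℝ)+α)) := by
        field_simp
        ring
      have h2 : α/((d:ℝ)*((d:ℝ)+α)) ≤ α :=
        div_le_self hα (by nlinarith)
      rw [h1, mul_comm C₀ α]
      exact mul_le_mul_of_nonneg_right h2 hC₀.le
    rw [e]
    exact le_trans (hmono2.trans (le_of_eq hcomp2)) hfin
  -- continuity of u α in ξ
  have hucont : ∀ α : ℝ, 0 ≤ α → Continuous (u α) := by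
    intro α hα
    have heq : u α = fun ξ => ∫ v in (0:ℝ)..1, v ^ ((d:ℝ)-1+α) * h (v • ξ) :=
      funext (hu α hα)
    rw [heq]
    apply intervalIntegral.continuous_of_dominated_interval (bound := fun _ => C₀)
    · intro ξ
      rw [Set.uIoc_of_le zero_le_one]
      exact ((hcint _ (by linarith) ξ).mono Set.Ioc_subset_Icc_self).aestronglyMeasurable
        measurableSet_Ioc
    · intro ξ
      apply ae_of_all
      intro t ht
      rw [Set.uIoc_of_le zero_le_one] at ht
      rw [Real.norm_eq_abs, abs_of_nonneg (hfnn _ ξ t ht.1.le)]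
      calc t ^ ((d:ℝ)-1+α) * h (t • ξ)
          ≤ 1 * C₀ := mul_le_mul (Real.rpow_le_one ht.1.le ht.2 (by linarith)) (hbd _)
            (hnn _) zero_le_one
        _ = C₀ := one_mul _
    · exact intervalIntegrable_const
    · apply ae_of_all
      intro t _
      exact continuous_const.mul (hcont.comp (continuous_const_smul t))
  refine ⟨hpos, ?_⟩
  intro α₀ hα₀ g hgmeas hgint
  have hα₀pos := hα₀.1
  have hα₀1 := hα₀.2
  have hmem : Set.Ioc (0:ℝ) α₀ ∈ nhdsWithin (0:ℝ) (Set.Ioi 0) := by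
    rw [mem_nhdsWithin]
    exact ⟨Set.Iio α₀, isOpen_Iio, hα₀pos, fun x hx => ⟨hx.2, le_of_lt hx.1⟩⟩
  have key := MeasureTheory.tendsto_integral_filter_of_dominated_convergence
      (μ := (volume : Measure (EuclideanSpace ℝ (Fin d))))
      (l := nhdsWithin (0:ℝ) (Set.Ioi 0))
      (F := fun (α : ℝ) (ξ : EuclideanSpace ℝ (Fin d)) =>
        (1 + ‖ξ‖ ^ 2) ^ (-((d : ℝ) + α₀) / 2)
          * ((u α ξ) ^ (-(1 : ℝ) / 2) - (u 0 ξ) ^ (-(1 : ℝ) / 2)) ^ 2 * ‖g ξ‖ ^ 2)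
      (f := fun _ => (0:ℝ)) (bound := fun ξ => c₁⁻¹ * ‖g ξ‖ ^ 2)
      ?_ ?_ ?_ ?_
  · simpa using key
  · -- measurability
    filter_upwards [hmem] with α hα
    have cw : Continuous fun ξ : EuclideanSpace ℝ (Fin d) =>
        ((1:ℝ) + ‖ξ‖^2) ^ (-((d:ℝ)+α₀)/2) :=
      (continuous_const.add (continuous_norm.pow 2)).rpow_const
        (fun ξ => Or.inl (show ((1:ℝ) + ‖ξ‖^2) ≠ 0 from by positivity))
    have cu : ∀ β : ℝ, 0 ≤ β → Continuous fun ξ => (u β ξ) ^ (-(1:ℝ)/2) := by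
      intro β hβ
      apply continuous_iff_continuousAt.2
      intro ξ
      exact (Real.continuousAt_rpow_const _ _ (Or.inl (hpos β hβ ξ).ne')).comp
        (hucont β hβ).continuousAt
    exact ((cw.mul (((cu α hα.1.le).sub (cu 0 le_rfl)).pow 2)).aestronglyMeasurable).mul
      ((hgmeas.norm.pow_const 2).aestronglyMeasurable)
  · -- domination
    filter_upwards [hmem] with α hα
    apply ae_of_all
    intro ξ
    have hα' : 0 ≤ α := hα.1.le
    have hα1 : α ≤ 1 := hα.2.trans hα₀1
    have h1 := hpos α hα' ξ
    have h0' := hpos 0 le_rfl ξ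
    have hX1 : (1:ℝ) ≤ 1 + ‖ξ‖^2 := le_add_of_nonneg_right (sq_nonneg _)
    have hX0 : (0:ℝ) < 1 + ‖ξ‖^2 := by linarith
    have hwnn : (0:ℝ) ≤ (1 + ‖ξ‖^2) ^ (-((d:ℝ)+α₀)/2) := Real.rpow_nonneg hX0.le _
    have hGnn : (0:ℝ) ≤ ‖g ξ‖^2 := sq_nonneg _
    have hDnn : 0 ≤ u α ξ ^ (-(1:ℝ)/2) - u 0 ξ ^ (-(1:ℝ)/2) :=
      sub_nonneg.2 (Real.antitoneOn_rpow_Ioi_of_exponent_nonpos (by norm_num)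
        (Set.mem_Ioi.2 h1) (Set.mem_Ioi.2 h0') (hle0 α hα' ξ))
    rw [Real.norm_eq_abs, abs_of_nonneg (by positivity)]
    have hsq : (u α ξ ^ (-(1:ℝ)/2))^2 = (u α ξ)⁻¹ := by
      rw [sq, ← Real.rpow_add h1, show (-(1:ℝ)/2 + -(1:ℝ)/2) = -1 by norm_num,
        Real.rpow_neg_one]
    have hw : (1 + ‖ξ‖^2) ^ (-((d:ℝ)+α₀)/2) * (u α ξ)⁻¹ ≤ c₁⁻¹ := by
      have hL := L2 α hα' hα1 ξ
      have hcX : (0:ℝ) < c₁ * (1 + ‖ξ‖^2) ^ (-((d:ℝ)+α)/2) :=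
        mul_pos hc₁pos (Real.rpow_pos_of_pos hX0 _)
      have hinv : (u α ξ)⁻¹ ≤ c₁⁻¹ * (1 + ‖ξ‖^2) ^ (((d:ℝ)+α)/2) := by
        have h2 := inv_anti₀ hcX hL
        have e : ((1 + ‖ξ‖^2 : ℝ) ^ (-((d:ℝ)+α)/2))⁻¹ = (1 + ‖ξ‖^2) ^ (((d:ℝ)+α)/2) := by
          rw [neg_div, Real.rpow_neg hX0.le, inv_inv]
        rwa [mul_inv, e] at h2
      have e2 : (1 + ‖ξ‖^2 : ℝ) ^ (-((d:ℝ)+α₀)/2) * (1 + ‖ξ‖^2) ^ (((d:ℝ)+α)/2)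
          = (1 + ‖ξ‖^2) ^ ((α - α₀)/2) := by
        rw [← Real.rpow_add hX0]
        congr 1
        ring
      calc (1 + ‖ξ‖^2) ^ (-((d:ℝ)+α₀)/2) * (u α ξ)⁻¹
          ≤ (1 + ‖ξ‖^2) ^ (-((d:ℝ)+α₀)/2) * (c₁⁻¹ * (1 + ‖ξ‖^2) ^ (((d:ℝ)+α)/2)) :=
            mul_le_mul_of_nonneg_left hinv hwnn
        _ = c₁⁻¹ * ((1 + ‖ξ‖^2) ^ (-((d:ℝ)+α₀)/2) * (1 + ‖ξ‖^2) ^ (((d:ℝ)+α)/2)) := by ring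
        _ = c₁⁻¹ * (1 + ‖ξ‖^2) ^ ((α - α₀)/2) := by rw [e2]
        _ ≤ c₁⁻¹ * 1 := mul_le_mul_of_nonneg_left
            (Real.rpow_le_one_of_one_le_of_nonpos hX1 (by linarith [hα.2]))
            (inv_nonneg.2 hc₁pos.le)
        _ = c₁⁻¹ := mul_one _
    calc (1 + ‖ξ‖^2) ^ (-((d:ℝ)+α₀)/2)
          * (u α ξ ^ (-(1:ℝ)/2) - u 0 ξ ^ (-(1:ℝ)/2))^2 * ‖g ξ‖^2
        ≤ (1 + ‖ξ‖^2) ^ (-((d:ℝ)+α₀)/2) * (u α ξ ^ (-(1:ℝ)/2))^2 * ‖g ξ‖^2 := by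
          apply mul_le_mul_of_nonneg_right _ hGnn
          apply mul_le_mul_of_nonneg_left _ hwnn
          exact pow_le_pow_left₀ hDnn (sub_le_self _ (Real.rpow_nonneg h0'.le _)) 2
      _ = (1 + ‖ξ‖^2) ^ (-((d:ℝ)+α₀)/2) * (u α ξ)⁻¹ * ‖g ξ‖^2 := by rw [hsq]
      _ ≤ c₁⁻¹ * ‖g ξ‖^2 := mul_le_mul_of_nonneg_right hw hGnn
  · -- bound integrable
    exact hgint.const_mul _
  · -- pointwise limit
    apply ae_of_all
    intro ξ
    have h0p := hpos 0 le_rfl ξ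
    have htu : Tendsto (fun α => u α ξ) (nhdsWithin (0:ℝ) (Set.Ioi 0)) (nhds (u 0 ξ)) := by
      apply tendsto_of_tendsto_of_tendsto_of_le_of_le'
        (g := fun α : ℝ => u 0 ξ - C₀ * α) (h := fun _ : ℝ => u 0 ξ)
      · have h1 : Tendsto (fun α : ℝ => u 0 ξ - C₀ * α) (nhds 0) (nhds (u 0 ξ - C₀ * 0)) :=
          tendsto_const_nhds.sub (tendsto_id.const_mul C₀)
        simpa using h1.mono_left nhdsWithin_le_nhds
      · exact tendsto_const_nhds
      · filter_upwards [self_mem_nhdsWithin] with α hα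
        have := hdiffb α (le_of_lt hα) ξ
        linarith
      · filter_upwards [self_mem_nhdsWithin] with α hα
        exact hle0 α (le_of_lt hα) ξ
    have htr : Tendsto (fun α => u α ξ ^ (-(1:ℝ)/2)) (nhdsWithin (0:ℝ) (Set.Ioi 0))
        (nhds (u 0 ξ ^ (-(1:ℝ)/2))) :=
      Filter.Tendsto.comp (Real.continuousAt_rpow_const (u 0 ξ) (-(1:ℝ)/2) (Or.inl h0p.ne')) htu
    have hfin := (((htr.sub (tendsto_const_nhds
        (x := u 0 ξ ^ (-(1:ℝ)/2)))).pow 2).const_mul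
        ((1 + ‖ξ‖^2) ^ (-((d:ℝ)+α₀)/2))).mul_const (‖g ξ‖^2)
    convert hfin using 2
    rw [sub_self]
    ring
end

section
/- Let d ≥ 1, α > 0, and let k : ℝ^d → ℝ be twice continuously differentiable with k(−x) = k(x) for all x, k(0) = 1, 0 ≤ k(x) ≤ 1 for all x, and k(x) = 0 for |x| > 1. Then there exists a constant C > 0 such that for every δ ∈ (0, 1] and every x ∈ ℝ^d with 0 < |x| ≤ 1, ∫_0^∞ k(e^u x)(1 − δ^α e^{−αu}) du ≥ log(1/|x|) − C. -/
open MeasureTheory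

set_option maxHeartbeats 1000000

/-- **Lower bound on the covariance of the rescaled tail field.**
If `k` is `C²`, even, `k(0) = 1`, `0 ≤ k ≤ 1` and `k` vanishes for `|x| > 1`,
then there is a constant `C > 0` such that for every `δ ∈ (0,1]` and every `x`
with `0 < |x| ≤ 1`,
`∫_0^∞ k(e^u x)(1 − δ^α e^{−αu}) du ≥ log(1/|x|) − C`. -/
theorem stmt_15 (d : ℕ) (hd : 1 ≤ d) (α : ℝ) (hα : 0 < α)
    (k : EuclideanSpace ℝ (Fin d) → ℝ) (hksmooth : ContDiff ℝ 2 k)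
    (hkeven : ∀ x, k (-x) = k x) (hk01 : k 0 = 1)
    (hk0 : ∀ x, 0 ≤ k x) (hk1 : ∀ x, k x ≤ 1)
    (hksupp : ∀ x : EuclideanSpace ℝ (Fin d), 1 < ‖x‖ → k x = 0) :
    ∃ C : ℝ, 0 < C ∧ ∀ δ ∈ Set.Ioc (0 : ℝ) 1,
      ∀ x : EuclideanSpace ℝ (Fin d), 0 < ‖x‖ → ‖x‖ ≤ 1 →
      Real.log (1 / ‖x‖) - C
        ≤ ∫ u in Set.Ioi (0 : ℝ),
            k (Real.exp u • x) * (1 - δ ^ α * Real.exp (-α * u)) := by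
  have hdiff : Differentiable ℝ k := hksmooth.differentiable two_ne_zero
  -- derivative at 0 vanishes
  have hf0 : fderiv ℝ k 0 = 0 := by
    have hcomp : (fun x : EuclideanSpace ℝ (Fin d) => k (-x)) = k ∘ (fun x : EuclideanSpace ℝ (Fin d) => -x) := rfl
    have h2 : fderiv ℝ (fun x : EuclideanSpace ℝ (Fin d) => k (-x)) 0 =
        (fderiv ℝ k (-(0:EuclideanSpace ℝ (Fin d)))).comp (fderiv ℝ (fun x : EuclideanSpace ℝ (Fin d) => -x) 0) := by
      rw [hcomp]
      exact fderiv_comp 0 (hdiff _) differentiable_id.neg.differentiableAt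
    have h1 : (fun x : EuclideanSpace ℝ (Fin d) => k (-x)) = k := funext hkeven
    rw [h1, neg_zero] at h2
    ext v
    have hv := congrArg (fun L : EuclideanSpace ℝ (Fin d) →L[ℝ] ℝ => L v) h2
    simp only [ContinuousLinearMap.coe_comp', Function.comp_apply] at hv
    have hneg : fderiv ℝ (fun x : EuclideanSpace ℝ (Fin d) => -x) 0 v = -v := by
      have : fderiv ℝ (fun x : EuclideanSpace ℝ (Fin d) => -x) 0 = -(ContinuousLinearMap.id ℝ (EuclideanSpace ℝ (Fin d))) := by
        rw [show (fun x : EuclideanSpace ℝ (Fin d) => -x) = (fun x : EuclideanSpace ℝ (Fin d) => -(_root_.id x)) from rfl, fderiv_fun_neg, fderiv_id]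
      rw [this]; simp
    rw [hneg, map_neg] at hv
    simp only [ContinuousLinearMap.zero_apply]
    linarith
  -- f := fderiv k is C¹; bound its derivative on closed ball
  have hf1 : ContDiff ℝ 1 (fderiv ℝ k) := hksmooth.fderiv_right (by norm_num)
  obtain ⟨M, hM⟩ := (isCompact_closedBall (0 : EuclideanSpace ℝ (Fin d)) 1).exists_bound_of_continuousOn
    ((hf1.continuous_fderiv one_ne_zero).continuousOn)
  have hM0 : 0 ≤ M := le_trans (norm_nonneg _) (hM 0 (Metric.mem_closedBall_self zero_le_one))
  -- Lipschitz bound for fderiv k on the ball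
  have hlip : ∀ y : EuclideanSpace ℝ (Fin d), ‖y‖ ≤ 1 → ‖fderiv ℝ k y‖ ≤ M * ‖y‖ := by
    intro y hy
    have := Convex.norm_image_sub_le_of_norm_fderiv_le
      (f := fderiv ℝ k) (C := M) (s := Metric.closedBall 0 1)
      (fun z _ => (hf1.differentiable one_ne_zero).differentiableAt)
      (fun z hz => hM z hz) (convex_closedBall 0 1)
      (Metric.mem_closedBall_self zero_le_one)
      (by simpa [Metric.mem_closedBall, dist_eq_norm] using hy)
    simpa [hf0] using this
  -- quadratic lower bound
  have hquad : ∀ y : EuclideanSpace ℝ (Fin d), ‖y‖ ≤ 1 → 1 - M / 2 * ‖y‖ ^ 2 ≤ k y := by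
    intro y hy
    set ψ : ℝ → ℝ := fun t => k (t • y) + M / 2 * ‖y‖ ^ 2 * t ^ 2 with hψ
    have hder : ∀ t : ℝ, HasDerivAt ψ (fderiv ℝ k (t • y) y + M * ‖y‖ ^ 2 * t) t := by
      intro t
      have h1 : HasDerivAt (fun s : ℝ => s • y) y t := by
        simpa using (hasDerivAt_id t).smul_const y
      have h2 : HasDerivAt (fun s : ℝ => k (s • y)) (fderiv ℝ k (t • y) y) t :=
        ((hdiff (t • y)).hasFDerivAt.comp_hasDerivAt t h1 : _)
      have h3 : HasDerivAt (fun s : ℝ => M / 2 * ‖y‖ ^ 2 * s ^ 2)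
          (M / 2 * ‖y‖ ^ 2 * (2 * t)) t := by
        simpa using ((hasDerivAt_pow 2 t).const_mul (M / 2 * ‖y‖ ^ 2))
      have h4 := h2.fun_add h3
      convert h4 using 1
      · rfl
      · rfl
      ring
    have hmono : MonotoneOn ψ (Set.Icc 0 1) := by
      apply monotoneOn_of_deriv_nonneg (convex_Icc 0 1)
      · exact fun t _ => ((hder t).continuousAt).continuousWithinAt
      · exact fun t ht => ((hder t).differentiableAt).differentiableWithinAt
      · intro t ht
        rw [interior_Icc] at ht
        rw [(hder t).deriv]
        have hty : ‖t • y‖ ≤ 1 := by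
          rw [norm_smul, Real.norm_eq_abs, abs_of_pos ht.1]
          calc t * ‖y‖ ≤ 1 * 1 :=
                mul_le_mul ht.2.le hy (norm_nonneg y) zero_le_one
            _ = 1 := by ring
        have hb : |fderiv ℝ k (t • y) y| ≤ M * ‖t • y‖ * ‖y‖ := by
          calc |fderiv ℝ k (t • y) y| ≤ ‖fderiv ℝ k (t • y)‖ * ‖y‖ :=
                (fderiv ℝ k (t • y)).le_opNorm y
            _ ≤ M * ‖t • y‖ * ‖y‖ :=
                mul_le_mul_of_nonneg_right (hlip _ hty) (norm_nonneg y)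
        rw [norm_smul, Real.norm_eq_abs, abs_of_pos ht.1] at hb
        have hb1 := (abs_le.mp hb).1
        nlinarith [hb1]
    have h01 := hmono (Set.mem_Icc.mpr ⟨le_rfl, zero_le_one⟩)
      (Set.mem_Icc.mpr ⟨zero_le_one, le_rfl⟩) zero_le_one
    simp only [hψ, zero_smul, one_smul, hk01] at h01
    nlinarith [h01]
  -- the constant
  refine ⟨M / 4 + 1 / α + 1, by positivity, ?_⟩
  rintro δ ⟨hδ0, hδ1⟩ x hx0 hx1
  set L := Real.log (1 / ‖x‖) with hLdef
  have hL0 : 0 ≤ L := Real.log_nonneg (one_le_one_div hx0 hx1)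
  have hexpL : Real.exp L * ‖x‖ = 1 := by
    rw [hLdef, Real.exp_log (by positivity)]
    field_simp
  set g : ℝ → ℝ := fun u => k (Real.exp u • x) * (1 - δ ^ α * Real.exp (-α * u)) with hg
  have hδα0 : 0 ≤ δ ^ α := Real.rpow_nonneg hδ0.le α
  have hδα1 : δ ^ α ≤ 1 := Real.rpow_le_one hδ0.le hδ1 hα.le
  have hgc : Continuous g := by
    apply Continuous.mul
    · exact hksmooth.continuous.comp' (Real.continuous_exp.smul continuous_const)
    · exact continuous_const.sub (continuous_const.mul (by fun_prop))
  -- g vanishes beyond L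
  have hgz : ∀ u ∈ Set.Ioi L, g u = 0 := by
    intro u hu
    have h1 : 1 < ‖Real.exp u • x‖ := by
      rw [norm_smul, Real.norm_eq_abs, abs_of_pos (Real.exp_pos u)]
      calc 1 = Real.exp L * ‖x‖ := hexpL.symm
        _ < Real.exp u * ‖x‖ :=
            mul_lt_mul_of_pos_right (Real.exp_lt_exp.mpr hu) hx0
    simp [hg, hksupp _ h1]
  -- split the integral
  have hint1 : IntegrableOn g (Set.Ioc 0 L) :=
    (hgc.integrableOn_Icc (a := 0) (b := L)).mono_set Set.Ioc_subset_Icc_self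
  have hint2 : IntegrableOn g (Set.Ioi L) := by
    rw [integrableOn_congr_fun hgz measurableSet_Ioi]
    exact integrableOn_zero
  have hsplit : ∫ u in Set.Ioi (0:ℝ), g u = ∫ u in Set.Ioc 0 L, g u := by
    rw [← Set.Ioc_union_Ioi_eq_Ioi hL0,
      setIntegral_union (Set.Ioc_disjoint_Ioi le_rfl) measurableSet_Ioi hint1 hint2,
      setIntegral_congr_fun measurableSet_Ioi hgz]
    simp
  -- lower bound function
  set h : ℝ → ℝ := fun u => 1 - M / 2 * (Real.exp u * ‖x‖) ^ 2 - δ ^ α * Real.exp (-α * u)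
    with hh
  have hhc : Continuous h := by fun_prop
  have hpt : ∀ u ∈ Set.Ioc (0:ℝ) L, h u ≤ g u := by
    intro u hu
    have hnorm : ‖Real.exp u • x‖ = Real.exp u * ‖x‖ := by
      rw [norm_smul, Real.norm_eq_abs, abs_of_pos (Real.exp_pos u)]
    have hle1 : Real.exp u * ‖x‖ ≤ 1 := by
      calc Real.exp u * ‖x‖ ≤ Real.exp L * ‖x‖ :=
            mul_le_mul_of_nonneg_right (Real.exp_le_exp.mpr hu.2) (norm_nonneg x)
        _ = 1 := hexpL
    have hq := hquad (Real.exp u • x) (by rw [hnorm]; exact hle1)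
    rw [hnorm] at hq
    have hs0 : 0 ≤ δ ^ α * Real.exp (-α * u) := by positivity
    have hs1 : δ ^ α * Real.exp (-α * u) ≤ 1 := by
      calc δ ^ α * Real.exp (-α * u) ≤ 1 * 1 :=
            mul_le_mul hδα1 (Real.exp_le_one_iff.mpr (by nlinarith [hu.1]))
              (Real.exp_pos _).le zero_le_one
        _ = 1 := by ring
    have hk0' := hk0 (Real.exp u • x)
    have hk1' := hk1 (Real.exp u • x)
    show 1 - M / 2 * (Real.exp u * ‖x‖) ^ 2 - δ ^ α * Real.exp (-α * u)
      ≤ k (Real.exp u • x) * (1 - δ ^ α * Real.exp (-α * u))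
    generalize hKg : k (Real.exp u • x) = K at hq hk0' hk1'
    generalize hsg : δ ^ α * Real.exp (-α * u) = s at hs0 hs1
    generalize hQg : M / 2 * (Real.exp u * ‖x‖) ^ 2 = Q at hq
    nlinarith [hq, hs0, hs1, hk0', hk1']
  have hinth : IntegrableOn h (Set.Ioc 0 L) :=
    (hhc.integrableOn_Icc (a := 0) (b := L)).mono_set Set.Ioc_subset_Icc_self
  have hmono2 : ∫ u in Set.Ioc (0:ℝ) L, h u ≤ ∫ u in Set.Ioc (0:ℝ) L, g u :=
    setIntegral_mono_on hinth hint1 measurableSet_Ioc hpt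
  -- compute ∫ h via FTC
  set F : ℝ → ℝ := fun u =>
    u - M / 4 * ‖x‖ ^ 2 * (Real.exp u) ^ 2 + δ ^ α / α * Real.exp (-α * u) with hF
  have hFder : ∀ u : ℝ, HasDerivAt F (h u) u := by
    intro u
    have h1 : HasDerivAt (fun u : ℝ => u) 1 u := hasDerivAt_id u
    have h2 : HasDerivAt (fun u : ℝ => (Real.exp u) ^ 2) (2 * Real.exp u * Real.exp u) u := by
      simpa [pow_one, mul_comm] using (Real.hasDerivAt_exp u).fun_pow 2
    have h3 : HasDerivAt (fun u : ℝ => Real.exp (-α * u)) (Real.exp (-α * u) * (-α)) u := by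
      simpa using ((hasDerivAt_id u).const_mul (-α)).exp
    have h4 := (h1.fun_sub (h2.const_mul (M / 4 * ‖x‖ ^ 2))).fun_add (h3.const_mul (δ ^ α / α))
    convert h4 using 1
    · rfl
    · rfl
    simp only [hh]
    field_simp
    ring
  have hFTC : ∫ u in Set.Ioc (0:ℝ) L, h u = F L - F 0 := by
    rw [← intervalIntegral.integral_of_le hL0]
    exact intervalIntegral.integral_eq_sub_of_hasDerivAt (fun u _ => hFder u)
      (hhc.intervalIntegrable 0 L)
  -- final bound
  have hB0 : 0 ≤ δ ^ α / α := div_nonneg hδα0 hα.le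
  have hB1 : δ ^ α / α ≤ 1 / α := by gcongr
  have hone : M / 4 * (‖x‖ ^ 2 * (Real.exp L) ^ 2) = M / 4 := by
    have h1 : ‖x‖ ^ 2 * (Real.exp L) ^ 2 = 1 := by
      have := congrArg (fun t => t ^ 2) hexpL
      simp only [mul_pow, one_pow] at this
      linarith [this]
    rw [h1, mul_one]
  have hFL : L - (M / 4 + 1 / α + 1) ≤ F L - F 0 := by
    simp only [hF, mul_zero, Real.exp_zero, one_pow, mul_one]
    have he1 : 0 ≤ Real.exp (-α * L) := (Real.exp_pos _).le
    have he2 : 0 ≤ δ ^ α / α * Real.exp (-α * L) := mul_nonneg hB0 he1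
    have hx2 : 0 ≤ M / 4 * ‖x‖ ^ 2 := by positivity
    linarith [hone, hB1, he2, hx2]
  calc Real.log (1 / ‖x‖) - (M / 4 + 1 / α + 1) = L - (M / 4 + 1 / α + 1) := by rw [hLdef]
    _ ≤ F L - F 0 := hFL
    _ = ∫ u in Set.Ioc (0:ℝ) L, h u := hFTC.symm
    _ ≤ ∫ u in Set.Ioc (0:ℝ) L, g u := hmono2
    _ = ∫ u in Set.Ioi (0:ℝ), g u := hsplit.symm
end

section
/- Let S be a set, M ≥ 0, and let K : S × S → ℝ be a symmetric kernel that is positive semidefinite (for any points z_1,…,z_n ∈ S and any real numbers c_1,…,c_n one has Σ_{i,j} c_i c_j K(z_i, z_j) ≥ 0) and satisfies K(z, z) ≤ M for all z ∈ S. Then for every N ≥ 1 and all N-tuples x = (x_1,…,x_N) and y = (y_1,…,y_N) of points of S, ℰ(K; x; y) ≤ N·M. -/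
/-- The interaction energy
`ℰ(K; x; y) = −Σ_{j<k} K(x_j,x_k) − Σ_{j<k} K(y_j,y_k) + Σ_{j,k} K(x_j,y_k)`. -/
noncomputable def interactionEnergy {S : Type*} {N : ℕ}
    (K : S → S → ℝ) (x y : Fin N → S) : ℝ :=
  -(∑ j : Fin N, ∑ k : Fin N, if j < k then K (x j) (x k) else 0)
    - (∑ j : Fin N, ∑ k : Fin N, if j < k then K (y j) (y k) else 0)
    + ∑ j : Fin N, ∑ k : Fin N, K (x j) (y k)

lemma split_sum {S : Type*} {N : ℕ} (K : S → S → ℝ)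
    (hsymm : ∀ a b : S, K a b = K b a) (f : Fin N → S) :
    ∑ j : Fin N, ∑ k : Fin N, K (f j) (f k)
      = 2 * (∑ j : Fin N, ∑ k : Fin N, if j < k then K (f j) (f k) else 0)
        + ∑ j : Fin N, K (f j) (f j) := by
  have key : ∀ j k : Fin N, K (f j) (f k)
      = (if j < k then K (f j) (f k) else 0)
        + (if k < j then K (f j) (f k) else 0)
        + (if j = k then K (f j) (f k) else 0) := by
    intro j k
    rcases lt_trichotomy j k with h | h | h
    · rw [if_pos h, if_neg (asymm h), if_neg h.ne]; ring
    · subst h; rw [if_neg (lt_irrefl j), if_pos rfl]; ring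
    · rw [if_neg (asymm h), if_pos h, if_neg h.ne']; ring
  have step : ∑ j : Fin N, ∑ k : Fin N, K (f j) (f k)
      = ∑ j : Fin N, ∑ k : Fin N,
          ((if j < k then K (f j) (f k) else 0)
            + (if k < j then K (f j) (f k) else 0)
            + (if j = k then K (f j) (f k) else 0)) :=
    Finset.sum_congr rfl fun j _ => Finset.sum_congr rfl fun k _ => key j k
  rw [step]
  simp_rw [Finset.sum_add_distrib]
  have h2 : ∑ j : Fin N, ∑ k : Fin N, (if k < j then K (f j) (f k) else 0)
      = ∑ j : Fin N, ∑ k : Fin N, (if j < k then K (f j) (f k) else 0) := by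
    rw [Finset.sum_comm]
    apply Finset.sum_congr rfl; intro j _
    apply Finset.sum_congr rfl; intro k _
    by_cases h : j < k <;> simp [h, hsymm]
  have h3 : ∑ j : Fin N, ∑ k : Fin N, (if j = k then K (f j) (f k) else 0)
      = ∑ j : Fin N, K (f j) (f j) := by
    apply Finset.sum_congr rfl; intro j _
    simp
  rw [h2, h3]; ring

/-- **Onsager-type bound for bounded positive semidefinite kernels.**
If `K` is symmetric, positive semidefinite and `K(z,z) ≤ M` for all `z`, then
`ℰ(K; x; y) ≤ N·M` for all `N`-tuples `x`, `y`. -/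
theorem stmt_18 {S : Type*} (M : ℝ) (hM : 0 ≤ M) (K : S → S → ℝ)
    (hsymm : ∀ a b : S, K a b = K b a)
    (hpsd : ∀ (n : ℕ) (z : Fin n → S) (c : Fin n → ℝ),
      0 ≤ ∑ i : Fin n, ∑ j : Fin n, c i * c j * K (z i) (z j))
    (hdiag : ∀ z : S, K z z ≤ M)
    (N : ℕ) (hN : 1 ≤ N) (x y : Fin N → S) :
    interactionEnergy K x y ≤ (N : ℝ) * M := by
  set z : Fin (N + N) → S := Sum.elim x y ∘ finSumFinEquiv.symm with hz
  set c : Fin (N + N) → ℝ := Sum.elim (fun _ => (1:ℝ)) (fun _ => -1) ∘ finSumFinEquiv.symm with hc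
  have h0 := hpsd (N + N) z c
  have hq : ∑ i : Fin (N + N), ∑ j : Fin (N + N), c i * c j * K (z i) (z j)
      = (∑ j : Fin N, ∑ k : Fin N, K (x j) (x k))
        + (∑ j : Fin N, ∑ k : Fin N, K (y j) (y k))
        - 2 * ∑ j : Fin N, ∑ k : Fin N, K (x j) (y k) := by
    rw [← Equiv.sum_comp (finSumFinEquiv (m := N) (n := N))]
    simp_rw [← Equiv.sum_comp (finSumFinEquiv (m := N) (n := N))]
    simp only [hz, hc, Function.comp_apply, Equiv.symm_apply_apply, Fintype.sum_sum_type,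
      Sum.elim_inl, Sum.elim_inr, one_mul, mul_one, neg_mul, mul_neg, neg_neg]
    have hyx : ∑ j : Fin N, ∑ k : Fin N, K (y j) (x k)
        = ∑ j : Fin N, ∑ k : Fin N, K (x j) (y k) := by
      rw [Finset.sum_comm]; simp_rw [hsymm]
    simp_rw [Finset.sum_add_distrib, Finset.sum_neg_distrib]
    rw [hyx]; ring
  rw [hq] at h0
  have hx := split_sum K hsymm x
  have hy := split_sum K hsymm y
  have hdx : ∑ j : Fin N, K (x j) (x j) ≤ (N : ℝ) * M := by
    calc ∑ j : Fin N, K (x j) (x j) ≤ ∑ _j : Fin N, M :=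
          Finset.sum_le_sum fun j _ => hdiag (x j)
      _ = (N : ℝ) * M := by simp [mul_comm]
  have hdy : ∑ j : Fin N, K (y j) (y j) ≤ (N : ℝ) * M := by
    calc ∑ j : Fin N, K (y j) (y j) ≤ ∑ _j : Fin N, M :=
          Finset.sum_le_sum fun j _ => hdiag (y j)
      _ = (N : ℝ) * M := by simp [mul_comm]
  unfold interactionEnergy
  linarith
end
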